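/- arXiv:2512.12231 — 6 statements merged into one kernel-verified Lean document; each statement's English description precedes it below -/
import Mathlib

section
/- For every integer n ≥ 1, the path P_n on n vertices is well-ve-dominated if and only if n ∈ {1, 2, 3, 6}. (In particular, P_4 and P_5 are not well-ve-dominated, and no path on 7 or more vertices is well-ve-dominated.) -/
open SimpleGraph

/-- A vertex `v` ve-dominates an edge `e` if at least one endpoint of `e`
lies in the closed neighborhood `N[v]` of `v`. -/
def VEDominates {V : Type*} (G : SimpleGraph V) (v : V) (e : Sym2 V) : Prop :=
  ∃ x ∈ e, x = v ∨ G.Adj v x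

/-- `D` is a ve-dominating set of `G`: every edge of `G` is ve-dominated
by some vertex of `D`. -/
def IsVEDomSet {V : Type*} (G : SimpleGraph V) (D : Set V) : Prop :=
  ∀ e ∈ G.edgeSet, ∃ v ∈ D, VEDominates G v e

/-- `D` is a minimal ve-dominating set of `G`: it is ve-dominating and no
proper subset of `D` is ve-dominating. -/
def IsMinimalVEDomSet {V : Type*} (G : SimpleGraph V) (D : Set V) : Prop :=
  IsVEDomSet G D ∧ ∀ D' : Set V, D' ⊂ D → ¬ IsVEDomSet G D'

/-- `G` is well-ve-dominated: all minimal ve-dominating sets have the same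
cardinality. -/
def WellVEDominated {V : Type*} (G : SimpleGraph V) : Prop :=
  ∀ D₁ D₂ : Set V, IsMinimalVEDomSet G D₁ → IsMinimalVEDomSet G D₂ →
    D₁.ncard = D₂.ncard

/-- `γ_ve(G)`: the minimum cardinality of a ve-dominating set of `G`. -/
noncomputable def gammaVE {V : Type*} (G : SimpleGraph V) : ℕ :=
  sInf {n | ∃ D : Set V, IsVEDomSet G D ∧ D.ncard = n}

/-- `G` is reduced: no two distinct vertices share the same open neighborhood. -/
def Reduced {V : Type*} (G : SimpleGraph V) : Prop :=
  ∀ x y : V, G.neighborSet x = G.neighborSet y → x = y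

/-- `s l` form a good pendant edge of `G`: `l` is a leaf (degree 1) and its
support vertex `s` has degree 2. -/
def IsGoodPendant {V : Type*} (G : SimpleGraph V) (s l : V) : Prop :=
  G.Adj s l ∧ (G.neighborSet l).ncard = 1 ∧ (G.neighborSet s).ncard = 2

/-- `L_T`: the leaf endpoints of the good pendant edges. -/
def goodLeaves {V : Type*} (G : SimpleGraph V) : Set V :=
  {l | ∃ s, IsGoodPendant G s l}

/-- `S_T`: the support vertices of the good pendant edges. -/
def goodSupports {V : Type*} (G : SimpleGraph V) : Set V :=
  {s | ∃ l, IsGoodPendant G s l}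

/-- `W_T = N(S_T) \ L_T`: non-leaf neighbors of support vertices of good
pendant edges. -/
def goodW {V : Type*} (G : SimpleGraph V) : Set V :=
  {v | ∃ s ∈ goodSupports G, G.Adj v s} \ goodLeaves G

/-- The set of good pendant edges of `G`. -/
def goodPendantEdges {V : Type*} (G : SimpleGraph V) : Set (Sym2 V) :=
  {e | ∃ s l, IsGoodPendant G s l ∧ e = s(s, l)}

/-- Nat/Finset version of ve-domination for the path graph. -/
def domNat (n : ℕ) (S : Finset ℕ) : Prop :=
  ∀ x ∈ Finset.range (n-1), ∃ v ∈ S, v ≤ x + 2 ∧ x ≤ v + 1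

instance (n : ℕ) (S : Finset ℕ) : Decidable (domNat n S) := by
  unfold domNat; infer_instance

def minNat (n : ℕ) (S : Finset ℕ) : Prop :=
  domNat n S ∧ ∀ S' ∈ S.powerset, S' ≠ S → ¬ domNat n S'

instance (n : ℕ) (S : Finset ℕ) : Decidable (minNat n S) := by
  unfold minNat; infer_instance

lemma bridge (n : ℕ) (D : Set (Fin n)) :
    IsVEDomSet (SimpleGraph.pathGraph n) D ↔
    ∀ x : ℕ, x + 1 < n → ∃ v ∈ D, (v : ℕ) ≤ x + 2 ∧ x ≤ (v : ℕ) + 1 := by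
  constructor
  · intro h x hx
    have hx0 : x < n := by omega
    have hadj : (SimpleGraph.pathGraph n).Adj ⟨x, hx0⟩ ⟨x+1, hx⟩ := by
      rw [SimpleGraph.pathGraph_adj]; left; rfl
    obtain ⟨v, hvD, y, hy, hc⟩ := h s(⟨x, hx0⟩, ⟨x+1, hx⟩)
      ((SimpleGraph.pathGraph n).mem_edgeSet.mpr hadj)
    rw [Sym2.mem_iff] at hy
    refine ⟨v, hvD, ?_, ?_⟩ <;>
    · rcases hy with rfl | rfl <;> rcases hc with h2 | h2
      · have := congrArg Fin.val h2; simp at this; omega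
      · rw [SimpleGraph.pathGraph_adj] at h2; simp at h2; omega
      · have := congrArg Fin.val h2; simp at this; omega
      · rw [SimpleGraph.pathGraph_adj] at h2; simp at h2; omega
  · intro h e he
    induction e with
    | _ a b =>
      rw [SimpleGraph.mem_edgeSet, SimpleGraph.pathGraph_adj] at he
      rcases he with hab | hab
      · obtain ⟨v, hv, h1, h2⟩ := h a.val (by omega)
        refine ⟨v, hv, ?_⟩
        have hcase : (v:ℕ) + 1 = a.val ∨ (v:ℕ) = a.val ∨ (v:ℕ) = b.val ∨
            (b:ℕ) + 1 = (v:ℕ) := by omega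
        rcases hcase with hc | hc | hc | hc
        · exact ⟨a, Sym2.mem_iff.mpr (Or.inl rfl),
            Or.inr (SimpleGraph.pathGraph_adj.mpr (Or.inl hc))⟩
        · exact ⟨a, Sym2.mem_iff.mpr (Or.inl rfl), Or.inl (Fin.ext hc.symm)⟩
        · exact ⟨b, Sym2.mem_iff.mpr (Or.inr rfl), Or.inl (Fin.ext hc.symm)⟩
        · exact ⟨b, Sym2.mem_iff.mpr (Or.inr rfl),
            Or.inr (SimpleGraph.pathGraph_adj.mpr (Or.inr hc))⟩
      · obtain ⟨v, hv, h1, h2⟩ := h b.val (by omega)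
        refine ⟨v, hv, ?_⟩
        have hcase : (v:ℕ) + 1 = b.val ∨ (v:ℕ) = b.val ∨ (v:ℕ) = a.val ∨
            (a:ℕ) + 1 = (v:ℕ) := by omega
        rcases hcase with hc | hc | hc | hc
        · exact ⟨b, Sym2.mem_iff.mpr (Or.inr rfl),
            Or.inr (SimpleGraph.pathGraph_adj.mpr (Or.inl hc))⟩
        · exact ⟨b, Sym2.mem_iff.mpr (Or.inr rfl), Or.inl (Fin.ext hc.symm)⟩
        · exact ⟨a, Sym2.mem_iff.mpr (Or.inl rfl), Or.inl (Fin.ext hc.symm)⟩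
        · exact ⟨a, Sym2.mem_iff.mpr (Or.inl rfl),
            Or.inr (SimpleGraph.pathGraph_adj.mpr (Or.inr hc))⟩

lemma sub_card (n : ℕ) (S : Finset ℕ) (hS : S ⊆ Finset.range n) :
    ({v : Fin n | (v : ℕ) ∈ S} : Set (Fin n)).ncard = S.card := by
  have himg : Fin.val '' {v : Fin n | (v : ℕ) ∈ S} = (S : Set ℕ) := by
    ext a
    constructor
    · rintro ⟨v, hv, rfl⟩; exact hv
    · intro ha
      have : a < n := Finset.mem_range.mp (hS ha)
      exact ⟨⟨a, this⟩, ha, rfl⟩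
  calc ({v : Fin n | (v : ℕ) ∈ S} : Set (Fin n)).ncard
      = (Fin.val '' {v : Fin n | (v : ℕ) ∈ S}).ncard :=
        (Set.ncard_image_of_injective _ Fin.val_injective).symm
    _ = (S : Set ℕ).ncard := by rw [himg]
    _ = S.card := Set.ncard_coe_finset S

lemma toS_spec (n : ℕ) (D : Set (Fin n)) :
    ∃ S : Finset ℕ, S ⊆ Finset.range n ∧ (∀ a, a ∈ S ↔ ∃ v ∈ D, (v:ℕ) = a) ∧
      S.card = D.ncard := by
  refine ⟨(D.toFinite.toFinset).image Fin.val, ?_, ?_, ?_⟩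
  · intro a ha
    obtain ⟨v, hv, rfl⟩ := Finset.mem_image.mp ha
    exact Finset.mem_range.mpr v.isLt
  · intro a
    simp [Finset.mem_image, Set.Finite.mem_toFinset]
  · rw [Finset.card_image_of_injective _ Fin.val_injective,
      Set.ncard_eq_toFinset_card D D.toFinite]

lemma min_transfer_of (n : ℕ) (S : Finset ℕ) (hS : S ⊆ Finset.range n)
    (hm : minNat n S) :
    IsMinimalVEDomSet (SimpleGraph.pathGraph n) {v : Fin n | (v : ℕ) ∈ S} := by
  constructor
  · rw [bridge]
    intro x hx
    obtain ⟨v, hv, h1, h2⟩ := hm.1 x (Finset.mem_range.mpr (by omega))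
    exact ⟨⟨v, Finset.mem_range.mp (hS hv)⟩, hv, h1, h2⟩
  · intro D' hD' hdom'
    obtain ⟨S', hS'r, hS'mem, _⟩ := toS_spec n D'
    have hsub : S' ⊆ S := by
      intro a ha
      obtain ⟨v, hv, rfl⟩ := (hS'mem a).mp ha
      exact hD'.1 hv
    have hne : S' ≠ S := by
      obtain ⟨w, hwS, hwD'⟩ := Set.exists_of_ssubset hD'
      intro heq
      apply hwD'
      obtain ⟨v, hv, hva⟩ := (hS'mem (w : ℕ)).mp (heq ▸ hwS)
      exact Fin.val_injective hva ▸ hv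
    refine hm.2 S' (Finset.mem_powerset.mpr hsub) hne ?_
    intro x hx
    obtain ⟨v, hv, h1, h2⟩ := (bridge n D').mp hdom' x
      (by have := Finset.mem_range.mp hx; omega)
    exact ⟨(v : ℕ), (hS'mem _).mpr ⟨v, hv, rfl⟩, h1, h2⟩

lemma master (n : ℕ) :
    WellVEDominated (SimpleGraph.pathGraph n) ↔
    ∀ S₁ ∈ (Finset.range n).powerset, ∀ S₂ ∈ (Finset.range n).powerset,
      minNat n S₁ → minNat n S₂ → S₁.card = S₂.card := by
  constructor
  · intro hW S₁ h1 S₂ h2 hm1 hm2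
    have e1 := min_transfer_of n S₁ (Finset.mem_powerset.mp h1) hm1
    have e2 := min_transfer_of n S₂ (Finset.mem_powerset.mp h2) hm2
    have := hW _ _ e1 e2
    rw [sub_card n S₁ (Finset.mem_powerset.mp h1),
      sub_card n S₂ (Finset.mem_powerset.mp h2)] at this
    exact this
  · intro hR D₁ D₂ hm1 hm2
    -- transfer each minimal set to a Finset
    have key : ∀ D : Set (Fin n), IsMinimalVEDomSet (SimpleGraph.pathGraph n) D →
        ∃ S : Finset ℕ, S ⊆ Finset.range n ∧ minNat n S ∧ S.card = D.ncard := by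
      intro D hD
      obtain ⟨S, hSr, hSmem, hScard⟩ := toS_spec n D
      refine ⟨S, hSr, ⟨?_, ?_⟩, hScard⟩
      · intro x hx
        obtain ⟨v, hv, h1, h2⟩ := (bridge n D).mp hD.1 x
          (by have := Finset.mem_range.mp hx; omega)
        exact ⟨(v : ℕ), (hSmem _).mpr ⟨v, hv, rfl⟩, h1, h2⟩
      · intro S' hS' hne hdom'
        have hsub : S' ⊆ S := Finset.mem_powerset.mp hS'
        set D' : Set (Fin n) := {v : Fin n | (v : ℕ) ∈ S'} with hD'def
        have hD'sub : D' ⊂ D := by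
          constructor
          · intro v hv
            obtain ⟨w, hw, hwv⟩ := (hSmem (v : ℕ)).mp (hsub hv)
            exact Fin.val_injective hwv ▸ hw
          · intro hDD'
            apply hne
            refine Finset.Subset.antisymm hsub ?_
            intro a ha
            obtain ⟨v, hv, rfl⟩ := (hSmem a).mp ha
            exact hDD' hv
        refine hD.2 D' hD'sub ?_
        rw [bridge]
        intro x hx
        obtain ⟨v, hv, h1, h2⟩ := hdom' x (Finset.mem_range.mpr (by omega))
        have hvn : v < n := Finset.mem_range.mp (hSr (hsub hv))
        exact ⟨⟨v, hvn⟩, hv, h1, h2⟩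
    obtain ⟨S₁, h1r, h1m, h1c⟩ := key D₁ hm1
    obtain ⟨S₂, h2r, h2m, h2c⟩ := key D₂ hm2
    rw [← h1c, ← h2c]
    exact hR S₁ (Finset.mem_powerset.mpr h1r) S₂ (Finset.mem_powerset.mpr h2r) h1m h2m

lemma priv_minNat (n : ℕ) (S : Finset ℕ) (hdom : domNat n S)
    (hpriv : ∀ v ∈ S, ∃ x, x + 1 < n ∧ (v ≤ x + 2 ∧ x ≤ v + 1) ∧
      ∀ u ∈ S, u ≤ x + 2 → x ≤ u + 1 → u = v) : minNat n S := by
  refine ⟨hdom, ?_⟩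
  intro S' hS' hne hdom'
  have hsub := Finset.mem_powerset.mp hS'
  obtain ⟨v, hvS, hvS'⟩ : ∃ v ∈ S, v ∉ S' := by
    by_contra hcon
    push_neg at hcon
    exact hne (Finset.Subset.antisymm hsub hcon)
  obtain ⟨x, hx, ⟨hc1, hc2⟩, hu⟩ := hpriv v hvS
  obtain ⟨u, huS', hu1, hu2⟩ := hdom' x (Finset.mem_range.mpr (by omega))
  exact hvS' (hu u (hsub huS') hu1 hu2 ▸ huS')

lemma counter (n : ℕ) (hn : 7 ≤ n) :
    ¬ (∀ S₁ ∈ (Finset.range n).powerset, ∀ S₂ ∈ (Finset.range n).powerset,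
      minNat n S₁ → minNat n S₂ → S₁.card = S₂.card) := by
  intro h
  set k := (n-2)/4 with hk
  set m := (n-1)/3 with hm
  have hk1 : 1 ≤ k := by omega
  set S₁ : Finset ℕ := ((Finset.range k).image fun i => 2+4*i) ∪ {n-3} with hS₁
  set S₂ : Finset ℕ := (Finset.range (m+1)).image fun i => 3*i with hS₂
  have hmem₁ : ∀ a, a ∈ S₁ ↔ (∃ i < k, 2+4*i = a) ∨ a = n-3 := by
    intro a; simp [hS₁]; exact or_comm
  have hmem₂ : ∀ a, a ∈ S₂ ↔ ∃ i ≤ m, 3*i = a := by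
    intro a; simp [hS₂, Nat.lt_succ_iff]
  have hsub₁ : S₁ ⊆ Finset.range n := by
    intro a ha
    rw [hmem₁] at ha
    rw [Finset.mem_range]
    rcases ha with ⟨i, hi, rfl⟩ | rfl <;> omega
  have hsub₂ : S₂ ⊆ Finset.range n := by
    intro a ha
    rw [hmem₂] at ha
    obtain ⟨i, hi, rfl⟩ := ha
    rw [Finset.mem_range]
    omega
  have hmin₁ : minNat n S₁ := by
    refine priv_minNat n S₁ ?_ ?_
    · intro x hx
      rw [Finset.mem_range] at hx
      by_cases hbig : n ≤ x + 5
      · exact ⟨n-3, (hmem₁ _).mpr (Or.inr rfl), by omega, by omega⟩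
      · refine ⟨2+4*(x/4), (hmem₁ _).mpr (Or.inl ⟨x/4, by omega, rfl⟩), by omega, by omega⟩
    · intro v hv
      rw [hmem₁] at hv
      rcases hv with ⟨i, hi, rfl⟩ | rfl
      · refine ⟨4*i, by omega, ⟨by omega, by omega⟩, ?_⟩
        intro u hu h1 h2
        rw [hmem₁] at hu
        rcases hu with ⟨j, hj, rfl⟩ | rfl <;> omega
      · refine ⟨n-2, by omega, ⟨by omega, by omega⟩, ?_⟩
        intro u hu h1 h2
        rw [hmem₁] at hu
        rcases hu with ⟨j, hj, rfl⟩ | rfl <;> omega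
  have hmin₂ : minNat n S₂ := by
    refine priv_minNat n S₂ ?_ ?_
    · intro x hx
      rw [Finset.mem_range] at hx
      exact ⟨3*((x+1)/3), (hmem₂ _).mpr ⟨(x+1)/3, by omega, rfl⟩, by omega, by omega⟩
    · intro v hv
      rw [hmem₂] at hv
      obtain ⟨i, hi, rfl⟩ := hv
      refine ⟨3*i - 1, by omega, ⟨by omega, by omega⟩, ?_⟩
      intro u hu h1 h2
      rw [hmem₂] at hu
      obtain ⟨j, hj, rfl⟩ := hu
      omega
  have hcard₁ : S₁.card = k + 1 := by
    rw [hS₁, Finset.card_union_of_disjoint, Finset.card_image_of_injective,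
      Finset.card_range, Finset.card_singleton]
    · intro a b hab; dsimp only at hab; omega
    · simp only [Finset.disjoint_singleton_right, Finset.mem_image, Finset.mem_range]
      rintro ⟨i, hi, heq⟩
      omega
  have hcard₂ : S₂.card = m + 1 := by
    rw [hS₂, Finset.card_image_of_injective, Finset.card_range]
    intro a b hab; dsimp only at hab; omega
  have := h S₁ (Finset.mem_powerset.mpr hsub₁) S₂ (Finset.mem_powerset.mpr hsub₂) hmin₁ hmin₂
  rw [hcard₁, hcard₂] at this
  omega

set_option maxRecDepth 100000

/-- The path on `n` vertices is well-ve-dominated iff `n ∈ {1, 2, 3, 6}`. -/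
theorem stmt_5 (n : ℕ) (hn : 1 ≤ n) :
    WellVEDominated (SimpleGraph.pathGraph n) ↔
      n = 1 ∨ n = 2 ∨ n = 3 ∨ n = 6 := by
  rw [master]
  rcases le_or_gt n 6 with h6 | h6
  · interval_cases n
    · exact iff_of_true (by decide) (by norm_num)
    · exact iff_of_true (by decide) (by norm_num)
    · exact iff_of_true (by decide) (by norm_num)
    · exact iff_of_false (by decide) (by norm_num)
    · exact iff_of_false (by decide) (by norm_num)
    · exact iff_of_true (by decide) (by norm_num)
  · exact iff_of_false (counter n (by omega)) (by omega)
end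

section
/- Let G be a graph containing an induced path v_1 v_2 v_3 v_4 such that the degrees in G satisfy d(v_1) = d(v_4) = 1 and d(v_2) = 2. Then G is not well-ve-dominated. -/
open SimpleGraph

def Covers {V : Type*} (G : SimpleGraph V) (E : Set V) (S : Set (Sym2 V)) : Prop :=
  ∀ e ∈ S, ∃ c ∈ E, VEDominates G c e

lemma exists_minCover {V : Type*} [Fintype V] (G : SimpleGraph V) (S : Set (Sym2 V))
    (Z : Set V) (hZ : Covers G Z S) :
    ∃ E, E ⊆ Z ∧ Covers G E S ∧ ∀ E', E' ⊂ E → ¬ Covers G E' S := by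
  classical
  set T : Set ℕ := {n | ∃ E, E ⊆ Z ∧ Covers G E S ∧ E.ncard = n} with hT
  have hne : T.Nonempty := ⟨Z.ncard, Z, subset_rfl, hZ, rfl⟩
  obtain ⟨E, hEZ, hEcov, hEcard⟩ := Nat.sInf_mem hne
  refine ⟨E, hEZ, hEcov, fun E' hE' hcov' => ?_⟩
  have hlt : E'.ncard < E.ncard := Set.ncard_lt_ncard hE' (Set.toFinite E)
  have hle : sInf T ≤ E'.ncard := Nat.sInf_le ⟨E', hE'.subset.trans hEZ, hcov', rfl⟩
  omega

lemma insert_minimal {V : Type*} [Fintype V] (G : SimpleGraph V) (u : V) (E : Set V)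
    (hu : u ∉ E)
    (hcov : Covers G E {e ∈ G.edgeSet | ¬ VEDominates G u e})
    (hmin : ∀ E', E' ⊂ E → ¬ Covers G E' {e ∈ G.edgeSet | ¬ VEDominates G u e})
    (e0 : Sym2 V) (he0 : e0 ∈ G.edgeSet) (hw : ∀ c ∈ E, ¬ VEDominates G c e0) :
    IsMinimalVEDomSet G (insert u E) := by
  constructor
  · intro e he
    by_cases h : VEDominates G u e
    · exact ⟨u, Set.mem_insert _ _, h⟩
    · obtain ⟨c, hc, hdc⟩ := hcov e ⟨he, h⟩
      exact ⟨c, Set.mem_insert_of_mem _ hc, hdc⟩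
  · intro D' hD' hved
    by_cases hu' : u ∈ D'
    · have hsub : D' \ {u} ⊆ E := by
        rintro x ⟨hx, hxu⟩
        rcases hD'.subset hx with rfl | hxE
        · exact absurd rfl hxu
        · exact hxE
      have hne : D' \ {u} ≠ E := by
        intro h
        apply hD'.ne
        apply Set.Subset.antisymm hD'.subset
        intro x hx
        rcases hx with rfl | hxE
        · exact hu'
        · have : x ∈ D' \ {u} := h ▸ hxE
          exact this.1
      have hnc := hmin _ (ssubset_of_subset_of_ne hsub hne)
      rw [Covers] at hnc; push_neg at hnc
      obtain ⟨e, ⟨he, hnu⟩, hnce⟩ := hnc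
      obtain ⟨c, hc, hdc⟩ := hved e he
      rcases eq_or_ne c u with rfl | hcu
      · exact hnu hdc
      · exact hnce c ⟨hc, hcu⟩ hdc
    · have hsub : D' ⊆ E := by
        intro x hx
        rcases hD'.subset hx with rfl | hxE
        · exact absurd hx hu'
        · exact hxE
      obtain ⟨c, hc, hdc⟩ := hved e0 he0
      exact hw c (hsub hc) hdc

lemma insert2_minimal {V : Type*} [Fintype V] (G : SimpleGraph V) (u w : V) (E : Set V)
    (hu : u ∉ insert w E) (hw : w ∉ E)
    (hved : IsVEDomSet G (insert u (insert w E)))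
    (e1 : Sym2 V) (he1 : e1 ∈ G.edgeSet) (h1 : ∀ c ∈ insert w E, ¬ VEDominates G c e1)
    (e2 : Sym2 V) (he2 : e2 ∈ G.edgeSet) (h2 : ∀ c ∈ insert u E, ¬ VEDominates G c e2)
    (hmin : ∀ E', E' ⊂ E → ∃ e ∈ G.edgeSet,
      ∀ c ∈ insert u (insert w E'), ¬ VEDominates G c e) :
    IsMinimalVEDomSet G (insert u (insert w E)) := by
  refine ⟨hved, ?_⟩
  intro D' hD' hved'
  by_cases hu' : u ∈ D'
  · by_cases hw' : w ∈ D'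
    · set E' := D' \ {u, w} with hE'
      have hsub : E' ⊆ E := by
        rintro x ⟨hx, hxuw⟩
        rcases hD'.subset hx with rfl | hx2
        · exact absurd (Or.inl rfl) hxuw
        rcases hx2 with rfl | hxE
        · exact absurd (Or.inr rfl) hxuw
        · exact hxE
      have hne : E' ≠ E := by
        intro h
        apply hD'.ne
        apply Set.Subset.antisymm hD'.subset
        intro x hx
        rcases hx with rfl | hx2
        · exact hu'
        rcases hx2 with rfl | hxE
        · exact hw'
        · exact (h ▸ hxE : x ∈ E').1
      obtain ⟨e, he, hnce⟩ := hmin E' (ssubset_of_subset_of_ne hsub hne)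
      obtain ⟨c, hc, hdc⟩ := hved' e he
      refine hnce c ?_ hdc
      rcases eq_or_ne c u with rfl | hcu
      · exact Set.mem_insert _ _
      rcases eq_or_ne c w with rfl | hcw
      · exact Set.mem_insert_of_mem _ (Set.mem_insert _ _)
      · exact Set.mem_insert_of_mem _ (Set.mem_insert_of_mem _ ⟨hc, by rintro (rfl | rfl) <;> simp_all⟩)
    · have hsub : D' ⊆ insert u E := by
        intro x hx
        rcases hD'.subset hx with rfl | hx2
        · exact Set.mem_insert _ _
        rcases hx2 with rfl | hxE
        · exact absurd hx hw'
        · exact Set.mem_insert_of_mem _ hxE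
      obtain ⟨c, hc, hdc⟩ := hved' e2 he2
      exact h2 c (hsub hc) hdc
  · have hsub : D' ⊆ insert w E := by
      intro x hx
      rcases hD'.subset hx with rfl | hx2
      · exact absurd hx hu'
      · exact hx2
    obtain ⟨c, hc, hdc⟩ := hved' e1 he1
    exact h1 c (hsub hc) hdc

/-- If `G` has an induced path `v₁v₂v₃v₄` with `d(v₁) = d(v₄) = 1` and
`d(v₂) = 2`, then `G` is not well-ve-dominated. -/
theorem stmt_6 {V : Type*} [Fintype V] (G : SimpleGraph V)
    (f : SimpleGraph.pathGraph 4 ↪g G)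
    (hd1 : (G.neighborSet (f 0)).ncard = 1)
    (hd4 : (G.neighborSet (f 3)).ncard = 1)
    (hd2 : (G.neighborSet (f 1)).ncard = 2) :
    ¬ WellVEDominated G := by
  classical
  intro hWell
  set v1 := f 0 with hv1
  set v2 := f 1 with hv2
  set v3 := f 2 with hv3
  set v4 := f 3 with hv4
  have hadj : ∀ a b : Fin 4, G.Adj (f a) (f b) ↔ (pathGraph 4).Adj a b :=
    fun a b => f.map_adj_iff
  have a12 : G.Adj v1 v2 := (hadj 0 1).2 (by rw [pathGraph_adj]; decide)
  have a23 : G.Adj v2 v3 := (hadj 1 2).2 (by rw [pathGraph_adj]; decide)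
  have a34 : G.Adj v3 v4 := (hadj 2 3).2 (by rw [pathGraph_adj]; decide)
  have n13 : ¬ G.Adj v1 v3 := fun h => by
    have := (hadj 0 2).1 h; rw [pathGraph_adj] at this; exact absurd this (by decide)
  have n14 : ¬ G.Adj v1 v4 := fun h => by
    have := (hadj 0 3).1 h; rw [pathGraph_adj] at this; exact absurd this (by decide)
  have n24 : ¬ G.Adj v2 v4 := fun h => by
    have := (hadj 1 3).1 h; rw [pathGraph_adj] at this; exact absurd this (by decide)
  have hne : ∀ a b : Fin 4, a ≠ b → f a ≠ f b := fun a b hab h => hab (f.injective h)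
  have d12 : v1 ≠ v2 := hne 0 1 (by decide)
  have d13 : v1 ≠ v3 := hne 0 2 (by decide)
  have d14 : v1 ≠ v4 := hne 0 3 (by decide)
  have d23 : v2 ≠ v3 := hne 1 2 (by decide)
  have d24 : v2 ≠ v4 := hne 1 3 (by decide)
  have d34 : v3 ≠ v4 := hne 2 3 (by decide)
  -- neighborhoods
  have hN1 : G.neighborSet v1 = {v2} := by
    obtain ⟨x, hx⟩ := Set.ncard_eq_one.mp hd1
    have h2 : v2 ∈ G.neighborSet v1 := a12
    rw [hx] at h2 ⊢
    rw [Set.mem_singleton_iff] at h2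
    rw [h2]
  have hN4 : G.neighborSet v4 = {v3} := by
    obtain ⟨x, hx⟩ := Set.ncard_eq_one.mp hd4
    have h2 : v3 ∈ G.neighborSet v4 := a34.symm
    rw [hx] at h2 ⊢
    rw [Set.mem_singleton_iff] at h2
    rw [h2]
  have hN2 : G.neighborSet v2 = {v1, v3} := by
    obtain ⟨x, y, hxy, hset⟩ := Set.ncard_eq_two.mp hd2
    have h1 : v1 ∈ ({x, y} : Set V) := hset ▸ (a12.symm : v1 ∈ G.neighborSet v2)
    have h3 : v3 ∈ ({x, y} : Set V) := hset ▸ (a23 : v3 ∈ G.neighborSet v2)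
    rw [hset]
    have h1' : v1 = x ∨ v1 = y := by simpa using h1
    have h3' : v3 = x ∨ v3 = y := by simpa using h3
    rcases h1' with h1' | h1' <;> rcases h3' with h3' | h3'
    · exact absurd (h1'.trans h3'.symm) d13
    · rw [← h1', ← h3']
    · rw [← h1', ← h3', Set.pair_comm]
    · exact absurd (h1'.trans h3'.symm) d13
  have adj1 : ∀ x, G.Adj v1 x ↔ x = v2 := fun x => by
    rw [← SimpleGraph.mem_neighborSet, hN1, Set.mem_singleton_iff]
  have adj2 : ∀ x, G.Adj v2 x ↔ (x = v1 ∨ x = v3) := fun x => by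
    rw [← SimpleGraph.mem_neighborSet, hN2]; simp
  have adj4 : ∀ x, G.Adj v4 x ↔ x = v3 := fun x => by
    rw [← SimpleGraph.mem_neighborSet, hN4, Set.mem_singleton_iff]
  -- dominator eliminations for the two pendant edges
  have dom_v1v2 : ∀ c, VEDominates G c s(v1, v2) → c = v1 ∨ c = v2 ∨ c = v3 := by
    rintro c ⟨x, hx, h⟩
    rw [Sym2.mem_iff] at hx
    rcases hx with rfl | rfl
    · rcases h with rfl | h
      · exact Or.inl rfl
      · exact Or.inr (Or.inl ((adj1 c).1 h.symm))
    · rcases h with rfl | h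
      · exact Or.inr (Or.inl rfl)
      · rcases (adj2 c).1 h.symm with rfl | rfl
        · exact Or.inl rfl
        · exact Or.inr (Or.inr rfl)
  have dom_v3v4 : ∀ c, VEDominates G c s(v3, v4) → c = v3 ∨ c = v4 ∨ G.Adj v3 c := by
    rintro c ⟨x, hx, h⟩
    rw [Sym2.mem_iff] at hx
    rcases hx with rfl | rfl
    · rcases h with rfl | h
      · exact Or.inl rfl
      · exact Or.inr (Or.inr h.symm)
    · rcases h with rfl | h
      · exact Or.inr (Or.inl rfl)
      · exact Or.inl ((adj4 c).1 h.symm)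
  have e12 : s(v1, v2) ∈ G.edgeSet := a12
  have e34 : s(v3, v4) ∈ G.edgeSet := a34
  -- the two residual edge systems
  set S2 : Set (Sym2 V) := {e ∈ G.edgeSet | ¬ VEDominates G v2 e} with hS2
  set S3 : Set (Sym2 V) := {e ∈ G.edgeSet | ¬ VEDominates G v3 e} with hS3
  set A1 : Set V := {x | x ≠ v1 ∧ x ≠ v2 ∧ x ≠ v3 ∧ x ≠ v4} with hA1def
  -- endpoints of S2-edges lie in A1
  have hEnds : ∀ e ∈ S2, ∀ x ∈ e, x ∈ A1 := by
    rintro e ⟨he, hnd⟩ x hx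
    refine ⟨?_, ?_, ?_, ?_⟩ <;> rintro rfl
    · exact hnd ⟨v1, hx, Or.inr a12.symm⟩
    · exact hnd ⟨v2, hx, Or.inl rfl⟩
    · exact hnd ⟨v3, hx, Or.inr a23⟩
    · obtain ⟨y, rfl⟩ := Sym2.mem_iff_exists.mp hx
      have hy : G.Adj v4 y := he
      rw [adj4] at hy
      subst hy
      exact hnd ⟨v3, by rw [Sym2.mem_iff]; right; rfl, Or.inr a23⟩
  -- S3 ⊆ S2
  have hS32 : S3 ⊆ S2 := by
    rintro e ⟨he, h3⟩
    refine ⟨he, fun hd => h3 ?_⟩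
    obtain ⟨x, hx, h⟩ := hd
    rcases h with rfl | h
    · exact ⟨v2, hx, Or.inr a23.symm⟩
    · rcases (adj2 x).1 h with rfl | rfl
      · obtain ⟨y, rfl⟩ := Sym2.mem_iff_exists.mp hx
        have hy : G.Adj v1 y := he
        rw [adj1] at hy
        subst hy
        exact ⟨v2, by rw [Sym2.mem_iff]; right; rfl, Or.inr a23.symm⟩
      · exact ⟨v3, hx, Or.inl rfl⟩
  -- edges of S2 are covered by witnesses in A1 (namely their endpoints)
  have hA1cov : Covers G A1 S2 := by
    intro e he
    induction e using Sym2.ind with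
    | _ a b =>
      have ha : a ∈ A1 := hEnds _ he a (by rw [Sym2.mem_iff]; left; rfl)
      exact ⟨a, ha, ⟨a, by rw [Sym2.mem_iff]; left; rfl, Or.inl rfl⟩⟩
  -- a generic "fresh witness" fact: members of A1 never dominate s(v1,v2)
  have hwA1 : ∀ c ∈ A1, ¬ VEDominates G c s(v1, v2) := by
    intro c hc hd
    rcases dom_v1v2 c hd with rfl | rfl | rfl
    · exact hc.1 rfl
    · exact hc.2.1 rfl
    · exact hc.2.2.1 rfl
  by_cases hgood : Covers G {c | c ∈ A1 ∧ ¬ G.Adj v3 c} S2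
  · -- good case: there is a minimal cover of S2 avoiding N[v3]
    obtain ⟨E, hEZ, hEcov, hEmin⟩ := exists_minCover G S2 _ hgood
    have hEA1 : ∀ c ∈ E, c ∈ A1 := fun c hc => (hEZ hc).1
    have hv2E : v2 ∉ E := fun h => (hEA1 _ h).2.1 rfl
    have hM1 : IsMinimalVEDomSet G (insert v2 E) :=
      insert_minimal G v2 E hv2E hEcov hEmin s(v1,v2) e12
        (fun c hc => hwA1 c (hEA1 c hc))
    have hv4E : v4 ∉ E := fun h => (hEA1 _ h).2.2.2 rfl
    have hv1E : v1 ∉ insert v4 E := by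
      rintro (h | h)
      · exact d14 h
      · exact (hEA1 _ h).1 rfl
    have hved2 : IsVEDomSet G (insert v1 (insert v4 E)) := by
      intro e he
      by_cases h2 : VEDominates G v2 e
      · obtain ⟨x, hx, hx'⟩ := h2
        rcases hx' with rfl | h
        · exact ⟨v1, Set.mem_insert _ _, ⟨v2, hx, Or.inr a12⟩⟩
        · rcases (adj2 x).1 h with rfl | rfl
          · exact ⟨v1, Set.mem_insert _ _, ⟨v1, hx, Or.inl rfl⟩⟩
          · exact ⟨v4, Set.mem_insert_of_mem _ (Set.mem_insert _ _), ⟨v3, hx, Or.inr a34.symm⟩⟩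
      · obtain ⟨c, hc, hdc⟩ := hEcov e ⟨he, h2⟩
        exact ⟨c, Set.mem_insert_of_mem _ (Set.mem_insert_of_mem _ hc), hdc⟩
    have hM2 : IsMinimalVEDomSet G (insert v1 (insert v4 E)) := by
      refine insert2_minimal G v1 v4 E hv1E hv4E hved2 s(v1,v2) e12 ?_ s(v3,v4) e34 ?_ ?_
      · rintro c (rfl | hc)
        · intro hd
          rcases dom_v1v2 _ hd with h | h | h
          · exact d14 h.symm
          · exact d24 h.symm
          · exact d34 h.symm
        · exact hwA1 c (hEA1 c hc)
      · rintro c (rfl | hc) hd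
        · rcases dom_v3v4 _ hd with h | h | h
          · exact d13 h
          · exact d14 h
          · exact n13 h.symm
        · rcases dom_v3v4 _ hd with h | h | h
          · exact (hEA1 _ hc).2.2.1 h
          · exact (hEA1 _ hc).2.2.2 h
          · exact (hEZ hc).2 h
      · intro E' hE'
        have hnca := hEmin E' hE'
        rw [Covers] at hnca; push_neg at hnca
        obtain ⟨e, ⟨he, hnd⟩, hnc⟩ := hnca
        refine ⟨e, he, ?_⟩
        rintro c (rfl | rfl | hc)
        · rintro ⟨x, hx, hx'⟩
          rcases hx' with rfl | h
          · exact (hEnds e ⟨he, hnd⟩ _ hx).1 rfl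
          · exact (hEnds e ⟨he, hnd⟩ _ hx).2.1 ((adj1 x).1 h)
        · rintro ⟨x, hx, hx'⟩
          rcases hx' with rfl | h
          · exact (hEnds e ⟨he, hnd⟩ _ hx).2.2.2 rfl
          · exact (hEnds e ⟨he, hnd⟩ _ hx).2.2.1 ((adj4 x).1 h)
        · exact hnc c hc
    have hc1 : (insert v2 E).ncard = E.ncard + 1 :=
      Set.ncard_insert_of_notMem hv2E (Set.toFinite E)
    have hc2 : (insert v1 (insert v4 E)).ncard = E.ncard + 2 := by
      rw [Set.ncard_insert_of_notMem hv1E (Set.toFinite _),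
        Set.ncard_insert_of_notMem hv4E (Set.toFinite _)]
    have hcard := hWell _ _ hM1 hM2
    omega
  · -- bad case
    rw [Covers] at hgood; push_neg at hgood
    obtain ⟨ebad, hebad, hbadnc⟩ := hgood
    set Sbad : Set (Sym2 V) := {e | e ∈ S2 ∧ ∀ c ∈ A1, ¬ G.Adj v3 c → ¬ VEDominates G c e}
      with hSbad
    have hebadSb : ebad ∈ Sbad := ⟨hebad, fun c hc1 hc2 => hbadnc c ⟨hc1, hc2⟩⟩
    set T : Set ℕ := {n | ∃ e ∈ Sbad, ({c | c ∈ A1 ∧ VEDominates G c e}).ncard = n} with hT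
    have hTne : T.Nonempty := ⟨_, ebad, hebadSb, rfl⟩
    obtain ⟨f₀, hf₀, hf₀m⟩ := Nat.sInf_mem hTne
    clear hebadSb hbadnc hebad
    revert hf₀ hf₀m
    induction f₀ using Sym2.ind with
    | _ a b =>
    intro hf₀ hf₀m
    set Df : Set V := {c | c ∈ A1 ∧ VEDominates G c s(a, b)} with hDf
    have hDfN3 : ∀ c ∈ Df, G.Adj v3 c := by
      intro c hc
      by_contra hn
      exact hf₀.2 c hc.1 hn hc.2
    have haA1 : a ∈ A1 := hEnds _ hf₀.1 a (by rw [Sym2.mem_iff]; left; rfl)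
    have haDf : a ∈ Df := ⟨haA1, a, by rw [Sym2.mem_iff]; left; rfl, Or.inl rfl⟩
    set Z : Set V := insert a {c | c ∈ A1 ∧ c ∉ Df} with hZ
    have hZA1 : ∀ c ∈ Z, c ∈ A1 := by
      rintro c (rfl | hc)
      · exact haA1
      · exact hc.1
    have hZcov : Covers G Z S2 := by
      intro e he
      by_contra hnc
      push_neg at hnc
      have heb : e ∈ Sbad :=
        ⟨he, fun c hc1 hc2 hd =>
          hnc c (Set.mem_insert_of_mem _ ⟨hc1, fun hcDf => hc2 (hDfN3 c hcDf)⟩) hd⟩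
      have hsub : {c | c ∈ A1 ∧ VEDominates G c e} ⊆ Df := by
        intro c hc
        by_contra hcf
        exact hnc c (Set.mem_insert_of_mem _ ⟨hc.1, hcf⟩) hc.2
      have hane : a ∉ {c | c ∈ A1 ∧ VEDominates G c e} :=
        fun hc => hnc a (Set.mem_insert _ _) hc.2
      have hss : {c | c ∈ A1 ∧ VEDominates G c e} ⊂ Df :=
        ssubset_of_subset_of_ne hsub (fun h => hane (by rw [h]; exact haDf))
      have hlt : ({c | c ∈ A1 ∧ VEDominates G c e}).ncard < Df.ncard :=
        Set.ncard_lt_ncard hss (Set.toFinite _)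
      have hle : sInf T ≤ ({c | c ∈ A1 ∧ VEDominates G c e}).ncard :=
        Nat.sInf_le ⟨e, heb, rfl⟩
      omega
    obtain ⟨Ea, hEaZ, hEacov, hEamin⟩ := exists_minCover G S2 Z hZcov
    have hEaA1 : ∀ c ∈ Ea, c ∈ A1 := fun c hc => hZA1 c (hEaZ hc)
    have haEa : a ∈ Ea := by
      obtain ⟨c, hc, hdc⟩ := hEacov _ hf₀.1
      rcases hEaZ hc with rfl | hcz
      · exact hc
      · exact absurd (⟨hcz.1, hdc⟩ : c ∈ Df) hcz.2
    have hv2Ea : v2 ∉ Ea := fun h => (hEaA1 _ h).2.1 rfl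
    have hM1 : IsMinimalVEDomSet G (insert v2 Ea) :=
      insert_minimal G v2 Ea hv2Ea hEacov hEamin s(v1,v2) e12
        (fun c hc => hwA1 c (hEaA1 c hc))
    by_cases hcov3 : Covers G {c | c ∈ Ea ∧ c ≠ a} S3
    · obtain ⟨E4, hE4sub, hE4cov, hE4min⟩ := exists_minCover G S3 _ hcov3
      have hE4A1 : ∀ c ∈ E4, c ∈ A1 := fun c hc => hEaA1 _ (hE4sub hc).1
      have hv3E4 : v3 ∉ E4 := fun h => (hE4A1 _ h).2.2.1 rfl
      have hM2 : IsMinimalVEDomSet G (insert v3 E4) :=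
        insert_minimal G v3 E4 hv3E4 hE4cov hE4min s(v1,v2) e12
          (fun c hc => hwA1 c (hE4A1 c hc))
      have hcard := hWell _ _ hM1 hM2
      rw [Set.ncard_insert_of_notMem hv2Ea (Set.toFinite _),
        Set.ncard_insert_of_notMem hv3E4 (Set.toFinite _)] at hcard
      have hssE : E4 ⊂ Ea := by
        refine ssubset_of_subset_of_ne (fun c hc => (hE4sub hc).1) (fun h => ?_)
        have haE4 : a ∈ E4 := by rw [h]; exact haEa
        exact (hE4sub haE4).2 rfl
      have := Set.ncard_lt_ncard hssE (Set.toFinite _)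
      omega
    · rw [Covers] at hcov3; push_neg at hcov3
      obtain ⟨g, hg, hgnc⟩ := hcov3
      obtain ⟨c, hc, hdc⟩ := hEacov g (hS32 hg)
      have hca : c = a := by
        by_contra hne'
        exact hgnc c ⟨hc, hne'⟩ hdc
      rw [hca] at hdc
      obtain ⟨x, hxg, hx'⟩ := hdc
      apply hg.2
      rcases hx' with rfl | h
      · exact ⟨x, hxg, Or.inr (hDfN3 _ haDf)⟩
      · have hxA1 : x ∈ A1 := hEnds _ (hS32 hg) x hxg
        have hxDf : x ∈ Df :=
          ⟨hxA1, ⟨a, by rw [Sym2.mem_iff]; left; rfl, Or.inr h.symm⟩⟩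
        exact ⟨x, hxg, Or.inr (hDfN3 _ hxDf)⟩
end

section
/- Let G be a graph containing an induced path v_1 v_2 v_3 v_4 v_5 v_6 v_7 such that the degrees in G satisfy d(v_1) = d(v_7) = 1 and d(v_2) = d(v_4) = d(v_6) = 2. Then G is not well-ve-dominated. -/
open SimpleGraph

lemma exists_minimal_vedom_subset {V : Type*} [Fintype V] (G : SimpleGraph V) :
    ∀ (n : ℕ) (D : Set V), D.ncard ≤ n → IsVEDomSet G D →
      ∃ D', D' ⊆ D ∧ IsMinimalVEDomSet G D' := by
  intro n
  induction n with
  | zero =>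
    intro D hn hdom
    refine ⟨D, subset_rfl, hdom, fun D' hss _ => ?_⟩
    have := Set.ncard_lt_ncard hss (Set.toFinite D)
    omega
  | succ n ih =>
    intro D hn hdom
    by_cases h : IsMinimalVEDomSet G D
    · exact ⟨D, subset_rfl, h⟩
    · rw [IsMinimalVEDomSet] at h
      push_neg at h
      obtain ⟨D', hss, hdom'⟩ := h hdom
      have hlt := Set.ncard_lt_ncard hss (Set.toFinite D)
      obtain ⟨D'', hsub, hmin⟩ := ih D' (by omega) hdom'
      exact ⟨D'', hsub.trans hss.subset, hmin⟩

lemma aux_p7 {V : Type*} [Fintype V] (G : SimpleGraph V) (v1 v2 v3 v4 v5 v6 v7 : V)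
    (a12 : G.Adj v1 v2) (a23 : G.Adj v2 v3) (a34 : G.Adj v3 v4)
    (a45 : G.Adj v4 v5) (a56 : G.Adj v5 v6) (a67 : G.Adj v6 v7)
    (N1 : G.neighborSet v1 = {v2}) (N2 : G.neighborSet v2 = {v1, v3})
    (N4 : G.neighborSet v4 = {v3, v5}) (N6 : G.neighborSet v6 = {v5, v7})
    (N7 : G.neighborSet v7 = {v6})
    (ne13 : v1 ≠ v3) (ne14 : v1 ≠ v4) (ne15 : v1 ≠ v5) (ne16 : v1 ≠ v6)
    (ne17 : v1 ≠ v7) (ne24 : v2 ≠ v4) (ne27 : v2 ≠ v7) (ne36 : v3 ≠ v6)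
    (ne37 : v3 ≠ v7) (ne46 : v4 ≠ v6) (ne47 : v4 ≠ v7) (ne57 : v5 ≠ v7) :
    ¬ WellVEDominated G := by
  classical
  intro hwell
  have hN1 : ∀ x, G.Adj v1 x → x = v2 := by
    intro x hx
    have hh : x ∈ G.neighborSet v1 := hx
    rw [N1] at hh; simpa using hh
  have hN2 : ∀ x, G.Adj v2 x → x = v1 ∨ x = v3 := by
    intro x hx
    have hh : x ∈ G.neighborSet v2 := hx
    rw [N2] at hh; simpa using hh
  have hN4 : ∀ x, G.Adj v4 x → x = v3 ∨ x = v5 := by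
    intro x hx
    have hh : x ∈ G.neighborSet v4 := hx
    rw [N4] at hh; simpa using hh
  have hN6 : ∀ x, G.Adj v6 x → x = v5 ∨ x = v7 := by
    intro x hx
    have hh : x ∈ G.neighborSet v6 := hx
    rw [N6] at hh; simpa using hh
  have hN7 : ∀ x, G.Adj v7 x → x = v6 := by
    intro x hx
    have hh : x ∈ G.neighborSet v7 := hx
    rw [N7] at hh; simpa using hh
  have nadj13 : ¬ G.Adj v1 v3 := fun h => a23.ne (hN1 v3 h).symm
  have nadj14 : ¬ G.Adj v1 v4 := fun h => ne24 (hN1 v4 h).symm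
  have nadj73 : ¬ G.Adj v7 v3 := fun h => ne36 (hN7 v3 h)
  have nadj74 : ¬ G.Adj v7 v4 := fun h => ne46 (hN7 v4 h)
  set Xs : Set V := {v1, v2, v3, v4, v5, v6, v7} with hXs
  set U : Set V := Xs ∪ G.neighborSet v3 ∪ G.neighborSet v5 with hU
  set P : Set V := {p | p ∉ Xs ∧ ∃ q, q ∉ Xs ∧ G.Adj p q ∧
      ∀ t, VEDominates G t s(p, q) → t ∈ U} with hP
  set S : Set V := {v1, v4, v7} ∪ P ∪ Uᶜ with hS
  have hXU : Xs ⊆ U := fun z hz => Or.inl (Or.inl hz)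
  have hx1 : v1 ∈ Xs := by simp [hXs]
  have hx2 : v2 ∈ Xs := by simp [hXs]
  have hx3 : v3 ∈ Xs := by simp [hXs]
  have hx4 : v4 ∈ Xs := by simp [hXs]
  have hx5 : v5 ∈ Xs := by simp [hXs]
  have hx6 : v6 ∈ Xs := by simp [hXs]
  have hx7 : v7 ∈ Xs := by simp [hXs]
  have hPU : ∀ d ∈ P, ∀ t, (t = d ∨ G.Adj d t) → t ∈ U := by
    rintro d ⟨hdX, q, hqX, hadj, hdomU⟩ t ht
    refine hdomU t ⟨d, Sym2.mem_mk_left d q, ?_⟩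
    rcases ht with h | h
    · exact Or.inl h.symm
    · exact Or.inr h.symm
  have hSv1 : v1 ∈ S := Set.mem_union_left _ (Set.mem_union_left _ (by simp))
  have hSv4 : v4 ∈ S := Set.mem_union_left _ (Set.mem_union_left _ (by simp))
  have hSv7 : v7 ∈ S := Set.mem_union_left _ (Set.mem_union_left _ (by simp))
  have hXS : ∀ z, z ∈ Xs → z ∈ S → z = v1 ∨ z = v4 ∨ z = v7 := by
    intro z hzX hzS
    rcases hzS with (h | hP') | hU'
    · simpa using h
    · exact absurd hzX hP'.1
    · exact absurd (hXU hzX) hU'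
  have hSdom : IsVEDomSet G S := by
    have key : ∀ x y : V, G.Adj x y → x ∈ Xs → ∃ v ∈ S, VEDominates G v s(x, y) := by
      intro x y hxy hxmem
      have hmem : x ∈ s(x, y) := Sym2.mem_mk_left x y
      simp only [hXs, Set.mem_insert_iff, Set.mem_singleton_iff] at hxmem
      rcases hxmem with h | h | h | h | h | h | h
      · exact ⟨v1, hSv1, x, hmem, Or.inl h⟩
      · exact ⟨v1, hSv1, x, hmem, Or.inr (by rw [h]; exact a12)⟩
      · exact ⟨v4, hSv4, x, hmem, Or.inr (by rw [h]; exact a34.symm)⟩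
      · exact ⟨v4, hSv4, x, hmem, Or.inl h⟩
      · exact ⟨v4, hSv4, x, hmem, Or.inr (by rw [h]; exact a45)⟩
      · exact ⟨v7, hSv7, x, hmem, Or.inr (by rw [h]; exact a67.symm)⟩
      · exact ⟨v7, hSv7, x, hmem, Or.inl h⟩
    intro e he
    induction e using Sym2.ind with
    | _ x y =>
    rw [SimpleGraph.mem_edgeSet] at he
    by_cases hxX : x ∈ Xs
    · exact key x y he hxX
    by_cases hyX : y ∈ Xs
    · obtain ⟨v, hv, hd⟩ := key y x he.symm hyX
      exact ⟨v, hv, by rwa [Sym2.eq_swap] at hd⟩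
    by_cases hb : ∀ t, VEDominates G t s(x, y) → t ∈ U
    · refine ⟨x, Set.mem_union_left _ (Set.mem_union_right _ ?_), x,
        Sym2.mem_mk_left x y, Or.inl rfl⟩
      exact ⟨hxX, y, hyX, he, hb⟩
    · push_neg at hb
      obtain ⟨t, htd, htU⟩ := hb
      exact ⟨t, Set.mem_union_right _ htU, htd⟩
  obtain ⟨D₂, hD₂S, hD₂min⟩ :=
    exists_minimal_vedom_subset G S.ncard S le_rfl hSdom
  have hD₂dom := hD₂min.1
  have he1 : s(v1, v2) ∈ G.edgeSet := a12
  have he3 : s(v3, v4) ∈ G.edgeSet := a34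
  have he6 : s(v6, v7) ∈ G.edgeSet := a67
  have hv1D : v1 ∈ D₂ := by
    obtain ⟨d, hd, x, hxm, hxd⟩ := hD₂dom s(v1, v2) he1
    rw [Sym2.mem_iff] at hxm
    have hd123 : d = v1 ∨ d = v2 ∨ d = v3 := by
      rcases hxm with h | h
      · rcases hxd with h2 | h2
        · exact Or.inl (h2.symm.trans h)
        · rw [h] at h2
          exact Or.inr (Or.inl (hN1 d h2.symm))
      · rcases hxd with h2 | h2
        · exact Or.inr (Or.inl (h2.symm.trans h))
        · rw [h] at h2
          rcases hN2 d h2.symm with h' | h'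
          · exact Or.inl h'
          · exact Or.inr (Or.inr h')
    rcases hd123 with h | h | h
    · rwa [h] at hd
    · have hdS := hD₂S hd
      rw [h] at hdS
      rcases hXS v2 hx2 hdS with h' | h' | h'
      · exact absurd h'.symm a12.ne
      · exact absurd h' ne24
      · exact absurd h' ne27
    · have hdS := hD₂S hd
      rw [h] at hdS
      rcases hXS v3 hx3 hdS with h' | h' | h'
      · exact absurd h'.symm ne13
      · exact absurd h' a34.ne
      · exact absurd h' ne37
  have hv7D : v7 ∈ D₂ := by
    obtain ⟨d, hd, x, hxm, hxd⟩ := hD₂dom s(v6, v7) he6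
    rw [Sym2.mem_iff] at hxm
    have hd567 : d = v5 ∨ d = v6 ∨ d = v7 := by
      rcases hxm with h | h
      · rcases hxd with h2 | h2
        · exact Or.inr (Or.inl (h2.symm.trans h))
        · rw [h] at h2
          rcases hN6 d h2.symm with h' | h'
          · exact Or.inl h'
          · exact Or.inr (Or.inr h')
      · rcases hxd with h2 | h2
        · exact Or.inr (Or.inr (h2.symm.trans h))
        · rw [h] at h2
          exact Or.inr (Or.inl (hN7 d h2.symm))
    rcases hd567 with h | h | h
    · have hdS := hD₂S hd
      rw [h] at hdS
      rcases hXS v5 hx5 hdS with h' | h' | h'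
      · exact absurd h'.symm ne15
      · exact absurd h'.symm a45.ne
      · exact absurd h' ne57
    · have hdS := hD₂S hd
      rw [h] at hdS
      rcases hXS v6 hx6 hdS with h' | h' | h'
      · exact absurd h'.symm ne16
      · exact absurd h'.symm ne46
      · exact absurd h' a67.ne
    · rwa [h] at hd
  obtain ⟨w, hwD, hwdom⟩ := hD₂dom s(v3, v4) he3
  have hwU : w ∈ U := by
    obtain ⟨x, hxm, hxd⟩ := hwdom
    rw [Sym2.mem_iff] at hxm
    rcases hxm with h | h
    · rcases hxd with h2 | h2
      · have hw3 : w = v3 := h2.symm.trans h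
        rw [hw3]; exact hXU hx3
      · rw [h] at h2
        exact Or.inl (Or.inr h2.symm)
    · rcases hxd with h2 | h2
      · have hw4 : w = v4 := h2.symm.trans h
        rw [hw4]; exact hXU hx4
      · rw [h] at h2
        rcases hN4 w h2.symm with h' | h'
        · rw [h']; exact hXU hx3
        · rw [h']; exact hXU hx5
  have hwne1 : w ≠ v1 := by
    intro heq
    obtain ⟨x, hxm, hxd⟩ := hwdom
    rw [Sym2.mem_iff] at hxm
    rcases hxm with h | h
    · rcases hxd with h2 | h2
      · exact ne13 (by rw [← heq, ← h2, h])
      · rw [heq, h] at h2; exact nadj13 h2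
    · rcases hxd with h2 | h2
      · exact ne14 (by rw [← heq, ← h2, h])
      · rw [heq, h] at h2; exact nadj14 h2
  have hwne7 : w ≠ v7 := by
    intro heq
    obtain ⟨x, hxm, hxd⟩ := hwdom
    rw [Sym2.mem_iff] at hxm
    rcases hxm with h | h
    · rcases hxd with h2 | h2
      · exact ne37 (by rw [← h, h2, heq])
      · rw [heq, h] at h2; exact nadj73 h2
    · rcases hxd with h2 | h2
      · exact ne47 (by rw [← h, h2, heq])
      · rw [heq, h] at h2; exact nadj74 h2
  set T : Set V := {v3, v5} ∪ (D₂ ∩ Uᶜ) with hT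
  have hTv3 : v3 ∈ T := Set.mem_union_left _ (by simp)
  have hTv5 : v5 ∈ T := Set.mem_union_left _ (by simp)
  have hTdom : IsVEDomSet G T := by
    intro e he
    induction e using Sym2.ind with
    | _ p q =>
    rw [SimpleGraph.mem_edgeSet] at he
    obtain ⟨d, hdD, x, hxm, hxd⟩ := hD₂dom s(p, q) (by rwa [SimpleGraph.mem_edgeSet])
    have hdS := hD₂S hdD
    rcases hdS with (hd3 | hdP) | hdU
    · simp only [Set.mem_insert_iff, Set.mem_singleton_iff] at hd3
      rcases hd3 with h | h | h
      · -- d = v1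
        rw [h] at hxd
        rcases hxd with h1 | h1
        · rw [h1, Sym2.mem_iff] at hxm
          rcases hxm with h2 | h2
          · rw [← h2] at he
            refine ⟨v3, hTv3, q, Sym2.mem_mk_right p q, Or.inr ?_⟩
            rw [hN1 q he]; exact a23.symm
          · rw [← h2] at he
            refine ⟨v3, hTv3, p, Sym2.mem_mk_left p q, Or.inr ?_⟩
            rw [hN1 p he.symm]; exact a23.symm
        · refine ⟨v3, hTv3, x, hxm, Or.inr ?_⟩
          rw [hN1 x h1]; exact a23.symm
      · -- d = v4
        rw [h] at hxd
        rcases hxd with h1 | h1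
        · exact ⟨v3, hTv3, x, hxm, Or.inr (by rw [h1]; exact a34)⟩
        · rcases hN4 x h1 with h' | h'
          · exact ⟨v3, hTv3, x, hxm, Or.inl h'⟩
          · exact ⟨v5, hTv5, x, hxm, Or.inl h'⟩
      · -- d = v7
        rw [h] at hxd
        rcases hxd with h1 | h1
        · rw [h1, Sym2.mem_iff] at hxm
          rcases hxm with h2 | h2
          · rw [← h2] at he
            refine ⟨v5, hTv5, q, Sym2.mem_mk_right p q, Or.inr ?_⟩
            rw [hN7 q he]; exact a56
          · rw [← h2] at he
            refine ⟨v5, hTv5, p, Sym2.mem_mk_left p q, Or.inr ?_⟩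
            rw [hN7 p he.symm]; exact a56
        · refine ⟨v5, hTv5, x, hxm, Or.inr ?_⟩
          rw [hN7 x h1]; exact a56
    · -- d ∈ P
      have hxU : x ∈ U := hPU d hdP x hxd
      have hdX : d ∉ Xs := hdP.1
      rcases hxU with (hxX | hx3') | hx5'
      · have hadj : G.Adj d x := by
          rcases hxd with h | h
          · rw [h] at hxX; exact absurd hxX hdX
          · exact h
        simp only [hXs, Set.mem_insert_iff, Set.mem_singleton_iff] at hxX
        rcases hxX with h | h | h | h | h | h | h
        · rw [h] at hadj
          have hd2 := hN1 d hadj.symm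
          rw [hd2] at hdX; exact absurd hx2 hdX
        · rw [h] at hadj
          rcases hN2 d hadj.symm with h' | h'
          · rw [h'] at hdX; exact absurd hx1 hdX
          · rw [h'] at hdX; exact absurd hx3 hdX
        · exact ⟨v3, hTv3, x, hxm, Or.inl h⟩
        · rw [h] at hadj
          rcases hN4 d hadj.symm with h' | h'
          · rw [h'] at hdX; exact absurd hx3 hdX
          · rw [h'] at hdX; exact absurd hx5 hdX
        · exact ⟨v5, hTv5, x, hxm, Or.inl h⟩
        · rw [h] at hadj
          rcases hN6 d hadj.symm with h' | h'
          · rw [h'] at hdX; exact absurd hx5 hdX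
          · rw [h'] at hdX; exact absurd hx7 hdX
        · rw [h] at hadj
          have hd6 := hN7 d hadj.symm
          rw [hd6] at hdX; exact absurd hx6 hdX
      · exact ⟨v3, hTv3, x, hxm, Or.inr hx3'⟩
      · exact ⟨v5, hTv5, x, hxm, Or.inr hx5'⟩
    · exact ⟨d, Set.mem_union_right _ ⟨hdD, hdU⟩, x, hxm, hxd⟩
  have hw3sub : ({v1, v7, w} : Set V) ⊆ D₂ := by
    intro z hz
    simp only [Set.mem_insert_iff, Set.mem_singleton_iff] at hz
    rcases hz with h | h | h
    · rw [h]; exact hv1D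
    · rw [h]; exact hv7D
    · rw [h]; exact hwD
  have hnm1 : v1 ∉ ({v7, w} : Set V) := by
    simp only [Set.mem_insert_iff, Set.mem_singleton_iff]
    push_neg
    exact ⟨ne17, fun hh => hwne1 hh.symm⟩
  have hnm7 : v7 ∉ ({w} : Set V) := by
    simp only [Set.mem_singleton_iff]
    exact fun hh => hwne7 hh.symm
  have hw3card : ({v1, v7, w} : Set V).ncard = 3 := by
    rw [Set.ncard_insert_of_notMem hnm1 (Set.toFinite _),
      Set.ncard_insert_of_notMem hnm7 (Set.toFinite _), Set.ncard_singleton]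
  have hfar_sub : D₂ ∩ Uᶜ ⊆ D₂ \ {v1, v7, w} := by
    rintro z ⟨hzD, hzU⟩
    refine ⟨hzD, ?_⟩
    simp only [Set.mem_insert_iff, Set.mem_singleton_iff]
    push_neg
    refine ⟨?_, ?_, ?_⟩
    · rintro rfl; exact hzU (hXU hx1)
    · rintro rfl; exact hzU (hXU hx7)
    · rintro rfl; exact hzU hwU
  have hcard1 : (D₂ ∩ Uᶜ).ncard ≤ D₂.ncard - 3 := by
    have h1 := Set.ncard_le_ncard hfar_sub (Set.toFinite _)
    have h2 := Set.ncard_diff hw3sub (Set.toFinite _)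
    omega
  have hcard2 : 3 ≤ D₂.ncard := by
    have := Set.ncard_le_ncard hw3sub (Set.toFinite _)
    omega
  have hTcard : T.ncard ≤ D₂.ncard - 1 := by
    have h1 : T.ncard ≤ ({v3, v5} : Set V).ncard + (D₂ ∩ Uᶜ).ncard := by
      rw [hT]; exact Set.ncard_union_le _ _
    have h2 : ({v3, v5} : Set V).ncard ≤ 2 := by
      have := Set.ncard_insert_le v3 ({v5} : Set V)
      simpa using this
    omega
  obtain ⟨D₁, hD₁T, hD₁min⟩ :=
    exists_minimal_vedom_subset G T.ncard T le_rfl hTdom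
  have hD₁card : D₁.ncard ≤ T.ncard := Set.ncard_le_ncard hD₁T (Set.toFinite _)
  have heq := hwell D₁ D₂ hD₁min hD₂min
  omega

/-- If `G` has an induced path `v₁v₂v₃v₄v₅v₆v₇` with `d(v₁) = d(v₇) = 1` and
`d(v₂) = d(v₄) = d(v₆) = 2`, then `G` is not well-ve-dominated. -/
theorem stmt_8 {V : Type*} [Fintype V] (G : SimpleGraph V)
    (f : SimpleGraph.pathGraph 7 ↪g G)
    (hd1 : (G.neighborSet (f 0)).ncard = 1)
    (hd7 : (G.neighborSet (f 6)).ncard = 1)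
    (hd2 : (G.neighborSet (f 1)).ncard = 2)
    (hd4 : (G.neighborSet (f 3)).ncard = 2)
    (hd6 : (G.neighborSet (f 5)).ncard = 2) :
    ¬ WellVEDominated G := by
  have hinj : Function.Injective f := f.injective
  have hne : ∀ i j : Fin 7, i ≠ j → f i ≠ f j := fun i j hij h => hij (hinj h)
  have adj : ∀ i j : Fin 7, (i : ℕ) + 1 = (j : ℕ) → G.Adj (f i) (f j) := by
    intro i j h
    exact f.map_adj_iff.2 (SimpleGraph.pathGraph_adj.mpr (Or.inl h))
  have a01 : G.Adj (f 0) (f 1) := adj 0 1 (by decide)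
  have a12 : G.Adj (f 1) (f 2) := adj 1 2 (by decide)
  have a23 : G.Adj (f 2) (f 3) := adj 2 3 (by decide)
  have a34 : G.Adj (f 3) (f 4) := adj 3 4 (by decide)
  have a45 : G.Adj (f 4) (f 5) := adj 4 5 (by decide)
  have a56 : G.Adj (f 5) (f 6) := adj 5 6 (by decide)
  have N0 : G.neighborSet (f 0) = {f 1} := by
    refine (Set.eq_of_subset_of_ncard_le ?_ ?_ (Set.toFinite _)).symm
    · rw [Set.singleton_subset_iff]; exact a01
    · rw [hd1, Set.ncard_singleton]
  have N6 : G.neighborSet (f 6) = {f 5} := by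
    refine (Set.eq_of_subset_of_ncard_le ?_ ?_ (Set.toFinite _)).symm
    · rw [Set.singleton_subset_iff]; exact a56.symm
    · rw [hd7, Set.ncard_singleton]
  have N1 : G.neighborSet (f 1) = {f 0, f 2} := by
    refine (Set.eq_of_subset_of_ncard_le ?_ ?_ (Set.toFinite _)).symm
    · intro z hz
      simp only [Set.mem_insert_iff, Set.mem_singleton_iff] at hz
      rcases hz with h | h
      · rw [h]; exact a01.symm
      · rw [h]; exact a12
    · rw [hd2, Set.ncard_pair (hne 0 2 (by decide))]
  have N3 : G.neighborSet (f 3) = {f 2, f 4} := by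
    refine (Set.eq_of_subset_of_ncard_le ?_ ?_ (Set.toFinite _)).symm
    · intro z hz
      simp only [Set.mem_insert_iff, Set.mem_singleton_iff] at hz
      rcases hz with h | h
      · rw [h]; exact a23.symm
      · rw [h]; exact a34
    · rw [hd4, Set.ncard_pair (hne 2 4 (by decide))]
  have N5 : G.neighborSet (f 5) = {f 4, f 6} := by
    refine (Set.eq_of_subset_of_ncard_le ?_ ?_ (Set.toFinite _)).symm
    · intro z hz
      simp only [Set.mem_insert_iff, Set.mem_singleton_iff] at hz
      rcases hz with h | h
      · rw [h]; exact a45.symm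
      · rw [h]; exact a56
    · rw [hd6, Set.ncard_pair (hne 4 6 (by decide))]
  exact aux_p7 G (f 0) (f 1) (f 2) (f 3) (f 4) (f 5) (f 6)
    a01 a12 a23 a34 a45 a56 N0 N1 N3 N5 N6
    (hne 0 2 (by decide)) (hne 0 3 (by decide)) (hne 0 4 (by decide))
    (hne 0 5 (by decide)) (hne 0 6 (by decide)) (hne 1 3 (by decide))
    (hne 1 6 (by decide)) (hne 2 5 (by decide)) (hne 2 6 (by decide))
    (hne 3 5 (by decide)) (hne 3 6 (by decide)) (hne 4 6 (by decide))
end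

section
/- Let T be a reduced well-ve-dominated tree with at least 6 vertices such that γ_ve(T) = 2. Then T is isomorphic to the path P_6 on six vertices. -/
open SimpleGraph

set_option linter.unusedSectionVars false
set_option maxHeartbeats 1000000

namespace StmtAux

variable {V : Type*} [Fintype V] {T : SimpleGraph V}

lemma vedom_mk {z u w : V} (h : u = z ∨ T.Adj z u) : VEDominates T z s(u, w) :=
  ⟨u, by simp, h⟩

lemma vedom_mk' {z u w : V} (h : w = z ∨ T.Adj z w) : VEDominates T z s(u, w) :=
  ⟨w, by simp, h⟩

lemma vedom_elim {z u w : V} (h : VEDominates T z s(u, w)) :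
    (u = z ∨ T.Adj z u) ∨ (w = z ∨ T.Adj z w) := by
  obtain ⟨x, hx, h⟩ := h
  rw [Sym2.mem_iff] at hx
  rcases hx with rfl | rfl
  · exact Or.inl h
  · exact Or.inr h

lemma univ_vedom : IsVEDomSet T Set.univ := by
  intro e he
  induction e with
  | _ u w => exact ⟨u, Set.mem_univ u, vedom_mk (Or.inl rfl)⟩

lemma exists_vedom_pair (hgamma : gammaVE T = 2) :
    ∃ D : Set V, IsVEDomSet T D ∧ D.ncard = 2 := by
  have hne : {n | ∃ D : Set V, IsVEDomSet T D ∧ D.ncard = n}.Nonempty :=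
    ⟨(Set.univ : Set V).ncard, Set.univ, univ_vedom, rfl⟩
  have := Nat.sInf_mem hne
  rw [show sInf {n | ∃ D : Set V, IsVEDomSet T D ∧ D.ncard = n} = gammaVE T from rfl,
    hgamma] at this
  exact this

lemma two_le_vedom (hgamma : gammaVE T = 2) {D : Set V} (hD : IsVEDomSet T D) :
    2 ≤ D.ncard := by
  have : gammaVE T ≤ D.ncard := Nat.sInf_le ⟨D, hD, rfl⟩
  omega

lemma pair_minimal (hgamma : gammaVE T = 2) {D : Set V} (hD : IsVEDomSet T D)
    (h2 : D.ncard = 2) : IsMinimalVEDomSet T D := by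
  refine ⟨hD, fun D' hss hD' => ?_⟩
  have hfin : D.Finite := Set.toFinite D
  have : D'.ncard < D.ncard := Set.ncard_lt_ncard hss hfin
  have := two_le_vedom hgamma hD'
  omega

lemma exists_minimal_subset {D : Set V} (hD : IsVEDomSet T D) :
    ∃ D' ⊆ D, IsMinimalVEDomSet T D' := by
  classical
  obtain ⟨n, hn⟩ : ∃ n, D.ncard = n := ⟨_, rfl⟩
  induction n using Nat.strong_induction_on generalizing D with
  | _ n ih =>
    by_cases hmin : IsMinimalVEDomSet T D
    · exact ⟨D, subset_rfl, hmin⟩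
    · rw [IsMinimalVEDomSet, not_and] at hmin
      push_neg at hmin
      obtain ⟨D', hss, hD'⟩ := hmin hD
      have hlt : D'.ncard < n := hn ▸ Set.ncard_lt_ncard hss (Set.toFinite D)
      obtain ⟨D'', h1, h2⟩ := ih D'.ncard hlt hD' rfl
      exact ⟨D'', h1.trans hss.subset, h2⟩

lemma minimal_ncard_two (hW : WellVEDominated T) (hgamma : gammaVE T = 2)
    {D : Set V} (hD : IsMinimalVEDomSet T D) : D.ncard = 2 := by
  obtain ⟨P, hP, hP2⟩ := exists_vedom_pair hgamma
  exact (hW D P hD (pair_minimal hgamma hP hP2)).trans hP2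

/-- every ve-dominating set contains a ve-dominating pair -/
lemma pair_of_vedom (hW : WellVEDominated T) (hgamma : gammaVE T = 2)
    {D : Set V} (hD : IsVEDomSet T D) :
    ∃ x y : V, x ≠ y ∧ x ∈ D ∧ y ∈ D ∧ IsVEDomSet T {x, y} := by
  obtain ⟨D', hss, hmin⟩ := exists_minimal_subset hD
  have h2 := minimal_ncard_two hW hgamma hmin
  obtain ⟨x, y, hxy, rfl⟩ := Set.ncard_eq_two.mp h2
  exact ⟨x, y, hxy, hss (by simp), hss (by simp), hmin.1⟩

/-- The key killing tool: a ve-dominating set with three "necessary" vertices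
contradicts well-ve-domination with γ = 2. -/
lemma kill3 (hW : WellVEDominated T) (hgamma : gammaVE T = 2)
    {D : Set V} (hD : IsVEDomSet T D) (x₁ x₂ x₃ : V)
    (h12 : x₁ ≠ x₂) (h13 : x₁ ≠ x₃) (h23 : x₂ ≠ x₃)
    (e₁ e₂ e₃ : Sym2 V) (he₁ : e₁ ∈ T.edgeSet) (he₂ : e₂ ∈ T.edgeSet)
    (he₃ : e₃ ∈ T.edgeSet)
    (hu₁ : ∀ u ∈ D, VEDominates T u e₁ → u = x₁)
    (hu₂ : ∀ u ∈ D, VEDominates T u e₂ → u = x₂)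
    (hu₃ : ∀ u ∈ D, VEDominates T u e₃ → u = x₃) : False := by
  obtain ⟨D', hss, hmin⟩ := exists_minimal_subset hD
  have h2 := minimal_ncard_two hW hgamma hmin
  have hx1 : x₁ ∈ D' := by
    obtain ⟨u, hu, hdom⟩ := hmin.1 e₁ he₁
    exact hu₁ u (hss hu) hdom ▸ hu
  have hx2 : x₂ ∈ D' := by
    obtain ⟨u, hu, hdom⟩ := hmin.1 e₂ he₂
    exact hu₂ u (hss hu) hdom ▸ hu
  have hx3 : x₃ ∈ D' := by
    obtain ⟨u, hu, hdom⟩ := hmin.1 e₃ he₃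
    exact hu₃ u (hss hu) hdom ▸ hu
  have hsub : ({x₁, x₂, x₃} : Set V) ⊆ D' := by
    intro z hz
    rcases hz with rfl | rfl | rfl <;> assumption
  have h3 : ({x₁, x₂, x₃} : Set V).ncard = 3 := by
    rw [Set.ncard_insert_of_notMem (by simp [h12, h13]),
      Set.ncard_insert_of_notMem (by simp [h23]), Set.ncard_singleton]
  have := Set.ncard_le_ncard hsub (Set.toFinite D')
  omega


lemma path_unique (hT : T.IsTree) {a b : V} (p q : T.Walk a b)
    (hp : p.IsPath) (hq : q.IsPath) : p = q := by
  have := (isAcyclic_iff_path_unique.mp hT.IsAcyclic) (⟨p, hp⟩ : T.Path a b) ⟨q, hq⟩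
  exact congrArg Subtype.val this

lemma getVert_inj {a b : V} {p : T.Walk a b} (hp : p.IsPath) :
    ∀ i, i ≤ p.length → ∀ j, j ≤ p.length → p.getVert i = p.getVert j → i = j := by
  induction p with
  | nil => intro i hi j hj _; simp [Walk.length_nil] at hi hj; omega
  | @cons a c b h q ih =>
    rw [Walk.cons_isPath_iff] at hp
    intro i hi j hj he
    rw [Walk.length_cons] at hi hj
    match i, j with
    | 0, 0 => rfl
    | 0, j+1 =>
      exfalso
      rw [Walk.getVert_zero, Walk.getVert_cons_succ] at he
      exact hp.2 (Walk.mem_support_iff_exists_getVert.mpr ⟨j, he.symm, by omega⟩)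
    | i+1, 0 =>
      exfalso
      rw [Walk.getVert_zero, Walk.getVert_cons_succ] at he
      exact hp.2 (Walk.mem_support_iff_exists_getVert.mpr ⟨i, he, by omega⟩)
    | i+1, j+1 =>
      rw [Walk.getVert_cons_succ, Walk.getVert_cons_succ] at he
      have := ih hp.1 i (by omega) j (by omega) he
      omega

lemma walk_closed {S : Set V} (hcl : ∀ x ∈ S, ∀ y, T.Adj x y → y ∈ S) :
    ∀ {a b : V} (_ : T.Walk a b), a ∈ S → b ∈ S := by
  intro a b w
  induction w with
  | nil => exact id
  | cons h p ih => intro ha; exact ih (hcl _ ha _ h)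

lemma closed_cover (hT : T.IsTree) {S : Set V} {a : V} (ha : a ∈ S)
    (hcl : ∀ x ∈ S, ∀ y, T.Adj x y → y ∈ S) (x : V) : x ∈ S := by
  obtain ⟨w⟩ := hT.isConnected.preconnected a x
  exact walk_closed hcl w ha

lemma card_le_of_cover {m : ℕ} (f : ℕ → V) (hcov : ∀ x : V, ∃ t, t ≤ m ∧ x = f t) :
    Fintype.card V ≤ m + 1 := by
  classical
  have hsub : (Finset.univ : Finset V) ⊆ (Finset.range (m+1)).image f := by
    intro x _
    obtain ⟨t, ht, rfl⟩ := hcov x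
    exact Finset.mem_image.mpr ⟨t, Finset.mem_range.mpr (by omega), rfl⟩
  calc Fintype.card V = (Finset.univ : Finset V).card := rfl
    _ ≤ ((Finset.range (m+1)).image f).card := Finset.card_le_card hsub
    _ ≤ (Finset.range (m+1)).card := Finset.card_image_le
    _ = m + 1 := Finset.card_range _

lemma exists_adj (hT : T.IsTree) (hcard : 2 ≤ Fintype.card V) (x : V) :
    ∃ z, T.Adj x z := by
  obtain ⟨y, hy⟩ := Fintype.exists_ne_of_one_lt_card (by omega) x
  obtain ⟨w⟩ := hT.isConnected.preconnected x y
  cases w with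
  | nil => exact absurd rfl hy
  | cons h _ => exact ⟨_, h⟩




lemma isPath2 {a x b : V} (h1 : T.Adj a x) (h2 : T.Adj x b) (hab : a ≠ b) :
    (Walk.cons h1 (Walk.cons h2 Walk.nil)).IsPath := by
  rw [Walk.isPath_def]
  simp [h1.ne, hab, h2.ne]

lemma isPath3 {a x y b : V} (h1 : T.Adj a x) (h2 : T.Adj x y) (h3 : T.Adj y b)
    (hab : a ≠ b) (hay : a ≠ y) (hxb : x ≠ b) :
    (Walk.cons h1 (Walk.cons h2 (Walk.cons h3 Walk.nil))).IsPath := by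
  rw [Walk.isPath_def]
  simp [h1.ne, h2.ne, h3.ne, hab, hay, hxb]

section Chain
variable (v : ℕ → V) (k : ℕ)

def seg (hadj : ∀ i, i < k → T.Adj (v i) (v (i+1))) :
    (n i : ℕ) → i + n ≤ k → T.Walk (v i) (v (i + n))
  | 0, _, _ => Walk.nil
  | n+1, i, h => (seg hadj n i (by omega)).concat (hadj (i+n) (by omega))

variable (hadj : ∀ i, i < k → T.Adj (v i) (v (i+1)))
  (hinj : ∀ i, i ≤ k → ∀ j, j ≤ k → v i = v j → i = j)

lemma length_seg : ∀ n i h, (seg v k hadj n i h).length = n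
  | 0, _, _ => rfl
  | n+1, i, h => by
    rw [seg, Walk.length_concat, length_seg n i]

lemma mem_support_seg : ∀ n i h (x : V),
    x ∈ (seg v k hadj n i h).support ↔ ∃ t, t ≤ n ∧ x = v (i + t)
  | 0, i, h, x => by
    constructor
    · intro hx
      simp [seg, Walk.support_nil] at hx
      exact ⟨0, le_refl 0, hx⟩
    · rintro ⟨t, ht, rfl⟩
      interval_cases t
      simp [seg, Walk.support_nil]
  | n+1, i, h, x => by
    rw [seg, Walk.support_concat]
    rw [List.mem_append, List.mem_singleton,
      mem_support_seg n i _ x]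
    constructor
    · rintro (⟨t, ht, rfl⟩ | rfl)
      · exact ⟨t, by omega, rfl⟩
      · exact ⟨n+1, le_refl _, rfl⟩
    · rintro ⟨t, ht, rfl⟩
      rcases Nat.lt_or_ge t (n+1) with h' | h'
      · exact Or.inl ⟨t, by omega, rfl⟩
      · have : t = n + 1 := by omega
        subst this; exact Or.inr rfl

include hadj hinj in
lemma isPath_seg : ∀ n i h, (seg v k hadj n i h).IsPath
  | 0, _, _ => Walk.IsPath.nil
  | n+1, i, h => by
    rw [seg, Walk.isPath_def, Walk.support_concat]
    rw [List.nodup_append']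
    refine ⟨(Walk.isPath_def _).mp (isPath_seg n i (by omega)), List.nodup_singleton _, ?_⟩
    intro x hx hx'
    rw [List.mem_singleton] at hx'
    subst hx'
    rw [mem_support_seg] at hx
    obtain ⟨t, ht, he⟩ := hx
    have := hinj (i+(n+1)) (by omega) (i+t) (by omega) he
    omega

def segc (i j : ℕ) (hij : i ≤ j) (hj : j ≤ k) : T.Walk (v i) (v j) :=
  (seg v k hadj (j-i) i (by omega)).copy rfl (congrArg v (by omega))

lemma length_segc (i j : ℕ) (hij : i ≤ j) (hj : j ≤ k) :
    (segc v k hadj i j hij hj).length = j - i := by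
  rw [segc, Walk.length_copy, length_seg]

include hadj hinj in
lemma isPath_segc (i j : ℕ) (hij : i ≤ j) (hj : j ≤ k) :
    (segc v k hadj i j hij hj).IsPath := by
  rw [segc, Walk.isPath_copy]
  exact isPath_seg v k hadj hinj _ _ _

lemma mem_support_segc (i j : ℕ) (hij : i ≤ j) (hj : j ≤ k) (x : V) :
    x ∈ (segc v k hadj i j hij hj).support ↔ ∃ t, i ≤ t ∧ t ≤ j ∧ x = v t := by
  rw [segc, Walk.support_copy, mem_support_seg]
  constructor
  · rintro ⟨t, ht, rfl⟩; exact ⟨i + t, by omega, by omega, rfl⟩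
  · rintro ⟨t, ht1, ht2, rfl⟩
    exact ⟨t - i, by omega, by rw [show i + (t-i) = t by omega]⟩

include hadj hinj in
lemma chord (hT : T.IsTree) {i j : ℕ} (hij : i < j) (hj : j ≤ k)
    (h : T.Adj (v i) (v j)) : j = i + 1 := by
  have hp2 : (Walk.cons h Walk.nil).IsPath := by
    simp only [Walk.isPath_def, Walk.support_cons, Walk.support_nil]
    simp [h.ne]
  have heq := path_unique hT (segc v k hadj i j (by omega) hj) (Walk.cons h Walk.nil)
    (isPath_segc v k hadj hinj i j (by omega) hj) hp2
  have hl := congrArg Walk.length heq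
  rw [length_segc] at hl
  simp only [Walk.length_cons, Walk.length_nil] at hl
  omega

include hadj hinj in
lemma cone (hT : T.IsTree) {x : V} {i j : ℕ} (hij : i < j) (hj : j ≤ k)
    (h1 : T.Adj x (v i)) (h2 : T.Adj x (v j)) : j = i + 2 ∧ x = v (i + 1) := by
  have hij' : v i ≠ v j := fun e => by have := hinj i (by omega) j hj e; omega
  have hp2 : (Walk.cons h1.symm (Walk.cons h2 Walk.nil)).IsPath := by
    simp only [Walk.isPath_def, Walk.support_cons, Walk.support_nil]
    simp [h1.ne, h2.ne, hij', Ne.symm h1.ne]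
  have heq := path_unique hT (segc v k hadj i j (by omega) hj)
    (Walk.cons h1.symm (Walk.cons h2 Walk.nil))
    (isPath_segc v k hadj hinj i j (by omega) hj) hp2
  have hl := congrArg Walk.length heq
  rw [length_segc] at hl
  simp only [Walk.length_cons, Walk.length_nil] at hl
  have hj2 : j = i + 2 := by omega
  refine ⟨hj2, ?_⟩
  have hmem : v (i+1) ∈ (Walk.cons h1.symm (Walk.cons h2 Walk.nil)).support := by
    rw [← heq, mem_support_segc]
    exact ⟨i+1, by omega, by omega, rfl⟩
  simp only [Walk.support_cons, Walk.support_nil, List.mem_cons,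
    List.mem_singleton] at hmem
  rcases hmem with he | he | he | he
  · exact absurd (hinj (i+1) (by omega) i (by omega) he) (by omega)
  · exact he.symm
  · exact absurd (hinj (i+1) (by omega) j hj he) (by omega)
  · simp at he

include hadj hinj in
lemma ext0 (hT : T.IsTree)
    (hmax : ∀ (a b : V) (q : T.Walk a b), q.IsPath → q.length ≤ k)
    (hk : 1 ≤ k) {x : V} (h : T.Adj x (v 0)) : x = v 1 := by
  classical
  by_cases hx : ∃ t, t ≤ k ∧ x = v t
  · obtain ⟨t, ht, rfl⟩ := hx
    rcases Nat.eq_zero_or_pos t with rfl | ht0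
    · exact absurd rfl h.ne
    · have := chord v k hadj hinj hT (show 0 < t by omega) ht h.symm
      have ht1 : t = 1 := by omega
      rw [ht1]
  · exfalso
    push_neg at hx
    have hp : (Walk.cons h (segc v k hadj 0 k (by omega) le_rfl)).IsPath := by
      rw [Walk.cons_isPath_iff]
      refine ⟨isPath_segc v k hadj hinj 0 k (by omega) le_rfl, ?_⟩
      rw [mem_support_segc]
      rintro ⟨t, _, ht, rfl⟩
      exact hx t ht rfl
    have := hmax _ _ _ hp
    rw [Walk.length_cons, length_segc] at this
    omega

include hadj hinj in
lemma nbr1 (hT : T.IsTree) (hred : Reduced T)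
    (hmax : ∀ (a b : V) (q : T.Walk a b), q.IsPath → q.length ≤ k)
    (hk : 2 ≤ k) {x : V} (h : T.Adj x (v 1)) : x = v 0 ∨ x = v 2 := by
  classical
  by_cases hx : ∃ t, t ≤ k ∧ x = v t
  · obtain ⟨t, ht, rfl⟩ := hx
    rcases Nat.lt_trichotomy t 1 with ht1 | rfl | ht1
    · have ht0 : t = 0 := by omega
      exact Or.inl (by rw [ht0])
    · exact absurd rfl h.ne
    · have := chord v k hadj hinj hT (show 1 < t by omega) ht h.symm
      exact Or.inr (by rw [show t = 2 by omega])
  · exfalso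
    push_neg at hx
    have hnx : ∀ z, T.Adj x z → z = v 1 := by
      intro z hz
      by_cases hz' : ∃ s, s ≤ k ∧ z = v s
      · obtain ⟨s, hs, rfl⟩ := hz'
        rcases Nat.lt_trichotomy s 1 with hs1 | rfl | hs1
        · have hs0 : s = 0 := by omega
          subst hs0
          have := cone v k hadj hinj hT (i := 0) (j := 1) (by omega) (by omega) hz h
          omega
        · rfl
        · have := cone v k hadj hinj hT (show 1 < s by omega) hs h hz
          exact absurd this.2 (hx 2 hk)
      · exfalso
        push_neg at hz'
        have hp : (Walk.cons hz.symm (Walk.cons h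
            (segc v k hadj 1 k (by omega) le_rfl))).IsPath := by
          rw [Walk.cons_isPath_iff, Walk.cons_isPath_iff]
          refine ⟨⟨isPath_segc v k hadj hinj 1 k (by omega) le_rfl, ?_⟩, ?_⟩
          · rw [mem_support_segc]
            rintro ⟨t, _, ht, rfl⟩
            exact hx t ht rfl
          · rw [Walk.support_cons, List.mem_cons]
            rintro (rfl | hmem)
            · exact hz.ne rfl
            · rw [mem_support_segc] at hmem
              obtain ⟨t, _, ht, rfl⟩ := hmem
              exact hz' t ht rfl
        have := hmax _ _ _ hp
        rw [Walk.length_cons, Walk.length_cons, length_segc] at this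
        omega
    have hns : T.neighborSet x = T.neighborSet (v 0) := by
      ext z
      simp only [mem_neighborSet]
      constructor
      · intro hz
        rw [hnx z hz]
        exact hadj 0 (by omega)
      · intro hz
        have := ext0 v k hadj hinj hT hmax (by omega) hz.symm
        rw [this]
        exact h
    exact hx 0 (by omega) (hred x (v 0) hns)

include hadj hinj in
lemma L1 (hT : T.IsTree) (hW : WellVEDominated T) (hgamma : gammaVE T = 2)
    (hmax : ∀ (a b : V) (q : T.Walk a b), q.IsPath → q.length ≤ k)
    (hk : 1 ≤ k) :
    ∃ y : V, ¬(y = v 1 ∨ T.Adj (v 1) y) ∧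
      ∀ u w : V, T.Adj u w →
        VEDominates T (v 0) s(u, w) ∨ VEDominates T y s(u, w) := by
  classical
  set D : Set V := insert (v 0) {x | ¬(x = v 1 ∨ T.Adj (v 1) x)} with hD
  have hmemD : ∀ z : V, z ∈ D ↔ z = v 0 ∨ ¬(z = v 1 ∨ T.Adj (v 1) z) := by
    intro z
    simp [hD]
  have hDdom : IsVEDomSet T D := by
    intro e he
    induction e with
    | _ u w =>
      rw [mem_edgeSet] at he
      by_cases hu : u = v 1 ∨ T.Adj (v 1) u
      · by_cases hw : w = v 1 ∨ T.Adj (v 1) w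
        · rcases hu with rfl | hu
          · exact ⟨v 0, (hmemD _).mpr (Or.inl rfl),
              vedom_mk (Or.inr (hadj 0 (by omega)))⟩
          rcases hw with rfl | hw
          · exact ⟨v 0, (hmemD _).mpr (Or.inl rfl),
              vedom_mk' (Or.inr (hadj 0 (by omega)))⟩
          · exfalso
            have hp1 : (Walk.cons he Walk.nil : T.Walk u w).IsPath := by
              simp [Walk.isPath_def, he.ne]
            have hp2 : (Walk.cons hu.symm (Walk.cons hw Walk.nil) :
                T.Walk u w).IsPath := by
              simp [Walk.isPath_def, he.ne, Ne.symm hu.ne, hw.ne]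
            have heq := path_unique hT _ _ hp1 hp2
            have := congrArg Walk.length heq
            simp at this
        · exact ⟨w, (hmemD _).mpr (Or.inr hw), vedom_mk' (Or.inl rfl)⟩
      · exact ⟨u, (hmemD _).mpr (Or.inr hu), vedom_mk (Or.inl rfl)⟩
  obtain ⟨x, y, hxy, hxD, hyD, hpair⟩ := pair_of_vedom hW hgamma hDdom
  have key : ∀ u ∈ D, VEDominates T u s(v 0, v 1) → u = v 0 := by
    intro u hu hdom
    rcases (hmemD u).mp hu with rfl | hnc
    · rfl
    · rcases vedom_elim hdom with (h0 | h0) | (h1 | h1)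
      · exact h0.symm
      · exact absurd (Or.inl (ext0 v k hadj hinj hT hmax hk h0)) hnc
      · exact absurd (Or.inl h1.symm) hnc
      · exact absurd (Or.inr h1.symm) hnc
  have he01 : s(v 0, v 1) ∈ T.edgeSet := (T.mem_edgeSet).mpr (hadj 0 (by omega))
  obtain ⟨u, hu, hdom⟩ := hpair _ he01
  have hu0 : u = v 0 := by
    rcases hu with rfl | rfl
    · exact key u hxD hdom
    · exact key u hyD hdom
  -- the other element of the pair works
  rcases hu with rfl | rfl
  · subst hu0
    refine ⟨y, ?_, ?_⟩
    · rcases (hmemD y).mp hyD with h | h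
      · exact absurd h.symm (by simpa using hxy)
      · exact h
    · intro a b hab
      obtain ⟨z, hz, hzdom⟩ := hpair s(a, b) ((T.mem_edgeSet).mpr hab)
      rcases hz with rfl | rfl
      · exact Or.inl hzdom
      · exact Or.inr hzdom
  · subst hu0
    refine ⟨x, ?_, ?_⟩
    · rcases (hmemD x).mp hxD with h | h
      · exact absurd h hxy
      · exact h
    · intro a b hab
      obtain ⟨z, hz, hzdom⟩ := hpair s(a, b) ((T.mem_edgeSet).mpr hab)
      rcases hz with rfl | rfl
      · exact Or.inr hzdom
      · exact Or.inl hzdom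

include hadj hinj in
lemma dom_idx (hT : T.IsTree) {t i : ℕ} (ht : t ≤ k) (hi : i + 1 ≤ k)
    (h : VEDominates T (v t) s(v i, v (i+1))) : i ≤ t + 1 ∧ t ≤ i + 2 := by
  have hcase : ∀ s, s ≤ k → (v s = v t ∨ T.Adj (v t) (v s)) →
      (t ≤ s + 1 ∧ s ≤ t + 1) := by
    intro s hs hor
    rcases hor with he | hadj'
    · have := hinj s hs t ht he
      omega
    · rcases Nat.lt_trichotomy t s with h' | rfl | h'
      · have := chord v k hadj hinj hT h' hs hadj'
        omega
      · exact absurd hadj' (T.irrefl)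
      · have := chord v k hadj hinj hT h' ht hadj'.symm
        omega
  rcases vedom_elim h with h' | h'
  · have := hcase i (by omega) h'
    omega
  · have := hcase (i+1) hi h'
    omega

include hadj hinj in
lemma off_dom {y : V} (hoff : ∀ t, t ≤ k → y ≠ v t) {i : ℕ} (hi : i + 1 ≤ k)
    (h : VEDominates T y s(v i, v (i+1))) :
    ∃ s, (s = i ∨ s = i + 1) ∧ T.Adj y (v s) := by
  rcases vedom_elim h with (he | ha) | (he | ha)
  · exact absurd he.symm (hoff i (by omega))
  · exact ⟨i, Or.inl rfl, ha⟩
  · exact absurd he.symm (hoff (i+1) hi)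
  · exact ⟨i+1, Or.inr rfl, ha⟩

include hadj hinj in
lemma notdom0 (hT : T.IsTree)
    (hmax : ∀ (a b : V) (q : T.Walk a b), q.IsPath → q.length ≤ k)
    (hk : 1 ≤ k) {i j : ℕ} (hi : 2 ≤ i) (hj : 2 ≤ j) (hik : i ≤ k) (hjk : j ≤ k)
    (h : VEDominates T (v 0) s(v i, v j)) : False := by
  have hcase : ∀ s, 2 ≤ s → s ≤ k → ¬(v s = v 0 ∨ T.Adj (v 0) (v s)) := by
    intro s hs2 hsk hor
    rcases hor with he | ha
    · have := hinj s hsk 0 (by omega) he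
      omega
    · have := ext0 v k hadj hinj hT hmax hk ha.symm
      have := hinj s hsk 1 (by omega) this
      omega
  rcases vedom_elim h with h' | h'
  · exact hcase i hi hik h'
  · exact hcase j hj hjk h'

include hadj hinj in
lemma star (hT : T.IsTree) (hW : WellVEDominated T) (hgamma : gammaVE T = 2)
    (hmax : ∀ (a b : V) (q : T.Walk a b), q.IsPath → q.length ≤ k)
    (hk : 5 ≤ k) :
    ∃ t, 3 ≤ t ∧ t ≤ 4 ∧ k ≤ t + 2 ∧
      ∀ u w : V, T.Adj u w →
        VEDominates T (v 0) s(u, w) ∨ VEDominates T (v t) s(u, w) := by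
  classical
  obtain ⟨y, hyN, hy⟩ := L1 v k hadj hinj hT hW hgamma hmax (by omega)
  -- y dominates the edge (v 2, v 3)
  have hd1 : VEDominates T y s(v 2, v 3) := by
    rcases hy (v 2) (v 3) (hadj 2 (by omega)) with h | h
    · exact absurd h (fun hh => notdom0 v k hadj hinj hT hmax (by omega)
        (by omega) (by omega) (by omega) (by omega) hh)
    · exact h
  -- y dominates the edge (v (k-1), v k)
  have hlast : T.Adj (v (k-1)) (v (k-1+1)) := hadj (k-1) (by omega)
  have hd2 : VEDominates T y s(v (k-1), v (k-1+1)) := by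
    rcases hy (v (k-1)) (v (k-1+1)) hlast with h | h
    · exact absurd h (fun hh => notdom0 v k hadj hinj hT hmax (by omega)
        (by omega) (by omega) (by omega) (by omega) hh)
    · exact h
  by_cases hon : ∃ t, t ≤ k ∧ y = v t
  · obtain ⟨t, htk, rfl⟩ := hon
    have h1 := dom_idx v k hadj hinj hT htk (by omega) hd1
    have h2 := dom_idx v k hadj hinj hT htk (by omega) hd2
    -- exclude t ∈ {0, 1, 2} using hyN
    have ht0 : t ≠ 0 := by
      rintro rfl
      exact hyN (Or.inr (hadj 0 (by omega)).symm)
    have ht1 : t ≠ 1 := by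
      rintro rfl
      exact hyN (Or.inl rfl)
    have ht2 : t ≠ 2 := by
      rintro rfl
      exact hyN (Or.inr (hadj 1 (by omega)))
    refine ⟨t, by omega, by omega, by omega, ?_⟩
    intro u w huw
    exact hy u w huw
  · exfalso
    push_neg at hon
    obtain ⟨s1, hs1, ha1⟩ := off_dom v k hadj hinj hon (by omega) hd1
    obtain ⟨s2, hs2, ha2⟩ := off_dom v k hadj hinj hon (by omega) hd2
    have hlt : s1 < s2 := by omega
    have := cone v k hadj hinj hT hlt (by omega) ha1 ha2
    exact hon (s1+1) (by omega) this.2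

include hadj hinj in
lemma smallk (hT : T.IsTree) (hred : Reduced T) (hW : WellVEDominated T)
    (hgamma : gammaVE T = 2)
    (hmax : ∀ (a b : V) (q : T.Walk a b), q.IsPath → q.length ≤ k)
    (hcard : 6 ≤ Fintype.card V) (hk : k ≤ 4) : False := by
  classical
  -- mirror chain
  have hadjg : ∀ i, i < k → T.Adj (v (k - i)) (v (k - (i+1))) := by
    intro i hi
    have h := (hadj (k - (i+1)) (by omega)).symm
    rw [show k - (i+1) + 1 = k - i by omega] at h
    exact h
  have hinjg : ∀ i, i ≤ k → ∀ j, j ≤ k → v (k - i) = v (k - j) → i = j := by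
    intro i hi j hj he
    have := hinj (k-i) (by omega) (k-j) (by omega) he
    omega
  have hkcase : k = 0 ∨ k = 1 ∨ k = 2 ∨ k = 3 ∨ k = 4 := by omega
  rcases hkcase with rfl | rfl | rfl | rfl | rfl
  · -- k = 0 : no edges at all from v 0, graph has one vertex
    have hcov : ∀ x : V, ∃ t, t ≤ 0 ∧ x = v t := by
      intro x
      refine ⟨0, le_rfl, ?_⟩
      have := closed_cover hT (S := {z | z = v 0}) rfl ?_ x
      · exact this
      · intro z hz y hy
        exfalso
        have hzy : z = v 0 := hz
        subst hzy
        have hp : (Walk.cons hy Walk.nil).IsPath := by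
          simp [Walk.isPath_def, hy.ne]
        have := hmax _ _ _ hp
        simp at this
    have := card_le_of_cover v hcov
    omega
  · -- k = 1
    have hcov : ∀ x : V, ∃ t, t ≤ 1 ∧ x = v t := by
      intro x
      have := closed_cover hT (S := {z | ∃ t, t ≤ 1 ∧ z = v t})
        ⟨0, by omega, rfl⟩ ?_ x
      · exact this
      · rintro z ⟨t, ht, rfl⟩ y hy
        have ht01 : t = 0 ∨ t = 1 := by omega
        rcases ht01 with rfl | rfl
        · exact ⟨1, le_rfl, ext0 v 1 hadj hinj hT hmax le_rfl hy.symm⟩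
        · have := ext0 (fun i => v (1 - i)) 1 hadjg hinjg hT hmax le_rfl hy.symm
          exact ⟨0, by omega, this⟩
    have := card_le_of_cover v hcov
    omega
  · -- k = 2 : reduced fails
    have h02 : T.neighborSet (v 0) = T.neighborSet (v 2) := by
      ext z
      simp only [mem_neighborSet]
      constructor
      · intro hz
        have hz1 := ext0 v 2 hadj hinj hT hmax (by norm_num) hz.symm
        rw [hz1]
        exact (hadj 1 (by norm_num)).symm
      · intro hz
        have hz1 := ext0 (fun i => v (2 - i)) 2 hadjg hinjg hT hmax
          (by norm_num) hz.symm
        rw [show z = v 1 from hz1]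
        exact hadj 0 (by norm_num)
    have := hinj 0 (by norm_num) 2 (by norm_num) (hred _ _ h02)
    omega
  · -- k = 3
    have hcov : ∀ x : V, ∃ t, t ≤ 3 ∧ x = v t := by
      intro x
      have := closed_cover hT (S := {z | ∃ t, t ≤ 3 ∧ z = v t})
        ⟨0, by omega, rfl⟩ ?_ x
      · exact this
      · rintro z ⟨t, ht, rfl⟩ y hy
        have htc : t = 0 ∨ t = 1 ∨ t = 2 ∨ t = 3 := by omega
        rcases htc with rfl | rfl | rfl | rfl
        · exact ⟨1, by omega, ext0 v 3 hadj hinj hT hmax (by norm_num) hy.symm⟩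
        · rcases nbr1 v 3 hadj hinj hT hred hmax (by norm_num) hy.symm with h | h
          · exact ⟨0, by omega, h⟩
          · exact ⟨2, by omega, h⟩
        · rcases nbr1 (fun i => v (3 - i)) 3 hadjg hinjg hT hred hmax
            (by norm_num) hy.symm with h | h
          · exact ⟨3, by omega, h⟩
          · exact ⟨1, by omega, h⟩
        · have := ext0 (fun i => v (3 - i)) 3 hadjg hinjg hT hmax
            (by norm_num) hy.symm
          exact ⟨2, by omega, this⟩
    have := card_le_of_cover v hcov
    omega
  · -- k = 4
    have hv0 : ∀ z, T.Adj z (v 0) → z = v 1 :=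
      fun z hz => ext0 v 4 hadj hinj hT hmax (by norm_num) hz
    have hv4 : ∀ z, T.Adj z (v 4) → z = v 3 :=
      fun z hz => ext0 (fun i => v (4 - i)) 4 hadjg hinjg hT hmax (by norm_num) hz
    have hv1 : ∀ z, T.Adj z (v 1) → z = v 0 ∨ z = v 2 :=
      fun z hz => nbr1 v 4 hadj hinj hT hred hmax (by norm_num) hz
    have hv3 : ∀ z, T.Adj z (v 3) → z = v 4 ∨ z = v 2 :=
      fun z hz => nbr1 (fun i => v (4 - i)) 4 hadjg hinjg hT hred hmax
        (by norm_num) hz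
    -- (a) no off-chain vertex adjacent to v 3
    have hA : ∀ u, (∀ t, t ≤ 4 → u ≠ v t) → ¬ T.Adj u (v 3) := by
      intro u huoff hu3
      rcases hv3 u hu3 with h | h
      · exact huoff 4 (by omega) h
      · exact huoff 2 (by omega) h
    -- L1
    obtain ⟨y, hyN, hy⟩ := L1 v 4 hadj hinj hT hW hgamma hmax (by norm_num)
    have hy34 : y = v 3 ∨ y = v 4 := by
      have hd : VEDominates T y s(v 3, v 4) := by
        rcases hy (v 3) (v 4) (hadj 3 (by norm_num)) with h | h
        · exact absurd h (fun hh => notdom0 v 4 hadj hinj hT hmax (by norm_num)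
            (by norm_num) (by norm_num) (by norm_num) (by norm_num) hh)
        · exact h
      rcases vedom_elim hd with (he | ha) | (he | ha)
      · exact Or.inl he.symm
      · rcases hv3 y ha with h | h
        · exact Or.inr h
        · exfalso
          exact hyN (Or.inr (h ▸ hadj 1 (by norm_num)))
      · exact Or.inr he.symm
      · exact Or.inl (hv4 y ha)
    -- (b) off-chain u adjacent to v 2 has no off-chain neighbor
    have hB : ∀ u, (∀ t, t ≤ 4 → u ≠ v t) → T.Adj u (v 2) →
        ∀ w, (∀ t, t ≤ 4 → w ≠ v t) → ¬ T.Adj u w := by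
      intro u huoff hu2 w hwoff huw
      rcases hy u w huw with h | h
      · rcases vedom_elim h with (he | ha) | (he | ha)
        · exact huoff 0 (by omega) he
        · exact huoff 1 (by omega) (hv0 u ha.symm)
        · exact hwoff 0 (by omega) he
        · have hw1 : w = v 1 := hv0 w ha.symm
          subst hw1
          rcases hv1 u huw with h' | h'
          · exact huoff 0 (by omega) h'
          · exact huoff 2 (by omega) h'
      · rcases hy34 with rfl | rfl
        · rcases vedom_elim h with (he | ha) | (he | ha)
          · exact huoff 3 (by omega) he
          · exact hA u huoff ha.symm
          · exact hwoff 3 (by omega) he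
          · exact hA w hwoff ha.symm
        · rcases vedom_elim h with (he | ha) | (he | ha)
          · exact huoff 4 (by omega) he
          · exact huoff 3 (by omega) (hv4 u ha.symm)
          · exact hwoff 4 (by omega) he
          · exact hwoff 3 (by omega) (hv4 w ha.symm)
    -- any off-chain neighbor of v 2 is a leaf with neighborhood {v 2}
    have hleaf : ∀ u, (∀ t, t ≤ 4 → u ≠ v t) → T.Adj u (v 2) →
        ∀ z, T.Adj u z → z = v 2 := by
      intro u huoff hu2 z hz
      by_cases hzon : ∃ t, t ≤ 4 ∧ z = v t
      · obtain ⟨t, ht, rfl⟩ := hzon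
        have htc : t = 0 ∨ t = 1 ∨ t = 2 ∨ t = 3 ∨ t = 4 := by omega
        rcases htc with rfl | rfl | rfl | rfl | rfl
        · exact absurd (hv0 u hz) (huoff 1 (by omega))
        · rcases hv1 u hz with h | h
          · exact absurd h (huoff 0 (by omega))
          · exact absurd h (huoff 2 (by omega))
        · rfl
        · exact absurd hz (hA u huoff)
        · exact absurd (hv4 u hz) (huoff 3 (by omega))
      · push_neg at hzon
        exact absurd hz (hB u huoff hu2 z hzon)
    by_cases hEx : ∃ u, (∀ t, t ≤ 4 → u ≠ v t) ∧ T.Adj u (v 2)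
    · obtain ⟨u, huoff, hu2⟩ := hEx
      -- {v 2} is a ve-dominating set : contradiction with γ = 2
      have hcov : ∀ x : V, x = u ∨ ∃ t, t ≤ 4 ∧ x = v t := by
        intro x
        have := closed_cover hT (S := {z | z = u ∨ ∃ t, t ≤ 4 ∧ z = v t})
          (Or.inr ⟨0, by omega, rfl⟩) ?_ x
        · exact this
        · rintro z (rfl | ⟨t, ht, rfl⟩) y hzy
          · exact Or.inr ⟨2, by omega, hleaf z huoff hu2 y hzy⟩
          · have htc : t = 0 ∨ t = 1 ∨ t = 2 ∨ t = 3 ∨ t = 4 := by omega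
            rcases htc with rfl | rfl | rfl | rfl | rfl
            · exact Or.inr ⟨1, by omega, hv0 y hzy.symm⟩
            · rcases hv1 y hzy.symm with h | h
              · exact Or.inr ⟨0, by omega, h⟩
              · exact Or.inr ⟨2, by omega, h⟩
            · by_cases hyon : ∃ t', t' ≤ 4 ∧ y = v t'
              · obtain ⟨t', ht', rfl⟩ := hyon
                exact Or.inr ⟨t', ht', rfl⟩
              · push_neg at hyon
                left
                have hyl : ∀ z', T.Adj y z' → z' = v 2 :=
                  hleaf y hyon hzy.symm
                have hul : ∀ z', T.Adj u z' → z' = v 2 :=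
                  hleaf u huoff hu2
                have : T.neighborSet y = T.neighborSet u := by
                  ext w
                  simp only [mem_neighborSet]
                  constructor
                  · intro hw
                    rw [hyl w hw]
                    exact hu2
                  · intro hw
                    rw [hul w hw]
                    exact hzy.symm
                exact hred y u this
            · rcases hv3 y hzy.symm with h | h
              · exact Or.inr ⟨4, by omega, h⟩
              · exact Or.inr ⟨2, by omega, h⟩
            · exact Or.inr ⟨3, by omega, hv4 y hzy.symm⟩
      have hdom : IsVEDomSet T {v 2} := by
        intro e he
        induction e with
        | _ x z =>
          rw [mem_edgeSet] at he
          refine ⟨v 2, rfl, ?_⟩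
          rcases hcov x with rfl | ⟨t, ht, rfl⟩
          · exact vedom_mk (Or.inr hu2.symm)
          · have htc : t = 0 ∨ t = 1 ∨ t = 2 ∨ t = 3 ∨ t = 4 := by omega
            rcases htc with rfl | rfl | rfl | rfl | rfl
            · refine vedom_mk' (Or.inr ?_)
              rw [hv0 z he.symm]
              exact (hadj 1 (by norm_num)).symm
            · exact vedom_mk (Or.inr (hadj 1 (by norm_num)).symm)
            · exact vedom_mk (Or.inl rfl)
            · exact vedom_mk (Or.inr (hadj 2 (by norm_num)))
            · refine vedom_mk' (Or.inr ?_)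
              rw [hv4 z he.symm]
              exact hadj 2 (by norm_num)
      have := two_le_vedom hgamma hdom
      rw [Set.ncard_singleton] at this
      omega
    · push_neg at hEx
      have hcov : ∀ x : V, ∃ t, t ≤ 4 ∧ x = v t := by
        intro x
        have := closed_cover hT (S := {z | ∃ t, t ≤ 4 ∧ z = v t})
          ⟨0, by omega, rfl⟩ ?_ x
        · exact this
        · rintro z ⟨t, ht, rfl⟩ y hzy
          have htc : t = 0 ∨ t = 1 ∨ t = 2 ∨ t = 3 ∨ t = 4 := by omega
          rcases htc with rfl | rfl | rfl | rfl | rfl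
          · exact ⟨1, by omega, hv0 y hzy.symm⟩
          · rcases hv1 y hzy.symm with h | h
            · exact ⟨0, by omega, h⟩
            · exact ⟨2, by omega, h⟩
          · by_cases hyon : ∃ t', t' ≤ 4 ∧ y = v t'
            · obtain ⟨t', ht', rfl⟩ := hyon
              exact ⟨t', ht', rfl⟩
            · push_neg at hyon
              exact absurd hzy.symm (fun hh => hEx y hyon hh)
          · rcases hv3 y hzy.symm with h | h
            · exact ⟨4, by omega, h⟩
            · exact ⟨2, by omega, h⟩
          · exact ⟨3, by omega, hv4 y hzy.symm⟩
      have := card_le_of_cover v hcov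
      omega

end Chain

lemma k6kill (v : ℕ → V) (hadj : ∀ i, i < 6 → T.Adj (v i) (v (i+1)))
    (hinj : ∀ i, i ≤ 6 → ∀ j, j ≤ 6 → v i = v j → i = j)
    (hT : T.IsTree) (hred : Reduced T) (hW : WellVEDominated T)
    (hgamma : gammaVE T = 2)
    (hmax : ∀ (a b : V) (q : T.Walk a b), q.IsPath → q.length ≤ 6) : False := by
  classical
  have hadjg : ∀ i, i < 6 → T.Adj (v (6 - i)) (v (6 - (i+1))) := by
    intro i hi
    have h := (hadj (6 - (i+1)) (by omega)).symm
    rw [show 6 - (i+1) + 1 = 6 - i by omega] at h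
    exact h
  have hinjg : ∀ i, i ≤ 6 → ∀ j, j ≤ 6 → v (6 - i) = v (6 - j) → i = j := by
    intro i hi j hj he
    have := hinj (6-i) (by omega) (6-j) (by omega) he
    omega
  have hv0 : ∀ z, T.Adj z (v 0) → z = v 1 :=
    fun z hz => ext0 v 6 hadj hinj hT hmax (by norm_num) hz
  have hv6 : ∀ z, T.Adj z (v 6) → z = v 5 :=
    fun z hz => ext0 (fun i => v (6 - i)) 6 hadjg hinjg hT hmax (by norm_num) hz
  have hv1 : ∀ z, T.Adj z (v 1) → z = v 0 ∨ z = v 2 :=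
    fun z hz => nbr1 v 6 hadj hinj hT hred hmax (by norm_num) hz
  have hv5 : ∀ z, T.Adj z (v 5) → z = v 6 ∨ z = v 4 :=
    fun z hz => nbr1 (fun i => v (6 - i)) 6 hadjg hinjg hT hred hmax
      (by norm_num) hz
  have hfar : ∀ i j, i + 2 ≤ j → j ≤ 6 → ¬ T.Adj (v i) (v j) := by
    intro i j h1 h2 ha
    have := chord v 6 hadj hinj hT (show i < j by omega) h2 ha
    omega
  have hne : ∀ i j, i ≤ 6 → j ≤ 6 → i ≠ j → v i ≠ v j := by
    intro i j hi hj hij he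
    exact hij (hinj i hi j hj he)
  obtain ⟨t, ht3, ht4, htk, hst⟩ := star v 6 hadj hinj hT hW hgamma hmax (by norm_num)
  have ht : t = 4 := by omega
  subst ht
  obtain ⟨t', ht3', ht4', htk', hst'⟩ :=
    star (fun i => v (6 - i)) 6 hadjg hinjg hT hW hgamma hmax (by norm_num)
  have ht' : t' = 4 := by omega
  subst ht'
  have hstar2 : ∀ u w : V, T.Adj u w →
      VEDominates T (v 6) s(u, w) ∨ VEDominates T (v 2) s(u, w) :=
    fun u w h => hst' u w h
  -- every off-chain vertex has all neighbours equal to v 3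
  have hOff : ∀ x, (∀ s, s ≤ 6 → x ≠ v s) → ∀ w, T.Adj x w → w = v 3 := by
    intro x hxoff w hxw
    -- first: the star dichotomies for the edge (x, w)
    have hC : T.Adj (v 4) x ∨ T.Adj (v 4) w ∨ w = v 4 := by
      rcases hst x w hxw with h | h
      · exfalso
        rcases vedom_elim h with (he | ha) | (he | ha)
        · exact hxoff 0 (by omega) he
        · exact hxoff 1 (by omega) (hv0 x ha.symm)
        · exact hxoff 1 (by omega) (hv0 x (he ▸ hxw))
        · have := hv0 w ha.symm
          subst this
          rcases hv1 x hxw with h' | h'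
          · exact hxoff 0 (by omega) h'
          · exact hxoff 2 (by omega) h'
      · rcases vedom_elim h with (he | ha) | (he | ha)
        · exact absurd he (hxoff 4 (by omega))
        · exact Or.inl ha
        · exact Or.inr (Or.inr he)
        · exact Or.inr (Or.inl ha)
    have hD : T.Adj (v 2) x ∨ T.Adj (v 2) w ∨ w = v 2 := by
      rcases hstar2 x w hxw with h | h
      · exfalso
        rcases vedom_elim h with (he | ha) | (he | ha)
        · exact hxoff 6 (by omega) he
        · exact hxoff 5 (by omega) (hv6 x ha.symm)
        · exact hxoff 5 (by omega) (hv6 x (he ▸ hxw))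
        · have := hv6 w ha.symm
          subst this
          rcases hv5 x hxw with h' | h'
          · exact hxoff 6 (by omega) h'
          · exact hxoff 4 (by omega) h'
      · rcases vedom_elim h with (he | ha) | (he | ha)
        · exact absurd he (hxoff 2 (by omega))
        · exact Or.inl ha
        · exact Or.inr (Or.inr he)
        · exact Or.inr (Or.inl ha)
    by_cases hwon : ∃ s, s ≤ 6 ∧ w = v s
    · -- w is on the chain; show it must be v 3
      obtain ⟨s, hs, rfl⟩ := hwon
      have hsc : s = 0 ∨ s = 1 ∨ s = 2 ∨ s = 3 ∨ s = 4 ∨ s = 5 ∨ s = 6 := by omega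
      rcases hsc with rfl | rfl | rfl | rfl | rfl | rfl | rfl
      · exact absurd (hv0 x hxw) (hxoff 1 (by omega))
      · rcases hv1 x hxw with h | h
        · exact absurd h (hxoff 0 (by omega))
        · exact absurd h (hxoff 2 (by omega))
      · -- w = v 2 : contradiction via hC
        exfalso
        rcases hC with h | h | h
        · have := cone v 6 hadj hinj hT (show 2 < 4 by omega) (by omega) hxw h.symm
          exact hxoff 3 (by omega) this.2
        · exact hfar 2 4 (by omega) (by omega) h.symm
        · exact hne 2 4 (by omega) (by omega) (by omega) h
      · rfl
      · -- w = v 4 : contradiction via hD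
        exfalso
        rcases hD with h | h | h
        · have := cone v 6 hadj hinj hT (show 2 < 4 by omega) (by omega) h.symm hxw
          exact hxoff 3 (by omega) this.2
        · exact hfar 2 4 (by omega) (by omega) h
        · exact hne 4 2 (by omega) (by omega) (by omega) h
      · rcases hv5 x hxw with h | h
        · exact absurd h (hxoff 6 (by omega))
        · exact absurd h (hxoff 4 (by omega))
      · exact absurd (hv6 x hxw) (hxoff 5 (by omega))
    · -- w off-chain : impossible
      exfalso
      push_neg at hwon
      have hC' : T.Adj (v 4) x ∨ T.Adj (v 4) w := by
        rcases hC with h | h | h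
        · exact Or.inl h
        · exact Or.inr h
        · exact absurd h (hwon 4 (by omega))
      have hD' : T.Adj (v 2) x ∨ T.Adj (v 2) w := by
        rcases hD with h | h | h
        · exact Or.inl h
        · exact Or.inr h
        · exact absurd h (hwon 2 (by omega))
      rcases hC' with hc | hc <;> rcases hD' with hd | hd
      · have := cone v 6 hadj hinj hT (show 2 < 4 by omega) (by omega) hd.symm hc.symm
        exact hxoff 3 (by omega) this.2
      · -- Adj v4 x, Adj v2 w : two different paths from v 2 to x
        have hp1 := isPath2 hd hxw.symm (fun hh => hxoff 2 (by omega) hh.symm)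
        have hp2 := isPath3 (hadj 2 (by norm_num)) (hadj 3 (by norm_num)) hc
          (fun hh => hxoff 2 (by omega) hh.symm)
          (hne 2 4 (by omega) (by omega) (by omega))
          (fun hh => hxoff 3 (by omega) hh.symm)
        have := congrArg Walk.length (path_unique hT _ _ hp1 hp2)
        simp at this
      · -- Adj v4 w, Adj v2 x : two different paths from v 2 to w
        have hp1 := isPath2 hd hxw (fun hh => hwon 2 (by omega) hh.symm)
        have hp2 := isPath3 (hadj 2 (by norm_num)) (hadj 3 (by norm_num)) hc
          (fun hh => hwon 2 (by omega) hh.symm)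
          (hne 2 4 (by omega) (by omega) (by omega))
          (fun hh => hwon 3 (by omega) hh.symm)
        have := congrArg Walk.length (path_unique hT _ _ hp1 hp2)
        simp at this
      · have := cone v 6 hadj hinj hT (show 2 < 4 by omega) (by omega) hd.symm hc.symm
        exact hwon 3 (by omega) this.2
  -- now kill with D = {v 0, v 3, v 6}
  have hDdom : IsVEDomSet T ({v 0, v 3, v 6} : Set V) := by
    intro e he
    induction e with
    | _ u w =>
      rw [mem_edgeSet] at he
      by_cases huon : ∃ s, s ≤ 6 ∧ u = v s
      · obtain ⟨s, hs, rfl⟩ := huon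
        have hsc : s = 0 ∨ s = 1 ∨ s = 2 ∨ s = 3 ∨ s = 4 ∨ s = 5 ∨ s = 6 := by
          omega
        rcases hsc with rfl | rfl | rfl | rfl | rfl | rfl | rfl
        · exact ⟨v 0, by simp, vedom_mk (Or.inl rfl)⟩
        · exact ⟨v 0, by simp, vedom_mk (Or.inr (hadj 0 (by norm_num)))⟩
        · exact ⟨v 3, by simp, vedom_mk (Or.inr (hadj 2 (by norm_num)).symm)⟩
        · exact ⟨v 3, by simp, vedom_mk (Or.inl rfl)⟩
        · exact ⟨v 3, by simp, vedom_mk (Or.inr (hadj 3 (by norm_num)))⟩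
        · exact ⟨v 6, by simp, vedom_mk (Or.inr (hadj 5 (by norm_num)).symm)⟩
        · exact ⟨v 6, by simp, vedom_mk (Or.inl rfl)⟩
      · push_neg at huon
        have := hOff u huon w he
        subst this
        exact ⟨v 3, by simp, vedom_mk' (Or.inl rfl)⟩
  refine kill3 hW hgamma hDdom (v 0) (v 3) (v 6)
    (hne 0 3 (by omega) (by omega) (by omega))
    (hne 0 6 (by omega) (by omega) (by omega))
    (hne 3 6 (by omega) (by omega) (by omega))
    s(v 0, v 1) s(v 2, v 3) s(v 5, v 6)
    ((T.mem_edgeSet).mpr (hadj 0 (by norm_num)))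
    ((T.mem_edgeSet).mpr (hadj 2 (by norm_num)))
    ((T.mem_edgeSet).mpr (hadj 5 (by norm_num))) ?_ ?_ ?_
  · rintro u hu hdom
    rcases hu with rfl | rfl | rfl
    · rfl
    · exfalso
      rcases vedom_elim hdom with (he | ha) | (he | ha)
      · exact hne 0 3 (by omega) (by omega) (by omega) he
      · exact hfar 0 3 (by omega) (by omega) ha.symm
      · exact hne 1 3 (by omega) (by omega) (by omega) he
      · exact hfar 1 3 (by omega) (by omega) ha.symm
    · exfalso
      rcases vedom_elim hdom with (he | ha) | (he | ha)
      · exact hne 0 6 (by omega) (by omega) (by omega) he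
      · exact hfar 0 6 (by omega) (by omega) ha.symm
      · exact hne 1 6 (by omega) (by omega) (by omega) he
      · exact hfar 1 6 (by omega) (by omega) ha.symm
  · rintro u hu hdom
    rcases hu with rfl | rfl | rfl
    · exfalso
      rcases vedom_elim hdom with (he | ha) | (he | ha)
      · exact hne 2 0 (by omega) (by omega) (by omega) he
      · exact hfar 0 2 (by omega) (by omega) ha
      · exact hne 3 0 (by omega) (by omega) (by omega) he
      · exact hfar 0 3 (by omega) (by omega) ha
    · rfl
    · exfalso
      rcases vedom_elim hdom with (he | ha) | (he | ha)
      · exact hne 2 6 (by omega) (by omega) (by omega) he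
      · exact hfar 2 6 (by omega) (by omega) ha.symm
      · exact hne 3 6 (by omega) (by omega) (by omega) he
      · exact hfar 3 6 (by omega) (by omega) ha.symm
  · rintro u hu hdom
    rcases hu with rfl | rfl | rfl
    · exfalso
      rcases vedom_elim hdom with (he | ha) | (he | ha)
      · exact hne 5 0 (by omega) (by omega) (by omega) he
      · exact hfar 0 5 (by omega) (by omega) ha
      · exact hne 6 0 (by omega) (by omega) (by omega) he
      · exact hfar 0 6 (by omega) (by omega) ha
    · exfalso
      rcases vedom_elim hdom with (he | ha) | (he | ha)
      · exact hne 5 3 (by omega) (by omega) (by omega) he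
      · exact hfar 3 5 (by omega) (by omega) ha
      · exact hne 6 3 (by omega) (by omega) (by omega) he
      · exact hfar 3 6 (by omega) (by omega) ha
    · rfl

lemma leafkill (v : ℕ → V) (hadj : ∀ i, i < 5 → T.Adj (v i) (v (i+1)))
    (hinj : ∀ i, i ≤ 5 → ∀ j, j ≤ 5 → v i = v j → i = j)
    (hT : T.IsTree) (hW : WellVEDominated T) (hgamma : gammaVE T = 2)
    (hv0 : ∀ z, T.Adj z (v 0) → z = v 1)
    (hv1 : ∀ z, T.Adj z (v 1) → z = v 0 ∨ z = v 2)
    (hv4 : ∀ z, T.Adj z (v 4) → z = v 5 ∨ z = v 3)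
    (hv5 : ∀ z, T.Adj z (v 5) → z = v 4)
    (hcov : ∀ u : V, (∃ s, s ≤ 5 ∧ u = v s) ∨
      ((∀ s, s ≤ 5 → u ≠ v s) ∧ T.Adj u (v 2) ∧ ∀ z, T.Adj u z → z = v 2) ∨
      ((∀ s, s ≤ 5 → u ≠ v s) ∧ T.Adj u (v 3) ∧ ∀ z, T.Adj u z → z = v 3))
    {x : V} (hxoff : ∀ s, s ≤ 5 → x ≠ v s) (hx2 : T.Adj x (v 2)) : False := by
  classical
  have hfar : ∀ i j, i + 2 ≤ j → j ≤ 5 → ¬ T.Adj (v i) (v j) := by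
    intro i j h1 h2 ha
    have := chord v 5 hadj hinj hT (show i < j by omega) h2 ha
    omega
  have hne : ∀ i j, i ≤ 5 → j ≤ 5 → i ≠ j → v i ≠ v j := by
    intro i j hi hj hij he
    exact hij (hinj i hi j hj he)
  have hDdom : IsVEDomSet T ({v 0, x, v 4} : Set V) := by
    intro e he
    induction e with
    | _ u w =>
      rw [mem_edgeSet] at he
      rcases hcov u with ⟨s, hs, rfl⟩ | ⟨huoff, hu2, hul⟩ | ⟨huoff, hu3, hul⟩
      · have hsc : s = 0 ∨ s = 1 ∨ s = 2 ∨ s = 3 ∨ s = 4 ∨ s = 5 := by omega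
        rcases hsc with rfl | rfl | rfl | rfl | rfl | rfl
        · exact ⟨v 0, by simp, vedom_mk (Or.inl rfl)⟩
        · exact ⟨v 0, by simp, vedom_mk (Or.inr (hadj 0 (by norm_num)))⟩
        · exact ⟨x, by simp, vedom_mk (Or.inr hx2)⟩
        · exact ⟨v 4, by simp, vedom_mk (Or.inr (hadj 3 (by norm_num)).symm)⟩
        · exact ⟨v 4, by simp, vedom_mk (Or.inl rfl)⟩
        · exact ⟨v 4, by simp, vedom_mk (Or.inr (hadj 4 (by norm_num)))⟩
      · have hw2 := hul w he
        subst hw2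
        exact ⟨x, by simp, vedom_mk' (Or.inr hx2)⟩
      · have hw3 := hul w he
        subst hw3
        exact ⟨v 4, by simp, vedom_mk' (Or.inr (hadj 3 (by norm_num)).symm)⟩
  refine kill3 hW hgamma hDdom (v 0) x (v 4)
    (fun h => hxoff 0 (by omega) h.symm)
    (hne 0 4 (by omega) (by omega) (by omega))
    (hxoff 4 (by omega))
    s(v 0, v 1) s(x, v 2) s(v 4, v 5)
    ((T.mem_edgeSet).mpr (hadj 0 (by norm_num)))
    ((T.mem_edgeSet).mpr hx2)
    ((T.mem_edgeSet).mpr (hadj 4 (by norm_num))) ?_ ?_ ?_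
  · rintro u hu hdom
    rcases hu with rfl | rfl | rfl
    · rfl
    · exfalso
      rcases vedom_elim hdom with (he | ha) | (he | ha)
      · exact hxoff 0 (by omega) he.symm
      · exact hxoff 1 (by omega) (hv0 u ha)
      · exact hxoff 1 (by omega) he.symm
      · rcases hv1 u ha with h | h
        · exact hxoff 0 (by omega) h
        · exact hxoff 2 (by omega) h
    · exfalso
      rcases vedom_elim hdom with (he | ha) | (he | ha)
      · exact hne 0 4 (by omega) (by omega) (by omega) he
      · exact hfar 0 4 (by omega) (by omega) ha.symm
      · exact hne 1 4 (by omega) (by omega) (by omega) he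
      · exact hfar 1 4 (by omega) (by omega) ha.symm
  · rintro u hu hdom
    rcases hu with rfl | rfl | rfl
    · exfalso
      rcases vedom_elim hdom with (he | ha) | (he | ha)
      · exact hxoff 0 (by omega) he
      · exact hxoff 1 (by omega) (hv0 x ha.symm)
      · exact hne 2 0 (by omega) (by omega) (by omega) he
      · exact hfar 0 2 (by omega) (by omega) ha
    · rfl
    · exfalso
      rcases vedom_elim hdom with (he | ha) | (he | ha)
      · exact hxoff 4 (by omega) he
      · rcases hv4 x ha.symm with h | h
        · exact hxoff 5 (by omega) h
        · exact hxoff 3 (by omega) h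
      · exact hne 2 4 (by omega) (by omega) (by omega) he
      · exact hfar 2 4 (by omega) (by omega) ha.symm
  · rintro u hu hdom
    rcases hu with rfl | rfl | rfl
    · exfalso
      rcases vedom_elim hdom with (he | ha) | (he | ha)
      · exact hne 4 0 (by omega) (by omega) (by omega) he
      · exact hfar 0 4 (by omega) (by omega) ha
      · exact hne 5 0 (by omega) (by omega) (by omega) he
      · exact hfar 0 5 (by omega) (by omega) ha
    · exfalso
      rcases vedom_elim hdom with (he | ha) | (he | ha)
      · exact hxoff 4 (by omega) he.symm
      · rcases hv4 u ha with h | h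
        · exact hxoff 5 (by omega) h
        · exact hxoff 3 (by omega) h
      · exact hxoff 5 (by omega) he.symm
      · exact hxoff 4 (by omega) (hv5 u ha)
    · rfl

lemma k5path (v : ℕ → V) (hadj : ∀ i, i < 5 → T.Adj (v i) (v (i+1)))
    (hinj : ∀ i, i ≤ 5 → ∀ j, j ≤ 5 → v i = v j → i = j)
    (hT : T.IsTree) (hred : Reduced T) (hW : WellVEDominated T)
    (hgamma : gammaVE T = 2)
    (hmax : ∀ (a b : V) (q : T.Walk a b), q.IsPath → q.length ≤ 5)
    (hcard : 6 ≤ Fintype.card V) :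
    Nonempty (T ≃g SimpleGraph.pathGraph 6) := by
  classical
  have hadjg : ∀ i, i < 5 → T.Adj (v (5 - i)) (v (5 - (i+1))) := by
    intro i hi
    have h := (hadj (5 - (i+1)) (by omega)).symm
    rw [show 5 - (i+1) + 1 = 5 - i by omega] at h
    exact h
  have hinjg : ∀ i, i ≤ 5 → ∀ j, j ≤ 5 → v (5 - i) = v (5 - j) → i = j := by
    intro i hi j hj he
    have := hinj (5-i) (by omega) (5-j) (by omega) he
    omega
  have hv0 : ∀ z, T.Adj z (v 0) → z = v 1 :=
    fun z hz => ext0 v 5 hadj hinj hT hmax (by norm_num) hz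
  have hv5 : ∀ z, T.Adj z (v 5) → z = v 4 :=
    fun z hz => ext0 (fun i => v (5 - i)) 5 hadjg hinjg hT hmax (by norm_num) hz
  have hv1 : ∀ z, T.Adj z (v 1) → z = v 0 ∨ z = v 2 :=
    fun z hz => nbr1 v 5 hadj hinj hT hred hmax (by norm_num) hz
  have hv4 : ∀ z, T.Adj z (v 4) → z = v 5 ∨ z = v 3 :=
    fun z hz => nbr1 (fun i => v (5 - i)) 5 hadjg hinjg hT hred hmax
      (by norm_num) hz
  have hfar : ∀ i j, i + 2 ≤ j → j ≤ 5 → ¬ T.Adj (v i) (v j) := by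
    intro i j h1 h2 ha
    have := chord v 5 hadj hinj hT (show i < j by omega) h2 ha
    omega
  have hne : ∀ i j, i ≤ 5 → j ≤ 5 → i ≠ j → v i ≠ v j := by
    intro i j hi hj hij he
    exact hij (hinj i hi j hj he)
  -- off-chain vertices are adjacent to the chain only at v 2 or v 3
  have hxadj : ∀ x, (∀ s, s ≤ 5 → x ≠ v s) → ∀ s, s ≤ 5 → T.Adj x (v s) →
      s = 2 ∨ s = 3 := by
    intro x hxoff s hs hxs
    have hsc : s = 0 ∨ s = 1 ∨ s = 2 ∨ s = 3 ∨ s = 4 ∨ s = 5 := by omega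
    rcases hsc with rfl | rfl | rfl | rfl | rfl | rfl
    · exact absurd (hv0 x hxs) (hxoff 1 (by omega))
    · rcases hv1 x hxs with h | h
      · exact absurd h (hxoff 0 (by omega))
      · exact absurd h (hxoff 2 (by omega))
    · exact Or.inl rfl
    · exact Or.inr rfl
    · rcases hv4 x hxs with h | h
      · exact absurd h (hxoff 5 (by omega))
      · exact absurd h (hxoff 3 (by omega))
    · exact absurd (hv5 x hxs) (hxoff 4 (by omega))
  -- two off-chain vertices are never adjacent
  obtain ⟨t, ht3, ht4, _, hst⟩ := star v 5 hadj hinj hT hW hgamma hmax (by norm_num)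
  obtain ⟨t', ht3', ht4', _, hst'⟩ :=
    star (fun i => v (5 - i)) 5 hadjg hinjg hT hW hgamma hmax (by norm_num)
  have hoffoff : ∀ x, (∀ s, s ≤ 5 → x ≠ v s) → ∀ w, (∀ s, s ≤ 5 → w ≠ v s) →
      ¬ T.Adj x w := by
    intro x hxoff w hwoff hxw
    have hC : T.Adj (v t) x ∨ T.Adj (v t) w := by
      rcases hst x w hxw with h | h
      · exfalso
        rcases vedom_elim h with (he | ha) | (he | ha)
        · exact hxoff 0 (by omega) he
        · exact hxoff 1 (by omega) (hv0 x ha.symm)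
        · exact hwoff 0 (by omega) he
        · exact hwoff 1 (by omega) (hv0 w ha.symm)
      · rcases vedom_elim h with (he | ha) | (he | ha)
        · exact absurd he (hxoff t (by omega))
        · exact Or.inl ha
        · exact absurd he (hwoff t (by omega))
        · exact Or.inr ha
    have ht34 : t = 3 ∨ t = 4 := by omega
    rcases ht34 with rfl | rfl
    · -- t = 3
      have hD : T.Adj (v (5 - t')) x ∨ T.Adj (v (5 - t')) w := by
        rcases hst' x w hxw with h | h
        · exfalso
          rcases vedom_elim h with (he | ha) | (he | ha)
          · exact hxoff 5 (by omega) he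
          · exact hxoff 4 (by omega) (hv5 x ha.symm)
          · exact hwoff 5 (by omega) he
          · exact hwoff 4 (by omega) (hv5 w ha.symm)
        · rcases vedom_elim h with (he | ha) | (he | ha)
          · exact absurd he (hxoff (5 - t') (by omega))
          · exact Or.inl ha
          · exact absurd he (hwoff (5 - t') (by omega))
          · exact Or.inr ha
      have ht34' : t' = 3 ∨ t' = 4 := by omega
      rcases ht34' with rfl | rfl
      · -- t' = 3, z' = v 2
        have hD2 : T.Adj (v 2) x ∨ T.Adj (v 2) w := hD
        rcases hC with hc | hc <;> rcases hD2 with hd | hd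
        · have := cone v 5 hadj hinj hT (show 2 < 3 by omega) (by omega)
            hd.symm hc.symm
          omega
        · -- Adj v3 x, Adj v2 w : same length paths with different middle
          have hp1 := isPath2 hd hxw.symm (fun hh => hxoff 2 (by omega) hh.symm)
          have hp2 := isPath2 (hadj 2 (by norm_num)) hc
            (fun hh => hxoff 2 (by omega) hh.symm)
          have heq := path_unique hT _ _ hp1 hp2
          have hs := congrArg Walk.support heq
          simp only [Walk.support_cons, Walk.support_nil, List.cons.injEq,
            and_true, true_and] at hs
          exact hwoff 3 (by omega) hs
        · -- Adj v3 w, Adj v2 x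
          have hp1 := isPath2 hd hxw (fun hh => hwoff 2 (by omega) hh.symm)
          have hp2 := isPath2 (hadj 2 (by norm_num)) hc
            (fun hh => hwoff 2 (by omega) hh.symm)
          have heq := path_unique hT _ _ hp1 hp2
          have hs := congrArg Walk.support heq
          simp only [Walk.support_cons, Walk.support_nil, List.cons.injEq,
            and_true, true_and] at hs
          exact hxoff 3 (by omega) hs
        · have := cone v 5 hadj hinj hT (show 2 < 3 by omega) (by omega)
            hd.symm hc.symm
          omega
      · -- t' = 4, z' = v 1 : impossible
        have hD1 : T.Adj (v 1) x ∨ T.Adj (v 1) w := hD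
        rcases hD1 with hd | hd
        · rcases hv1 x hd.symm with h | h
          · exact hxoff 0 (by omega) h
          · exact hxoff 2 (by omega) h
        · rcases hv1 w hd.symm with h | h
          · exact hwoff 0 (by omega) h
          · exact hwoff 2 (by omega) h
    · -- t = 4 : impossible
      rcases hC with hc | hc
      · rcases hv4 x hc.symm with h | h
        · exact hxoff 5 (by omega) h
        · exact hxoff 3 (by omega) h
      · rcases hv4 w hc.symm with h | h
        · exact hwoff 5 (by omega) h
        · exact hwoff 3 (by omega) h
  -- classification of all vertices
  have hcov : ∀ u : V, (∃ s, s ≤ 5 ∧ u = v s) ∨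
      ((∀ s, s ≤ 5 → u ≠ v s) ∧ T.Adj u (v 2) ∧ ∀ z, T.Adj u z → z = v 2) ∨
      ((∀ s, s ≤ 5 → u ≠ v s) ∧ T.Adj u (v 3) ∧ ∀ z, T.Adj u z → z = v 3) := by
    intro u
    by_cases huon : ∃ s, s ≤ 5 ∧ u = v s
    · exact Or.inl huon
    · push_neg at huon
      right
      have hnbr : ∀ z, T.Adj u z → z = v 2 ∨ z = v 3 := by
        intro z hz
        by_cases hzon : ∃ s, s ≤ 5 ∧ z = v s
        · obtain ⟨s, hs, rfl⟩ := hzon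
          rcases hxadj u huon s hs hz with rfl | rfl
          · exact Or.inl rfl
          · exact Or.inr rfl
        · push_neg at hzon
          exact absurd hz (hoffoff u huon z hzon)
      obtain ⟨w, hw⟩ := exists_adj hT (by omega) u
      rcases hnbr w hw with rfl | rfl
      · left
        refine ⟨huon, hw, ?_⟩
        intro z hz
        rcases hnbr z hz with rfl | h
        · rfl
        · exfalso
          rw [h] at hz
          have := cone v 5 hadj hinj hT (show 2 < 3 by omega) (by omega) hw hz
          omega
      · right
        refine ⟨huon, hw, ?_⟩
        intro z hz
        rcases hnbr z hz with h | rfl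
        · exfalso
          rw [h] at hz
          have := cone v 5 hadj hinj hT (show 2 < 3 by omega) (by omega) hz hw
          omega
        · rfl
  -- kill the two possible kinds of off-chain leaves
  have hcovg : ∀ u : V, (∃ s, s ≤ 5 ∧ u = v (5 - s)) ∨
      ((∀ s, s ≤ 5 → u ≠ v (5 - s)) ∧ T.Adj u (v 3) ∧ ∀ z, T.Adj u z → z = v 3) ∨
      ((∀ s, s ≤ 5 → u ≠ v (5 - s)) ∧ T.Adj u (v 2) ∧ ∀ z, T.Adj u z → z = v 2) := by
    intro u
    have hoffeq : (∀ s, s ≤ 5 → u ≠ v s) ↔ (∀ s, s ≤ 5 → u ≠ v (5 - s)) := by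
      constructor
      · intro h s hs
        exact h (5 - s) (by omega)
      · intro h s hs
        have := h (5 - s) (by omega)
        rwa [show 5 - (5 - s) = s by omega] at this
    rcases hcov u with ⟨s, hs, rfl⟩ | ⟨ho, h1, h2⟩ | ⟨ho, h1, h2⟩
    · exact Or.inl ⟨5 - s, by omega, by rw [show 5 - (5 - s) = s by omega]⟩
    · exact Or.inr (Or.inr ⟨hoffeq.mp ho, h1, h2⟩)
    · exact Or.inr (Or.inl ⟨hoffeq.mp ho, h1, h2⟩)
  have hnoleaf : ∀ u : V, ∃ s, s ≤ 5 ∧ u = v s := by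
    intro u
    rcases hcov u with h | ⟨ho, h1, _⟩ | ⟨ho, h1, _⟩
    · exact h
    · exact absurd h1 (fun hh =>
        leafkill v hadj hinj hT hW hgamma hv0 hv1 hv4 hv5 hcov ho hh)
    · exfalso
      refine leafkill (fun i => v (5 - i)) hadjg hinjg hT hW hgamma
        hv5 hv4 hv1 hv0 hcovg ?_ h1
      intro s hs
      exact ho (5 - s) (by omega)
  -- build the isomorphism
  have hbij : Function.Bijective (fun i : Fin 6 => v i.val) := by
    constructor
    · intro a b hab
      exact Fin.ext (hinj a.val (by omega) b.val (by omega) hab)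
    · intro u
      obtain ⟨s, hs, rfl⟩ := hnoleaf u
      exact ⟨⟨s, by omega⟩, rfl⟩
  refine ⟨(SimpleGraph.Iso.symm ⟨Equiv.ofBijective _ hbij, ?_⟩ :
    T ≃g SimpleGraph.pathGraph 6)⟩
  intro a b
  simp only [Equiv.ofBijective_apply]
  rw [SimpleGraph.pathGraph_adj]
  constructor
  · intro hadjT
    rcases Nat.lt_trichotomy a.val b.val with h | h | h
    · left
      have := chord v 5 hadj hinj hT h (by omega) hadjT
      omega
    · exact absurd (Fin.ext h : a = b) (by rintro rfl; exact hadjT.ne rfl)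
    · right
      have := chord v 5 hadj hinj hT h (by omega) hadjT.symm
      omega
  · rintro (h | h)
    · have h2 := hadj a.val (by omega)
      rwa [show a.val + 1 = b.val from h] at h2
    · have h2 := hadj b.val (by omega)
      rw [show b.val + 1 = a.val from h] at h2
      exact h2.symm


end StmtAux

open StmtAux

/-- A reduced well-ve-dominated tree on at least 6 vertices with
`γ_ve(T) = 2` is isomorphic to the path `P₆`. -/
theorem stmt_12 {V : Type*} [Fintype V] (T : SimpleGraph V) (hT : T.IsTree)
    (hred : Reduced T) (hW : WellVEDominated T)
    (hcard : 6 ≤ Fintype.card V) (hgamma : gammaVE T = 2) :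
    Nonempty (T ≃g SimpleGraph.pathGraph 6) := by
  classical
  have hV : Nonempty V := Fintype.card_pos_iff.mp (by omega)
  obtain ⟨a0⟩ := hV
  have hSne : ({n | ∃ (a b : V) (p : T.Walk a b), p.IsPath ∧ p.length = n}).Nonempty :=
    ⟨0, a0, a0, Walk.nil, Walk.IsPath.nil, rfl⟩
  have hSbdd : BddAbove {n | ∃ (a b : V) (p : T.Walk a b), p.IsPath ∧ p.length = n} := by
    refine ⟨Fintype.card V, ?_⟩
    rintro n ⟨a, b, p, hp, rfl⟩
    exact le_of_lt hp.length_lt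
  obtain ⟨a, b, p, hp, hlen⟩ := Nat.sSup_mem hSne hSbdd
  set k := p.length with hkdef
  have hmax : ∀ (x y : V) (q : T.Walk x y), q.IsPath → q.length ≤ k := by
    intro x y q hq
    rw [hlen]
    exact le_csSup hSbdd ⟨x, y, q, hq, rfl⟩
  set v : ℕ → V := p.getVert with hv
  have hadj : ∀ i, i < k → T.Adj (v i) (v (i+1)) := fun i hi => p.adj_getVert_succ hi
  have hinj : ∀ i, i ≤ k → ∀ j, j ≤ k → v i = v j → i = j :=
    fun i hi j hj h => getVert_inj hp i hi j hj h
  have hk4 : ¬ k ≤ 4 := fun h =>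
    smallk v k hadj hinj hT hred hW hgamma hmax hcard h
  have hk5 : 5 ≤ k := by omega
  obtain ⟨t, ht3, ht4, htk, _⟩ := star v k hadj hinj hT hW hgamma hmax hk5
  have hk56 : k = 5 ∨ k = 6 := by omega
  rcases hk56 with hk6 | hk6
  · rw [hk6] at hadj hinj hmax
    exact k5path v hadj hinj hT hred hW hgamma hmax hcard
  · rw [hk6] at hadj hinj hmax
    exact absurd (k6kill v hadj hinj hT hred hW hgamma hmax) not_false
end

section
/- Let R be any tree on n ≥ 2 vertices, and let T be the tree obtained from R by attaching, to each vertex w of R, a new pendant path w–s_w–ℓ_w of length 2 (where s_w and ℓ_w are new vertices, with edges w s_w and s_w ℓ_w). Then T is a reduced well-ve-dominated tree on 3n vertices, γ_ve(T) = n, W_T equals the vertex set of R, and the subgraph of T induced by W_T is isomorphic to R. -/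
open SimpleGraph

/-- The tree obtained from `R` by attaching a pendant path `w - s_w - ℓ_w`
of length 2 at every vertex `w` of `R`.  Vertices `Sum.inl w` are the
original vertices of `R`, `Sum.inr (Sum.inl w) = s_w` and
`Sum.inr (Sum.inr w) = ℓ_w` are the new vertices. -/
def attachUnits {V : Type*} (R : SimpleGraph V) : SimpleGraph (V ⊕ V ⊕ V) :=
  SimpleGraph.fromRel (fun a b =>
    (∃ w w', a = Sum.inl w ∧ b = Sum.inl w' ∧ R.Adj w w') ∨
    (∃ w, a = Sum.inl w ∧ b = Sum.inr (Sum.inl w)) ∨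
    (∃ w, a = Sum.inr (Sum.inl w) ∧ b = Sum.inr (Sum.inr w)))

namespace AttachAux

variable {V : Type*} {R : SimpleGraph V}

@[simp] lemma adj_aa {w w' : V} :
    (attachUnits R).Adj (Sum.inl w) (Sum.inl w') ↔ R.Adj w w' := by
  constructor
  · rintro ⟨hne, h | h⟩ <;> simp_all [attachUnits]
    · exact h.symm
  · intro h
    exact ⟨by simpa using h.ne, Or.inl (Or.inl ⟨w, w', rfl, rfl, h⟩)⟩

@[simp] lemma adj_as {w w' : V} :
    (attachUnits R).Adj (Sum.inl w) (Sum.inr (Sum.inl w')) ↔ w = w' := by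
  constructor
  · rintro ⟨hne, h | h⟩ <;> simp_all [attachUnits]
  · rintro rfl
    exact ⟨by simp, Or.inl (Or.inr (Or.inl ⟨w, rfl, rfl⟩))⟩

@[simp] lemma adj_al {w w' : V} :
    ¬ (attachUnits R).Adj (Sum.inl w) (Sum.inr (Sum.inr w')) := by
  rintro ⟨hne, h | h⟩ <;> simp_all [attachUnits]

@[simp] lemma adj_ss {w w' : V} :
    ¬ (attachUnits R).Adj (Sum.inr (Sum.inl w)) (Sum.inr (Sum.inl w')) := by
  rintro ⟨hne, h | h⟩ <;> simp_all [attachUnits]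

@[simp] lemma adj_sl {w w' : V} :
    (attachUnits R).Adj (Sum.inr (Sum.inl w)) (Sum.inr (Sum.inr w')) ↔ w = w' := by
  constructor
  · rintro ⟨hne, h | h⟩ <;> simp_all [attachUnits]
  · rintro rfl
    exact ⟨by simp, Or.inl (Or.inr (Or.inr ⟨w, rfl, rfl⟩))⟩

@[simp] lemma adj_ll {w w' : V} :
    ¬ (attachUnits R).Adj (Sum.inr (Sum.inr w)) (Sum.inr (Sum.inr w')) := by
  rintro ⟨hne, h | h⟩ <;> simp_all [attachUnits]

@[simp] lemma adj_sa {w w' : V} :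
    (attachUnits R).Adj (Sum.inr (Sum.inl w)) (Sum.inl w') ↔ w = w' := by
  rw [SimpleGraph.adj_comm, adj_as, eq_comm]

@[simp] lemma adj_la {w w' : V} :
    ¬ (attachUnits R).Adj (Sum.inr (Sum.inr w)) (Sum.inl w') := by
  rw [SimpleGraph.adj_comm]; exact adj_al

@[simp] lemma adj_ls {w w' : V} :
    (attachUnits R).Adj (Sum.inr (Sum.inr w)) (Sum.inr (Sum.inl w')) ↔ w = w' := by
  rw [SimpleGraph.adj_comm, adj_sl, eq_comm]


lemma nb_l (w : V) :
    (attachUnits R).neighborSet (Sum.inr (Sum.inr w)) = {Sum.inr (Sum.inl w)} := by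
  ext x
  rcases x with u | u | u <;> simp [SimpleGraph.mem_neighborSet, eq_comm]

lemma nb_s (w : V) :
    (attachUnits R).neighborSet (Sum.inr (Sum.inl w)) =
      {Sum.inl w, Sum.inr (Sum.inr w)} := by
  ext x
  rcases x with u | u | u <;> simp [SimpleGraph.mem_neighborSet, eq_comm]

lemma nb_a (w : V) :
    (attachUnits R).neighborSet (Sum.inl w) =
      (Sum.inl '' R.neighborSet w) ∪ {Sum.inr (Sum.inl w)} := by
  ext x
  rcases x with u | u | u <;> simp [SimpleGraph.mem_neighborSet, eq_comm]

lemma edge_cases {e : Sym2 (V ⊕ V ⊕ V)} (he : e ∈ (attachUnits R).edgeSet) :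
    (∃ u u', R.Adj u u' ∧ e = s(Sum.inl u, Sum.inl u')) ∨
    (∃ u, e = s(Sum.inl u, Sum.inr (Sum.inl u))) ∨
    (∃ u, e = s(Sum.inr (Sum.inl u), Sum.inr (Sum.inr u))) := by
  induction e with
  | _ x y =>
    rw [SimpleGraph.mem_edgeSet] at he
    rcases x with u | u | u <;> rcases y with u' | u' | u' <;> simp_all <;> exact ⟨u, u', he, Or.inl ⟨rfl, rfl⟩⟩

lemma mem_edgeSet_sl (w : V) :
    s(Sum.inr (Sum.inl w), Sum.inr (Sum.inr w)) ∈ (attachUnits R).edgeSet := by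
  simp [SimpleGraph.mem_edgeSet]

lemma ved_sl_iff (w : V) (v : V ⊕ V ⊕ V) :
    VEDominates (attachUnits R) v s(Sum.inr (Sum.inl w), Sum.inr (Sum.inr w)) ↔
      v = Sum.inl w ∨ v = Sum.inr (Sum.inl w) ∨ v = Sum.inr (Sum.inr w) := by
  rcases v with u | u | u <;>
    simp [VEDominates, Sym2.mem_iff, eq_comm, or_comm] <;> aesop

lemma dom_mono_ls (w : V) {e : Sym2 (V ⊕ V ⊕ V)} :
    VEDominates (attachUnits R) (Sum.inr (Sum.inr w)) e →
    VEDominates (attachUnits R) (Sum.inr (Sum.inl w)) e := by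
  rintro ⟨x, hx, rfl | h⟩
  · exact ⟨_, hx, Or.inr (by simp)⟩
  · rcases x with u | u | u <;> simp_all
    subst h; exact ⟨_, hx, Or.inl rfl⟩

lemma dom_mono_sa (w : V) {e : Sym2 (V ⊕ V ⊕ V)}
    (he : e ∈ (attachUnits R).edgeSet) :
    VEDominates (attachUnits R) (Sum.inr (Sum.inl w)) e →
    VEDominates (attachUnits R) (Sum.inl w) e := by
  rintro ⟨x, hx, rfl | h⟩
  · exact ⟨_, hx, Or.inr (by simp)⟩
  · rcases x with u | u | u <;> simp_all
    · subst h; exact ⟨_, hx, Or.inl rfl⟩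
    · -- x = l u, adjacency gives u = w so l w ∈ e
      subst h
      rcases edge_cases he with ⟨a, b, hab, rfl⟩ | ⟨a, rfl⟩ | ⟨a, rfl⟩
      · simp [Sym2.mem_iff] at hx
      · simp [Sym2.mem_iff] at hx
      · have ha : a = w := ((by simpa [Sym2.mem_iff] using hx : w = a)).symm
        subst ha
        exact ⟨Sum.inr (Sum.inl a), by simp, Or.inr (by simp)⟩

lemma S_dom : IsVEDomSet (attachUnits R) (Set.range (fun w => Sum.inr (Sum.inl w))) := by
  intro e he
  rcases edge_cases he with ⟨a, b, hab, rfl⟩ | ⟨a, rfl⟩ | ⟨a, rfl⟩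
  · exact ⟨Sum.inr (Sum.inl a), ⟨a, rfl⟩, ⟨Sum.inl a, by simp, Or.inr (by simp)⟩⟩
  · exact ⟨Sum.inr (Sum.inl a), ⟨a, rfl⟩, ⟨Sum.inr (Sum.inl a), by simp, Or.inl rfl⟩⟩
  · exact ⟨Sum.inr (Sum.inl a), ⟨a, rfl⟩, ⟨Sum.inr (Sum.inl a), by simp, Or.inl rfl⟩⟩

lemma dom_hits {D : Set (V ⊕ V ⊕ V)} (hD : IsVEDomSet (attachUnits R) D) (w : V) :
    ∃ d ∈ D, d = Sum.inl w ∨ d = Sum.inr (Sum.inl w) ∨ d = Sum.inr (Sum.inr w) := by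
  obtain ⟨v, hv, hved⟩ := hD _ (mem_edgeSet_sl w)
  exact ⟨v, hv, (ved_sl_iff w v).1 hved⟩

def proj : V ⊕ V ⊕ V → V := Sum.elim id (Sum.elim id id)

@[simp] lemma proj_a (w : V) : proj (Sum.inl w : V ⊕ V ⊕ V) = w := rfl
@[simp] lemma proj_s (w : V) : proj (Sum.inr (Sum.inl w) : V ⊕ V ⊕ V) = w := rfl
@[simp] lemma proj_l (w : V) : proj (Sum.inr (Sum.inr w) : V ⊕ V ⊕ V) = w := rfl

lemma card_le_of_dom [Fintype V] {D : Set (V ⊕ V ⊕ V)}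
    (hD : IsVEDomSet (attachUnits R) D) : Fintype.card V ≤ D.ncard := by
  classical
  choose d hdD hd using dom_hits hD
  have hproj : ∀ w, proj (d w) = w := by
    intro w
    rcases hd w with h | h | h <;> rw [h] <;> simp
  have hinj : Function.Injective d := by
    intro w w' h
    rw [← hproj w, ← hproj w', h]
  have h1 : (Set.range d).ncard = Fintype.card V := by
    rw [← Nat.card_coe_set_eq, Nat.card_range_of_injective hinj,
      Nat.card_eq_fintype_card]
  rw [← h1]
  exact Set.ncard_le_ncard (Set.range_subset_iff.2 hdD) (Set.toFinite D)

lemma not_minimal_of_dominated {D : Set (V ⊕ V ⊕ V)}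
    (hmin : IsMinimalVEDomSet (attachUnits R) D) {x y : V ⊕ V ⊕ V}
    (hx : x ∈ D) (hy : y ∈ D) (hxy : x ≠ y)
    (mono : ∀ e ∈ (attachUnits R).edgeSet,
      VEDominates (attachUnits R) x e → VEDominates (attachUnits R) y e) : False := by
  apply hmin.2 (D \ {x}) (Set.sdiff_singleton_ssubset.2 hx)
  intro e he
  obtain ⟨v, hvD, hved⟩ := hmin.1 e he
  by_cases hvx : v = x
  · exact ⟨y, ⟨hy, hxy.symm⟩, mono e he (hvx ▸ hved)⟩
  · exact ⟨v, ⟨hvD, hvx⟩, hved⟩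

lemma injOn_of_minimal {D : Set (V ⊕ V ⊕ V)}
    (hmin : IsMinimalVEDomSet (attachUnits R) D) : Set.InjOn proj D := by
  intro x hx y hy hpp
  by_contra hne
  rcases x with u | u | u <;> rcases y with u' | u' | u' <;>
      simp only [proj_a, proj_s, proj_l] at hpp <;> subst hpp <;>
      try exact hne rfl
  · exact not_minimal_of_dominated hmin hy hx (Ne.symm hne)
      (fun e he hv => dom_mono_sa u he hv)
  · exact not_minimal_of_dominated hmin hy hx (Ne.symm hne)
      (fun e he hv => dom_mono_sa u he (dom_mono_ls u hv))
  · exact not_minimal_of_dominated hmin hx hy hne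
      (fun e he hv => dom_mono_sa u he hv)
  · exact not_minimal_of_dominated hmin hy hx (Ne.symm hne)
      (fun e he hv => dom_mono_ls u hv)
  · exact not_minimal_of_dominated hmin hx hy hne
      (fun e he hv => dom_mono_sa u he (dom_mono_ls u hv))
  · exact not_minimal_of_dominated hmin hx hy hne
      (fun e he hv => dom_mono_ls u hv)

lemma ncard_of_minimal [Fintype V] {D : Set (V ⊕ V ⊕ V)}
    (hmin : IsMinimalVEDomSet (attachUnits R) D) : D.ncard = Fintype.card V := by
  classical
  refine le_antisymm ?_ (card_le_of_dom hmin.1)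
  calc D.ncard = (proj '' D).ncard := (Set.ncard_image_of_injOn (injOn_of_minimal hmin)).symm
    _ ≤ (Set.univ : Set V).ncard := Set.ncard_le_ncard (Set.subset_univ _) (Set.toFinite _)
    _ = Fintype.card V := by rw [Set.ncard_univ, Nat.card_eq_fintype_card]

lemma ncard_S [Fintype V] :
    (Set.range (fun w : V => (Sum.inr (Sum.inl w) : V ⊕ V ⊕ V))).ncard = Fintype.card V := by
  rw [← Nat.card_coe_set_eq, Nat.card_range_of_injective
    (fun a b h => by simpa using h), Nat.card_eq_fintype_card]

lemma exists_adj [Fintype V] (hRc : R.Connected) (hn : 2 ≤ Fintype.card V) (w : V) :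
    ∃ u, R.Adj w u := by
  obtain ⟨u, hu⟩ := Fintype.exists_ne_of_one_lt_card (by omega) w
  obtain ⟨p⟩ := hRc.preconnected w u
  cases p with
  | nil => exact absurd rfl hu
  | cons h p => exact ⟨_, h⟩

lemma reduced [Fintype V] (hRc : R.Connected) (hn : 2 ≤ Fintype.card V) :
    Reduced (attachUnits R) := by
  intro x y h
  have hAdj : ∀ z, (attachUnits R).Adj x z ↔ (attachUnits R).Adj y z := by
    intro z
    rw [← SimpleGraph.mem_neighborSet, ← SimpleGraph.mem_neighborSet, h]
  rcases x with u | u | u <;> rcases y with u' | u' | u'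
  · have := (hAdj (Sum.inr (Sum.inl u))).1 (by simp)
    simp at this; rw [this]
  · have := (hAdj (Sum.inr (Sum.inr u'))).2 (by simp)
    simp at this
  · obtain ⟨t, ht⟩ := exists_adj hRc hn u
    have := (hAdj (Sum.inl t)).1 (by simp [ht])
    simp at this
  · have := (hAdj (Sum.inr (Sum.inr u))).1 (by simp)
    simp at this
  · have := (hAdj (Sum.inr (Sum.inr u))).1 (by simp)
    simp at this; rw [this]
  · have := (hAdj (Sum.inl u)).1 (by simp)
    simp at this
  · obtain ⟨t, ht⟩ := exists_adj hRc hn u'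
    have := (hAdj (Sum.inl t)).2 (by simp [ht])
    simp at this
  · have := (hAdj (Sum.inl u')).2 (by simp)
    simp at this
  · have := (hAdj (Sum.inr (Sum.inl u))).1 (by simp)
    simp at this; rw [this]

lemma goodPendant_iff [Fintype V] (hRc : R.Connected) (hn : 2 ≤ Fintype.card V)
    {s0 l0 : V ⊕ V ⊕ V} :
    IsGoodPendant (attachUnits R) s0 l0 ↔
      ∃ w, s0 = Sum.inr (Sum.inl w) ∧ l0 = Sum.inr (Sum.inr w) := by
  constructor
  · rintro ⟨hadj, h1, h2⟩
    rcases l0 with u | u | u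
    · obtain ⟨t, ht⟩ := exists_adj hRc hn u
      have hsub : {Sum.inl t, Sum.inr (Sum.inl u)} ⊆ (attachUnits R).neighborSet (Sum.inl u) := by
        intro z hz
        rcases hz with rfl | rfl <;> simp [SimpleGraph.mem_neighborSet, ht]
      have h2le : 2 ≤ ((attachUnits R).neighborSet (Sum.inl u)).ncard := by
        rw [← Set.ncard_pair (show (Sum.inl t : V ⊕ V ⊕ V) ≠ Sum.inr (Sum.inl u) by simp)]
        exact Set.ncard_le_ncard hsub (Set.toFinite _)
      omega
    · rw [nb_s] at h1
      rw [Set.ncard_pair (by simp)] at h1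
      omega
    · rcases s0 with t | t | t <;> simp_all
  · rintro ⟨w, rfl, rfl⟩
    refine ⟨by simp, ?_, ?_⟩
    · rw [nb_l]; exact Set.ncard_singleton _
    · rw [nb_s]; exact Set.ncard_pair (by simp)

lemma goodW_eq [Fintype V] (hRc : R.Connected) (hn : 2 ≤ Fintype.card V) :
    goodW (attachUnits R) = Set.range Sum.inl := by
  ext x
  constructor
  · rintro ⟨⟨s0, ⟨l0, hgp⟩, hadj⟩, hnl⟩
    obtain ⟨w, rfl, rfl⟩ := (goodPendant_iff hRc hn).1 hgp
    rcases x with u | u | u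
    · exact ⟨u, rfl⟩
    · simp at hadj
    · have hu : u = w := by simpa using hadj
      subst hu
      exact absurd ⟨_, (goodPendant_iff hRc hn).2 ⟨u, rfl, rfl⟩⟩ hnl
  · rintro ⟨w, rfl⟩
    refine ⟨⟨Sum.inr (Sum.inl w), ⟨Sum.inr (Sum.inr w),
        (goodPendant_iff hRc hn).2 ⟨w, rfl, rfl⟩⟩, by simp⟩, ?_⟩
    rintro ⟨s0, hgp⟩
    obtain ⟨w', _, hw⟩ := (goodPendant_iff hRc hn).1 hgp
    exact absurd hw (by simp)

noncomputable def isoW : ((attachUnits R).induce (Set.range Sum.inl)) ≃g R where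
  toFun := fun x => proj x.1
  invFun := fun w => ⟨Sum.inl w, ⟨w, rfl⟩⟩
  left_inv := by rintro ⟨x, w, rfl⟩; rfl
  right_inv := fun w => rfl
  map_rel_iff' := by
    rintro ⟨x, w, rfl⟩ ⟨y, w', rfl⟩
    simp [SimpleGraph.comap]
    exact Iff.rfl

def inlHom : R →g attachUnits R where
  toFun := Sum.inl
  map_rel' := fun h => adj_aa.2 h

lemma connected (hRc : R.Connected) : (attachUnits R).Connected := by
  rw [SimpleGraph.connected_iff]
  have key : ∀ x : V ⊕ V ⊕ V, (attachUnits R).Reachable x (Sum.inl (proj x)) := by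
    intro x
    rcases x with u | u | u
    · exact SimpleGraph.Reachable.refl _
    · exact ((adj_sa.2 rfl : (attachUnits R).Adj _ _)).reachable
    · exact ((adj_ls.2 rfl : (attachUnits R).Adj _ _)).reachable.trans
        ((adj_sa.2 rfl : (attachUnits R).Adj _ _)).reachable
  refine ⟨fun x y => ?_, ⟨Sum.inl hRc.nonempty.some⟩⟩
  exact (key x).trans (((hRc.preconnected _ _).map inlHom).trans (key y).symm)

lemma no_l_in_cycle {v : V ⊕ V ⊕ V} {c : (attachUnits R).Walk v v} (hc : c.IsCycle)
    {w : V} (hw : Sum.inr (Sum.inr w) ∈ c.support) : False := by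
  classical
  have hc' : (c.rotate _ hw).IsCycle := hc.rotate hw
  set c' := c.rotate _ hw with hc'def
  clear_value c'
  obtain ⟨u₁, h₁, q, rfl⟩ := SimpleGraph.Walk.not_nil_iff.1 hc'.not_nil
  have hu₁ : u₁ = Sum.inr (Sum.inl w) := by
    rcases u₁ with t | t | t
    · exact absurd h₁.symm adj_al
    · rw [← adj_ls.1 h₁]
    · exact absurd h₁ adj_ll
  subst hu₁
  rw [SimpleGraph.Walk.cons_isCycle_iff] at hc'
  have hqnn : ¬ q.reverse.Nil := SimpleGraph.Walk.not_nil_of_ne (by simp)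
  obtain ⟨u₂, h₂, q₂, hq₂⟩ := SimpleGraph.Walk.not_nil_iff.1 hqnn
  have hu₂ : u₂ = Sum.inr (Sum.inl w) := by
    rcases u₂ with t | t | t
    · exact absurd h₂.symm adj_al
    · rw [← adj_ls.1 h₂]
    · exact absurd h₂ adj_ll
  subst hu₂
  apply hc'.2
  have : s(Sum.inr (Sum.inr w), Sum.inr (Sum.inl w)) ∈ q.reverse.edges := by
    rw [hq₂]; simp
  rw [SimpleGraph.Walk.edges_reverse, List.mem_reverse] at this
  exact (Sym2.eq_swap ▸ this)

lemma no_s_in_cycle {v : V ⊕ V ⊕ V} {c : (attachUnits R).Walk v v} (hc : c.IsCycle)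
    {w : V} (hw : Sum.inr (Sum.inl w) ∈ c.support) : False := by
  classical
  have hc' : (c.rotate _ hw).IsCycle := hc.rotate hw
  set c' := c.rotate _ hw with hc'def
  clear_value c'
  obtain ⟨u₁, h₁, q, rfl⟩ := SimpleGraph.Walk.not_nil_iff.1 hc'.not_nil
  have hnolq : ∀ (t : V), Sum.inr (Sum.inr t) ∉ q.support := by
    intro t ht
    exact no_l_in_cycle (w := t) hc' (by rw [SimpleGraph.Walk.support_cons]; exact List.mem_cons_of_mem _ ht)
  have hu₁ : u₁ = Sum.inl w := by
    rcases u₁ with t | t | t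
    · rw [← adj_sa.1 h₁]
    · exact absurd h₁ adj_ss
    · exact absurd q.start_mem_support (hnolq t)
  subst hu₁
  rw [SimpleGraph.Walk.cons_isCycle_iff] at hc'
  have hqnn : ¬ q.reverse.Nil := SimpleGraph.Walk.not_nil_of_ne (by simp)
  obtain ⟨u₂, h₂, q₂, hq₂⟩ := SimpleGraph.Walk.not_nil_iff.1 hqnn
  have hu₂ : u₂ = Sum.inl w := by
    rcases u₂ with t | t | t
    · rw [← adj_sa.1 h₂]
    · exact absurd h₂ adj_ss
    · refine absurd ?_ (hnolq t)
      have : (Sum.inr (Sum.inr t) : V ⊕ V ⊕ V) ∈ q.reverse.support := by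
        rw [hq₂]; simp
      rwa [SimpleGraph.Walk.support_reverse, List.mem_reverse] at this
  subst hu₂
  apply hc'.2
  have : s(Sum.inr (Sum.inl w), Sum.inl w) ∈ q.reverse.edges := by
    rw [hq₂]; simp
  rw [SimpleGraph.Walk.edges_reverse, List.mem_reverse] at this
  exact (Sym2.eq_swap ▸ this)

lemma lift_walk {x y : V ⊕ V ⊕ V} (p : (attachUnits R).Walk x y)
    (hs : ∀ z ∈ p.support, ∃ w, z = Sum.inl w) :
    ∃ (a b : V) (ha : x = Sum.inl a) (hb : y = Sum.inl b) (q : R.Walk a b),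
      p = (q.map inlHom).copy ha.symm hb.symm := by
  induction p with
  | nil =>
    obtain ⟨a, rfl⟩ := hs _ (SimpleGraph.Walk.start_mem_support _)
    exact ⟨a, a, rfl, rfl, SimpleGraph.Walk.nil, rfl⟩
  | @cons X U Y h p' ih =>
    obtain ⟨a, b, hU, hb, q, rfl⟩ := ih (fun z hz => hs z (by
      rw [SimpleGraph.Walk.support_cons]; exact List.mem_cons_of_mem _ hz))
    obtain ⟨a₀, rfl⟩ := hs X (SimpleGraph.Walk.start_mem_support _)
    subst hU; subst hb
    have hadj : R.Adj a₀ a := adj_aa.1 h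
    exact ⟨a₀, b, rfl, rfl, SimpleGraph.Walk.cons hadj q, rfl⟩

lemma acyclic (hRa : R.IsAcyclic) : (attachUnits R).IsAcyclic := by
  intro v c hc
  have hs : ∀ z ∈ c.support, ∃ w, z = Sum.inl w := by
    intro z hz
    rcases z with t | t | t
    · exact ⟨t, rfl⟩
    · exact absurd hz (fun h => no_s_in_cycle hc h)
    · exact absurd hz (fun h => no_l_in_cycle hc h)
  obtain ⟨a, b, ha, hb, q, hq⟩ := lift_walk c hs
  subst ha
  obtain rfl : a = b := Sum.inl.inj hb
  change c = SimpleGraph.Walk.map inlHom q at hq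
  subst hq
  exact hRa q ((SimpleGraph.Walk.map_isCycle_iff_of_injective Sum.inl_injective).1 hc)

lemma isTree (hRt : R.IsTree) : (attachUnits R).IsTree :=
  ⟨connected hRt.isConnected, acyclic hRt.IsAcyclic⟩

end AttachAux

/-- Attaching a pendant path of length 2 to every vertex of an arbitrary tree
`R` on `n ≥ 2` vertices yields a reduced well-ve-dominated tree `T` on `3n`
vertices with `γ_ve(T) = n`, whose set `W_T` is the vertex set of `R` and
whose induced subgraph on `W_T` is isomorphic to `R`. -/
theorem stmt_16 {V : Type*} [Fintype V] (R : SimpleGraph V) (hR : R.IsTree)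
    (hn : 2 ≤ Fintype.card V) :
    (attachUnits R).IsTree ∧
    Reduced (attachUnits R) ∧
    WellVEDominated (attachUnits R) ∧
    Fintype.card (V ⊕ V ⊕ V) = 3 * Fintype.card V ∧
    gammaVE (attachUnits R) = Fintype.card V ∧
    goodW (attachUnits R) = Set.range Sum.inl ∧
    Nonempty (((attachUnits R).induce (Set.range Sum.inl)) ≃g R) := by
  classical
  have hRc := hR.isConnected
  refine ⟨AttachAux.isTree hR, AttachAux.reduced hRc hn, ?_, ?_, ?_,
    AttachAux.goodW_eq hRc hn, ⟨AttachAux.isoW⟩⟩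
  · intro D₁ D₂ h1 h2
    rw [AttachAux.ncard_of_minimal h1, AttachAux.ncard_of_minimal h2]
  · simp only [Fintype.card_sum]; ring
  · unfold gammaVE
    apply le_antisymm
    · exact Nat.sInf_le ⟨_, AttachAux.S_dom, AttachAux.ncard_S⟩
    · refine le_csInf ⟨Fintype.card V, _, AttachAux.S_dom, AttachAux.ncard_S⟩ ?_
      rintro k ⟨D, hD, rfl⟩
      exact AttachAux.card_le_of_dom hD
end

section
/- Let T be a reduced well-ve-dominated tree with at least 6 vertices, and let e = uv be an edge of T both of whose endpoints lie in W_T (a unit-cut edge). Let T_u and T_v be the two components of T − e (deleting only the edge e), containing u and v respectively. Then T_u and T_v are well-ve-dominated trees and γ_ve(T) = γ_ve(T_u) + γ_ve(T_v). -/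
open SimpleGraph

lemma isVEDomSet_univ {V : Type*} (G : SimpleGraph V) : IsVEDomSet G Set.univ := by
  intro e he
  induction e using Sym2.ind with
  | _ x y => exact ⟨x, trivial, x, Sym2.mem_mk_left x y, Or.inl rfl⟩

lemma exists_minimal_gamma {V : Type*} [Fintype V] (G : SimpleGraph V) :
    ∃ D : Set V, IsMinimalVEDomSet G D ∧ D.ncard = gammaVE G := by
  have hne : ({n | ∃ D : Set V, IsVEDomSet G D ∧ D.ncard = n}).Nonempty :=
    ⟨(Set.univ : Set V).ncard, Set.univ, isVEDomSet_univ G, rfl⟩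
  have hmem := Nat.sInf_mem hne
  obtain ⟨D, hD, hcard⟩ := hmem
  refine ⟨D, ⟨hD, ?_⟩, hcard⟩
  intro D' hss hD'
  have h1 : gammaVE G ≤ D'.ncard := Nat.sInf_le ⟨D', hD', rfl⟩
  have hc2 : D.ncard = gammaVE G := hcard
  have h2 : D'.ncard < D.ncard := Set.ncard_lt_ncard hss (Set.toFinite D)
  rw [hc2] at h2
  omega

lemma minimal_ncard_eq_gamma {V : Type*} [Fintype V] {G : SimpleGraph V}
    (hW : WellVEDominated G) {D : Set V} (hD : IsMinimalVEDomSet G D) :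
    D.ncard = gammaVE G := by
  obtain ⟨D₀, hD₀, hc⟩ := exists_minimal_gamma G
  rw [← hc]
  exact hW D D₀ hD hD₀

lemma induce_supp_reachable {V : Type*} {G : SimpleGraph V} {c : G.ConnectedComponent} :
    ∀ {x y : V} (_ : G.Walk x y) (hx : x ∈ c.supp) (hy : y ∈ c.supp),
      (G.induce c.supp).Reachable ⟨x, hx⟩ ⟨y, hy⟩ := by
  intro x y p
  induction p with
  | nil => intro hx hy; exact Reachable.refl _
  | @cons a b w h q ih =>
    intro hx hy
    have hb : b ∈ c.supp := by
      rw [SimpleGraph.ConnectedComponent.mem_supp_iff] at hx ⊢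
      rw [← hx]
      exact (SimpleGraph.ConnectedComponent.eq).mpr h.symm.reachable
    have hadj : (G.induce c.supp).Adj ⟨a, hx⟩ ⟨b, hb⟩ := h
    exact hadj.reachable.trans (ih hb hy)

lemma comp_isTree {V : Type*} {T : SimpleGraph V} (hT : T.IsTree)
    {u : V} {s : Set (Sym2 V)} (c : (T.deleteEdges s).ConnectedComponent)
    (hc : u ∈ c.supp) :
    ((T.deleteEdges s).induce c.supp).IsTree := by
  constructor
  · rw [SimpleGraph.connected_iff]
    refine ⟨?_, ⟨⟨u, hc⟩⟩⟩
    rintro ⟨x, hx⟩ ⟨y, hy⟩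
    have hr : (T.deleteEdges s).Reachable x y := by
      rw [SimpleGraph.ConnectedComponent.mem_supp_iff] at hx hy
      exact SimpleGraph.ConnectedComponent.exact (hx.trans hy.symm)
    exact hr.elim fun p => induce_supp_reachable p hx hy
  · intro x p hp
    let f : (T.deleteEdges s).induce c.supp →g T.deleteEdges s :=
      (SimpleGraph.Embedding.induce c.supp).toHom
    have hfinj : Function.Injective f := Subtype.val_injective
    have h1 : (p.map f).IsCycle := hp.map hfinj
    have h2 : (((p.map f)).map
        (SimpleGraph.Hom.ofLE (SimpleGraph.deleteEdges_le s))).IsCycle :=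
      h1.map (fun _ _ h => h)
    exact hT.IsAcyclic _ h2

-- helpers (from parts 1,3)
lemma veDom_mono' {V : Type*} {G : SimpleGraph V} {D D' : Set V} (h : D ⊆ D')
    (hD : IsVEDomSet G D) : IsVEDomSet G D' := by
  intro e he
  obtain ⟨v, hv, hve⟩ := hD e he
  exact ⟨v, h hv, hve⟩

lemma veDominates_iff {V : Type*} (G : SimpleGraph V) (d x y : V) :
    VEDominates G d s(x, y) ↔ (x = d ∨ G.Adj d x) ∨ (y = d ∨ G.Adj d y) := by
  constructor
  · rintro ⟨z, hz, hzd⟩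
    rw [Sym2.mem_iff] at hz
    rcases hz with rfl | rfl
    · exact Or.inl hzd
    · exact Or.inr hzd
  · rintro (h | h)
    · exact ⟨x, Sym2.mem_mk_left x y, h⟩
    · exact ⟨y, Sym2.mem_mk_right x y, h⟩

lemma minimal_of_witness {V : Type*} {G : SimpleGraph V} {D : Set V}
    (hdom : IsVEDomSet G D) (h : ∀ z ∈ D, ¬ IsVEDomSet G (D \ {z})) :
    IsMinimalVEDomSet G D := by
  refine ⟨hdom, fun D' hss hdom' => ?_⟩
  obtain ⟨z, hzD, hzD'⟩ := Set.exists_of_ssubset hss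
  have hsub : D' ⊆ D \ {z} := fun w hw =>
    ⟨hss.1 hw, fun hwz => hzD' (Set.mem_singleton_iff.mp hwz ▸ hw)⟩
  exact h z hzD (veDom_mono' hsub hdom')

lemma walk_closure {V : Type*} {T : SimpleGraph V} {C : Set V}
    (hcl : ∀ ⦃x y : V⦄, x ∈ C → T.Adj x y → y ∈ C) :
    ∀ {x w : V}, T.Walk x w → x ∈ C → w ∈ C := by
  intro x w p
  induction p with
  | nil => exact id
  | cons h q ih => intro hx; exact ih (hcl hx h)

lemma ncard_one_eq {α : Type*} {s : Set α} (h : s.ncard = 1) {x : α} (hx : x ∈ s) :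
    ∀ z ∈ s, z = x := by
  obtain ⟨a, rfl⟩ := Set.ncard_eq_one.mp h
  intro z hz
  simp only [Set.mem_singleton_iff] at hx hz
  rw [hz, hx]

lemma ncard_two_pair {α : Type*} {s : Set α} (h : s.ncard = 2) {x y : α}
    (hx : x ∈ s) (hy : y ∈ s) (hxy : x ≠ y) : ∀ z ∈ s, z = x ∨ z = y := by
  obtain ⟨a, b, hab, rfl⟩ := Set.ncard_eq_two.mp h
  simp only [Set.mem_insert_iff, Set.mem_singleton_iff] at *
  aesop

-- the key lemma
lemma key {V : Type*} [Fintype V] (T : SimpleGraph V) (hT : T.IsTree)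
    (hcard : 6 ≤ Fintype.card V)
    (u v : V) (huv : T.Adj u v) (hu : u ∈ goodW T) (hv : v ∈ goodW T) :
    ∃ E : Set V,
      E ⊆ ((T.deleteEdges {s(u, v)}).connectedComponentMk v).supp ∧
      IsMinimalVEDomSet
        ((T.deleteEdges {s(u, v)}).induce
          ((T.deleteEdges {s(u, v)}).connectedComponentMk v).supp)
        (Subtype.val ⁻¹' E) ∧
      (Subtype.val ⁻¹' E :
        Set ((T.deleteEdges {s(u, v)}).connectedComponentMk v).supp).ncard = E.ncard ∧
      ∀ D' : Set ((T.deleteEdges {s(u, v)}).connectedComponentMk u).supp,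
        IsMinimalVEDomSet
          ((T.deleteEdges {s(u, v)}).induce
            ((T.deleteEdges {s(u, v)}).connectedComponentMk u).supp) D' →
        IsMinimalVEDomSet T (Subtype.val '' D' ∪ E) ∧
        (Subtype.val '' D' ∪ E).ncard = D'.ncard + E.ncard := by
  classical
  set G := T.deleteEdges {s(u, v)} with hGdef
  set A := (G.connectedComponentMk u).supp with hAdef
  set B := (G.connectedComponentMk v).supp with hBdef
  have hne : u ≠ v := huv.ne
  have hGadj : ∀ {x y : V}, G.Adj x y ↔ T.Adj x y ∧ s(x, y) ≠ s(u, v) := by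
    intro x y
    rw [hGdef, SimpleGraph.deleteEdges_adj]
    simp
  have hmemA : ∀ {x : V}, x ∈ A ↔ G.Reachable x u := by
    intro x
    rw [hAdef, ConnectedComponent.mem_supp_iff, ConnectedComponent.eq]
  have hmemB : ∀ {x : V}, x ∈ B ↔ G.Reachable x v := by
    intro x
    rw [hBdef, ConnectedComponent.mem_supp_iff, ConnectedComponent.eq]
  have huA : u ∈ A := hmemA.mpr (Reachable.refl u)
  have hvB : v ∈ B := hmemB.mpr (Reachable.refl v)
  have hnreach : ¬ G.Reachable u v := by
    have hacyc := hT.IsAcyclic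
    rw [isAcyclic_iff_forall_edge_isBridge] at hacyc
    have hbr := hacyc (T.mem_edgeSet.mpr huv)
    rw [isBridge_iff] at hbr
    exact hbr
  have hdisj : ∀ {x : V}, x ∈ A → x ∈ B → False := by
    intro x hxA hxB
    exact hnreach ((hmemA.mp hxA).symm.trans (hmemB.mp hxB))
  have hAdjA : ∀ {x y : V}, G.Adj x y → x ∈ A → y ∈ A := by
    intro x y hxy hx
    exact hmemA.mpr (hxy.symm.reachable.trans (hmemA.mp hx))
  have hAdjB : ∀ {x y : V}, G.Adj x y → x ∈ B → y ∈ B := by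
    intro x y hxy hx
    exact hmemB.mpr (hxy.symm.reachable.trans (hmemB.mp hx))
  have hcover : ∀ w : V, w ∈ A ∨ w ∈ B := by
    intro w
    have hcl : ∀ ⦃x y : V⦄, x ∈ {w | w ∈ A ∨ w ∈ B} → T.Adj x y →
        y ∈ {w | w ∈ A ∨ w ∈ B} := by
      intro x y hx hxy
      by_cases he : s(x, y) = s(u, v)
      · rw [Sym2.eq_iff] at he
        rcases he with ⟨-, rfl⟩ | ⟨-, rfl⟩
        · exact Or.inr hvB
        · exact Or.inl huA
      · have hg : G.Adj x y := hGadj.mpr ⟨hxy, he⟩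
        rcases hx with hx | hx
        · exact Or.inl (hAdjA hg hx)
        · exact Or.inr (hAdjB hg hx)
    exact (hT.isConnected.preconnected u w).elim fun p =>
      walk_closure hcl p (Or.inl huA)
  have hvA : v ∉ A := fun h => hdisj h hvB
  have huB : u ∉ B := fun h => hdisj huA h
  -- good pendant on the v side
  obtain ⟨⟨sv, ⟨lv, hpend⟩, hadjvsv⟩, hvnl⟩ := hv
  obtain ⟨hadjsvlv, hlv1, hsv2⟩ := hpend
  have hNlv : ∀ z : V, T.Adj lv z → z = sv := by
    intro z hz
    exact ncard_one_eq hlv1 ((T.mem_neighborSet _ _).mpr hadjsvlv.symm) z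
      ((T.mem_neighborSet _ _).mpr hz)
  have hvlv : v ≠ lv := by
    rintro rfl
    exact hvnl ⟨sv, hadjsvlv, hlv1, hsv2⟩
  have hNsv : ∀ z : V, T.Adj sv z → z = v ∨ z = lv := by
    intro z hz
    exact ncard_two_pair hsv2 ((T.mem_neighborSet _ _).mpr hadjvsv.symm)
      ((T.mem_neighborSet _ _).mpr hadjsvlv) hvlv z
      ((T.mem_neighborSet _ _).mpr hz)
  have hsvu : sv ≠ u := by
    intro heq
    obtain ⟨⟨s', ⟨l₂, hp₂⟩, hadjus'⟩, hunl⟩ := hu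
    have hadjsvs' : T.Adj sv s' := by rw [heq]; exact hadjus'
    rcases hNsv s' hadjsvs' with hs' | hs'
    · -- s' = v is a good support
      obtain ⟨hadjvl₂, hl₂1, hv2⟩ := hp₂
      rw [hs'] at hadjvl₂ hv2
      have hul₂ : u ≠ l₂ := by
        intro h2
        exact hunl ⟨v, by rw [← h2] at hadjvl₂ hl₂1; exact ⟨hadjvl₂, hl₂1, hv2⟩⟩
      have hNv : ∀ z : V, T.Adj v z → z = u ∨ z = l₂ := by
        intro z hz
        exact ncard_two_pair hv2 ((T.mem_neighborSet _ _).mpr huv.symm)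
          ((T.mem_neighborSet _ _).mpr hadjvl₂) hul₂ z ((T.mem_neighborSet _ _).mpr hz)
      have hNl₂ : ∀ z : V, T.Adj l₂ z → z = v := by
        intro z hz
        exact ncard_one_eq hl₂1 ((T.mem_neighborSet _ _).mpr hadjvl₂.symm) z
          ((T.mem_neighborSet _ _).mpr hz)
      have hNu : ∀ z : V, T.Adj u z → z = v ∨ z = lv := by
        intro z hz
        exact hNsv z (by rw [heq]; exact hz)
      have hNlv' : ∀ z : V, T.Adj lv z → z = u := by
        intro z hz
        rw [← heq]; exact hNlv z hz
      have hcl : ∀ ⦃x y : V⦄, x ∈ ({u, v, lv, l₂} : Set V) → T.Adj x y →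
          y ∈ ({u, v, lv, l₂} : Set V) := by
        intro x y hx hxy
        simp only [Set.mem_insert_iff, Set.mem_singleton_iff] at hx ⊢
        rcases hx with rfl | rfl | rfl | rfl
        · rcases hNu y hxy with rfl | rfl
          · right; left; rfl
          · right; right; left; rfl
        · rcases hNv y hxy with rfl | rfl
          · left; rfl
          · right; right; right; rfl
        · rw [hNlv' y hxy]; left; rfl
        · rw [hNl₂ y hxy]; right; left; rfl
      have hall : (Set.univ : Set V) ⊆ ({u, v, lv, l₂} : Set V) := by
        intro w _
        exact (hT.isConnected.preconnected u w).elim fun p =>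
          walk_closure hcl p (by left; rfl)
      have hle : (Set.univ : Set V).ncard ≤ ({u, v, lv, l₂} : Set V).ncard :=
        Set.ncard_le_ncard hall (Set.toFinite _)
      have h4 : ({u, v, lv, l₂} : Set V).ncard ≤ 4 := by
        calc ({u, v, lv, l₂} : Set V).ncard
            ≤ ({v, lv, l₂} : Set V).ncard + 1 := Set.ncard_insert_le _ _
          _ ≤ (({lv, l₂} : Set V).ncard + 1) + 1 := by
              have := Set.ncard_insert_le v ({lv, l₂} : Set V)
              omega
          _ ≤ ((({l₂} : Set V).ncard + 1) + 1) + 1 := by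
              have := Set.ncard_insert_le lv ({l₂} : Set V)
              omega
          _ ≤ 4 := by rw [Set.ncard_singleton]
      rw [Set.ncard_univ, Nat.card_eq_fintype_card] at hle
      omega
    · -- s' = lv is a good support, but lv is a leaf
      obtain ⟨-, -, h2⟩ := hp₂
      rw [hs', hlv1] at h2
      omega
  have hsvv : sv ≠ v := hadjvsv.ne'
  have hsvB : sv ∈ B := by
    have hg : G.Adj v sv := by
      refine hGadj.mpr ⟨hadjvsv, ?_⟩
      intro h
      rcases Sym2.eq_iff.mp h with ⟨h1, h2⟩ | ⟨h1, h2⟩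
      · exact hne h1.symm
      · exact hsvu h2
    exact hAdjB hg hvB
  have hsvlvne : sv ≠ lv := hadjsvlv.ne
  have hlvu : lv ≠ u := by
    intro heq
    have hadj : T.Adj lv v := by rw [heq]; exact huv
    exact hsvv (hNlv v hadj).symm
  have hlvB : lv ∈ B := by
    have hg : G.Adj sv lv := by
      refine hGadj.mpr ⟨hadjsvlv, ?_⟩
      intro h
      rcases Sym2.eq_iff.mp h with ⟨h1, h2⟩ | ⟨h1, h2⟩
      · exact hsvu h1
      · exact hsvv h1
    exact hAdjB hg hsvB
  -- the robust set E
  let X₀ : Set V := B \ {v, lv}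
  have hsvX₀ : sv ∈ X₀ := ⟨hsvB, by
    simp only [Set.mem_insert_iff, Set.mem_singleton_iff]
    push_neg
    exact ⟨hsvv, hsvlvne⟩⟩
  have hDomX₀ : ∀ a b : V, a ∈ B → b ∈ B → a ≠ v → b ≠ v → T.Adj a b →
      ∃ d ∈ X₀, (a = d ∨ T.Adj d a) ∨ (b = d ∨ T.Adj d b) := by
    intro a b haB hbB hav hbv hab
    by_cases ha : a = lv
    · subst ha
      have hb : b = sv := hNlv b hab
      exact ⟨sv, hsvX₀, Or.inr (Or.inl hb)⟩
    · refine ⟨a, ⟨haB, ?_⟩, Or.inl (Or.inl rfl)⟩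
      simp only [Set.mem_insert_iff, Set.mem_singleton_iff]
      push_neg
      exact ⟨hav, ha⟩
  set S : Set ℕ := {n | ∃ X : Set V, X ⊆ X₀ ∧
    (∀ a b : V, a ∈ B → b ∈ B → a ≠ v → b ≠ v → T.Adj a b →
      ∃ d ∈ X, (a = d ∨ T.Adj d a) ∨ (b = d ∨ T.Adj d b)) ∧ X.ncard = n} with hSdef
  have hSne : S.Nonempty := ⟨X₀.ncard, X₀, subset_rfl, hDomX₀, rfl⟩
  obtain ⟨E, hEX₀, hEdom, hEcard⟩ := Nat.sInf_mem hSne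
  have hEB : E ⊆ B := fun x hx => (hEX₀ hx).1
  have hvE : v ∉ E := fun hx => by
    have := (hEX₀ hx).2
    simp at this
  have hlvE : lv ∉ E := fun hx => by
    have := (hEX₀ hx).2
    simp at this
  have hrob : ∀ y ∈ E, ∃ a b : V, a ∈ B ∧ b ∈ B ∧ a ≠ v ∧ b ≠ v ∧ T.Adj a b ∧
      ∀ d ∈ E, d ≠ y → ¬ ((a = d ∨ T.Adj d a) ∨ (b = d ∨ T.Adj d b)) := by
    intro y hy
    by_contra hcon
    push_neg at hcon
    have hdom' : ∀ a b : V, a ∈ B → b ∈ B → a ≠ v → b ≠ v → T.Adj a b →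
        ∃ d ∈ E \ {y}, (a = d ∨ T.Adj d a) ∨ (b = d ∨ T.Adj d b) := by
      intro a b haB hbB hav hbv hab
      obtain ⟨d, hdE, hdy, hP⟩ := hcon a b haB hbB hav hbv hab
      exact ⟨d, ⟨hdE, hdy⟩, hP⟩
    have hmem : (E \ {y}).ncard ∈ S :=
      ⟨E \ {y}, (Set.diff_subset).trans hEX₀, hdom', rfl⟩
    have h1 : sInf S ≤ (E \ {y}).ncard := Nat.sInf_le hmem
    have h2 : (E \ {y}).ncard < E.ncard :=
      Set.ncard_diff_singleton_lt_of_mem hy (Set.toFinite E)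
    omega
  have hsvE : sv ∈ E := by
    obtain ⟨d, hdE, hcase⟩ := hEdom sv lv hsvB hlvB hsvv hvlv.symm hadjsvlv
    rcases hcase with (rfl | hd) | (rfl | hd)
    · exact hdE
    · rcases hNsv d hd.symm with rfl | rfl
      · exact absurd hdE hvE
      · exact absurd hdE hlvE
    · exact absurd hdE hlvE
    · exact (hNlv d hd.symm) ▸ hdE
  -- translation facts
  have hGB : ∀ {x y : V}, x ∈ B → y ∈ B → (G.Adj x y ↔ T.Adj x y) := by
    intro x y hx hy
    constructor
    · exact fun h => (hGadj.mp h).1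
    · intro h
      refine hGadj.mpr ⟨h, ?_⟩
      intro he
      rcases Sym2.eq_iff.mp he with ⟨rfl, -⟩ | ⟨-, rfl⟩
      · exact huB hx
      · exact huB hy
  have hGA : ∀ {x y : V}, x ∈ A → y ∈ A → (G.Adj x y ↔ T.Adj x y) := by
    intro x y hx hy
    constructor
    · exact fun h => (hGadj.mp h).1
    · intro h
      refine hGadj.mpr ⟨h, ?_⟩
      intro he
      rcases Sym2.eq_iff.mp he with ⟨-, rfl⟩ | ⟨rfl, -⟩
      · exact hvA hy
      · exact hvA hx
  have hcross : ∀ {x y : V}, x ∈ A → y ∈ B → T.Adj x y → x = u ∧ y = v := by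
    intro x y hx hy hxy
    by_cases he : s(x, y) = s(u, v)
    · rcases Sym2.eq_iff.mp he with ⟨h1, h2⟩ | ⟨h1, h2⟩
      · exact ⟨h1, h2⟩
      · exact absurd (h1 ▸ hx) hvA
    · cases hdisj (hAdjA (hGadj.mpr ⟨hxy, he⟩) hx) hy
  have hTvAdj : ∀ a' b' : B, ((G.induce B).Adj a' b' ↔ T.Adj ↑a' ↑b') := by
    intro a' b'
    exact hGB a'.2 b'.2
  have hTuAdj : ∀ a' b' : A, ((G.induce A).Adj a' b' ↔ T.Adj ↑a' ↑b') := by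
    intro a' b'
    exact hGA a'.2 b'.2
  -- (i) E dominates T_v
  have hdomTv : IsVEDomSet (G.induce B) (Subtype.val ⁻¹' E) := by
    intro e
    induction e using Sym2.ind with
    | _ a' b' =>
      intro he
      rw [SimpleGraph.mem_edgeSet] at he
      have hab : T.Adj ↑a' ↑b' := (hTvAdj a' b').mp he
      by_cases hav : (a' : V) = v
      · refine ⟨⟨sv, hsvB⟩, hsvE, (veDominates_iff _ _ _ _).mpr (Or.inl (Or.inr ?_))⟩
        refine (hTvAdj ⟨sv, hsvB⟩ a').mpr ?_
        rw [hav]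
        exact hadjvsv.symm
      · by_cases hbv : (b' : V) = v
        · refine ⟨⟨sv, hsvB⟩, hsvE, (veDominates_iff _ _ _ _).mpr (Or.inr (Or.inr ?_))⟩
          refine (hTvAdj ⟨sv, hsvB⟩ b').mpr ?_
          rw [hbv]
          exact hadjvsv.symm
        · obtain ⟨d, hdE, hcase⟩ := hEdom ↑a' ↑b' a'.2 b'.2 hav hbv hab
          refine ⟨⟨d, hEB hdE⟩, hdE, (veDominates_iff _ _ _ _).mpr ?_⟩
          rcases hcase with (h | h) | (h | h)
          · exact Or.inl (Or.inl (Subtype.ext h))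
          · exact Or.inl (Or.inr ((hTvAdj _ _).mpr h))
          · exact Or.inr (Or.inl (Subtype.ext h))
          · exact Or.inr (Or.inr ((hTvAdj _ _).mpr h))
  -- (ii) minimality of E in T_v
  have hminTv : IsMinimalVEDomSet (G.induce B) (Subtype.val ⁻¹' E) := by
    refine minimal_of_witness hdomTv ?_
    intro z' hz' hdom'
    obtain ⟨a, b, haB, hbB, hav, hbv, hab, hpriv⟩ := hrob ↑z' hz'
    have hedge : ((G.induce B).Adj (⟨a, haB⟩ : B) ⟨b, hbB⟩) := (hTvAdj _ _).mpr hab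
    obtain ⟨d', hd', hdom⟩ :=
      hdom' s(⟨a, haB⟩, ⟨b, hbB⟩) ((G.induce B).mem_edgeSet.mpr hedge)
    have hdE : (d' : V) ∈ E := hd'.1
    have hdz : (d' : V) ≠ ↑z' := fun h => hd'.2 (Subtype.ext h)
    refine hpriv ↑d' hdE hdz ?_
    rcases (veDominates_iff _ _ _ _).mp hdom with (h | h) | (h | h)
    · exact Or.inl (Or.inl (congrArg Subtype.val h))
    · exact Or.inl (Or.inr ((hTvAdj _ _).mp h))
    · exact Or.inr (Or.inl (congrArg Subtype.val h))
    · exact Or.inr (Or.inr ((hTvAdj _ _).mp h))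
  -- (iii) cardinality of the preimage
  have himg : Subtype.val '' (Subtype.val ⁻¹' E : Set B) = E := by
    rw [Subtype.image_preimage_coe]
    exact Set.inter_eq_self_of_subset_right hEB
  have hcardE : (Subtype.val ⁻¹' E : Set B).ncard = E.ncard := by
    conv_rhs => rw [← himg]
    rw [Set.ncard_image_of_injective _ Subtype.val_injective]
  refine ⟨E, hEB, hminTv, hcardE, ?_⟩
  intro D' hD'
  have hDuA : (Subtype.val '' D' : Set V) ⊆ A := by
    rintro x ⟨x', -, rfl⟩
    exact x'.2
  -- domination of T by Du ∪ E
  have hdomT : IsVEDomSet T (Subtype.val '' D' ∪ E) := by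
    intro e
    induction e using Sym2.ind with
    | _ x y =>
      intro he
      rw [SimpleGraph.mem_edgeSet] at he
      by_cases hxy : s(x, y) = s(u, v)
      · refine ⟨sv, Or.inr hsvE, (veDominates_iff _ _ _ _).mpr ?_⟩
        rcases Sym2.eq_iff.mp hxy with ⟨h1, h2⟩ | ⟨h1, h2⟩
        · exact Or.inr (Or.inr (by rw [h2]; exact hadjvsv.symm))
        · exact Or.inl (Or.inr (by rw [h1]; exact hadjvsv.symm))
      · have hg : G.Adj x y := hGadj.mpr ⟨he, hxy⟩
        rcases hcover x with hx | hx
        · have hy : y ∈ A := hAdjA hg hx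
          have hedge : (G.induce A).Adj ⟨x, hx⟩ ⟨y, hy⟩ := (hTuAdj _ _).mpr he
          obtain ⟨d', hd', hdom⟩ := hD'.1 _ ((G.induce A).mem_edgeSet.mpr hedge)
          refine ⟨↑d', Or.inl ⟨d', hd', rfl⟩, (veDominates_iff _ _ _ _).mpr ?_⟩
          rcases (veDominates_iff _ _ _ _).mp hdom with (h | h) | (h | h)
          · exact Or.inl (Or.inl (congrArg Subtype.val h))
          · exact Or.inl (Or.inr ((hTuAdj _ _).mp h))
          · exact Or.inr (Or.inl (congrArg Subtype.val h))
          · exact Or.inr (Or.inr ((hTuAdj _ _).mp h))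
        · have hy : y ∈ B := hAdjB hg hx
          by_cases hxv : x = v
          · exact ⟨sv, Or.inr hsvE, (veDominates_iff _ _ _ _).mpr
              (Or.inl (Or.inr (by rw [hxv]; exact hadjvsv.symm)))⟩
          · by_cases hyv : y = v
            · exact ⟨sv, Or.inr hsvE, (veDominates_iff _ _ _ _).mpr
                (Or.inr (Or.inr (by rw [hyv]; exact hadjvsv.symm)))⟩
            · obtain ⟨d, hdE, hcase⟩ := hEdom x y hx hy hxv hyv he
              exact ⟨d, Or.inr hdE, (veDominates_iff _ _ _ _).mpr hcase⟩
  -- minimality of Du ∪ E in T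
  have hminT : IsMinimalVEDomSet T (Subtype.val '' D' ∪ E) := by
    refine minimal_of_witness hdomT ?_
    intro z hz hdom'
    rcases hz with hzDu | hzE
    · obtain ⟨z', hz'D, rfl⟩ := hzDu
      have hss : D' \ {z'} ⊂ D' := Set.sdiff_singleton_ssubset.mpr hz'D
      have hnot := hD'.2 _ hss
      unfold IsVEDomSet at hnot
      push_neg at hnot
      obtain ⟨e', he', hfail⟩ := hnot
      revert he' hfail
      induction e' using Sym2.ind with
      | _ a' b' =>
        intro he' hfail
        have hab : T.Adj ↑a' ↑b' := (hTuAdj a' b').mp ((G.induce A).mem_edgeSet.mp he')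
        obtain ⟨d, hd, hdom⟩ := hdom' s(↑a', ↑b') (T.mem_edgeSet.mpr hab)
        rcases hd.1 with hdDu | hdE2
        · obtain ⟨d', hd'D, rfl⟩ := hdDu
          have hd'ne : d' ∉ ({z'} : Set _) := by
            intro hmem
            exact hd.2 (by rw [Set.mem_singleton_iff.mp hmem]; rfl)
          refine hfail d' ⟨hd'D, hd'ne⟩ ((veDominates_iff _ _ _ _).mpr ?_)
          rcases (veDominates_iff _ _ _ _).mp hdom with (h | h) | (h | h)
          · exact Or.inl (Or.inl (Subtype.ext h))
          · exact Or.inl (Or.inr ((hTuAdj _ _).mpr h))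
          · exact Or.inr (Or.inl (Subtype.ext h))
          · exact Or.inr (Or.inr ((hTuAdj _ _).mpr h))
        · have hdB : d ∈ B := hEB hdE2
          rcases (veDominates_iff _ _ _ _).mp hdom with (h | h) | (h | h)
          · exact hdisj a'.2 (h ▸ hdB)
          · exact hvE ((hcross a'.2 hdB h.symm).2 ▸ hdE2)
          · exact hdisj b'.2 (h ▸ hdB)
          · exact hvE ((hcross b'.2 hdB h.symm).2 ▸ hdE2)
    · obtain ⟨a, b, haB, hbB, hav, hbv, hab, hpriv⟩ := hrob z hzE
      obtain ⟨d, hd, hdom⟩ := hdom' s(a, b) (T.mem_edgeSet.mpr hab)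
      have hdz : d ≠ z := fun h => hd.2 (Set.mem_singleton_iff.mpr h)
      rcases hd.1 with hdDu | hdE2
      · have hdA : d ∈ A := hDuA hdDu
        rcases (veDominates_iff _ _ _ _).mp hdom with (h | h) | (h | h)
        · exact hdisj hdA (h ▸ haB)
        · exact hav (hcross hdA haB h).2
        · exact hdisj hdA (h ▸ hbB)
        · exact hbv (hcross hdA hbB h).2
      · exact hpriv d hdE2 hdz ((veDominates_iff _ _ _ _).mp hdom)
  have hdisjDuE : Disjoint (Subtype.val '' D' : Set V) E :=
    Set.disjoint_left.mpr fun x hxDu hxE => hdisj (hDuA hxDu) (hEB hxE)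
  refine ⟨hminT, ?_⟩
  rw [Set.ncard_union_eq hdisjDuE (Set.toFinite _) (Set.toFinite _),
    Set.ncard_image_of_injective _ Subtype.val_injective]

/-- Unit-cut decomposition: deleting an edge of `T` with both endpoints in
`W_T` yields two well-ve-dominated trees whose ve-domination numbers add up
to `γ_ve(T)`. -/
theorem stmt_17 {V : Type*} [Fintype V] (T : SimpleGraph V) (hT : T.IsTree)
    (hred : Reduced T) (hW : WellVEDominated T)
    (hcard : 6 ≤ Fintype.card V)
    (u v : V) (huv : T.Adj u v) (hu : u ∈ goodW T) (hv : v ∈ goodW T) :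
    ((T.deleteEdges {s(u, v)}).induce
        ((T.deleteEdges {s(u, v)}).connectedComponentMk u).supp).IsTree ∧
    ((T.deleteEdges {s(u, v)}).induce
        ((T.deleteEdges {s(u, v)}).connectedComponentMk v).supp).IsTree ∧
    WellVEDominated ((T.deleteEdges {s(u, v)}).induce
        ((T.deleteEdges {s(u, v)}).connectedComponentMk u).supp) ∧
    WellVEDominated ((T.deleteEdges {s(u, v)}).induce
        ((T.deleteEdges {s(u, v)}).connectedComponentMk v).supp) ∧
    gammaVE T =
      gammaVE ((T.deleteEdges {s(u, v)}).induce
        ((T.deleteEdges {s(u, v)}).connectedComponentMk u).supp) +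
      gammaVE ((T.deleteEdges {s(u, v)}).induce
        ((T.deleteEdges {s(u, v)}).connectedComponentMk v).supp) := by
  classical
  obtain ⟨E, hEB, hminTv, hcardE, hmain⟩ := key T hT hcard u v huv hu hv
  have key2 := key T hT hcard v u huv.symm hv hu
  rw [Sym2.eq_swap] at key2
  obtain ⟨F, hFA, hminTuF, hcardF, hmain2⟩ := key2
  have htreeU := comp_isTree hT ((T.deleteEdges {s(u, v)}).connectedComponentMk u)
    (SimpleGraph.ConnectedComponent.mem_supp_iff _ _ |>.mpr rfl)
  have htreeV := comp_isTree hT ((T.deleteEdges {s(u, v)}).connectedComponentMk v)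
    (SimpleGraph.ConnectedComponent.mem_supp_iff _ _ |>.mpr rfl)
  have hwellU : WellVEDominated ((T.deleteEdges {s(u, v)}).induce
      ((T.deleteEdges {s(u, v)}).connectedComponentMk u).supp) := by
    intro D₁ D₂ h₁ h₂
    obtain ⟨hm₁, hc₁⟩ := hmain D₁ h₁
    obtain ⟨hm₂, hc₂⟩ := hmain D₂ h₂
    have h := hW _ _ hm₁ hm₂
    rw [hc₁, hc₂] at h
    omega
  have hwellV : WellVEDominated ((T.deleteEdges {s(u, v)}).induce
      ((T.deleteEdges {s(u, v)}).connectedComponentMk v).supp) := by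
    intro D₁ D₂ h₁ h₂
    obtain ⟨hm₁, hc₁⟩ := hmain2 D₁ h₁
    obtain ⟨hm₂, hc₂⟩ := hmain2 D₂ h₂
    have h := hW _ _ hm₁ hm₂
    rw [hc₁, hc₂] at h
    omega
  refine ⟨htreeU, htreeV, hwellU, hwellV, ?_⟩
  obtain ⟨Dm, hDm, hDmc⟩ := exists_minimal_gamma ((T.deleteEdges {s(u, v)}).induce
    ((T.deleteEdges {s(u, v)}).connectedComponentMk u).supp)
  obtain ⟨hm, hc⟩ := hmain Dm hDm
  have h1 := minimal_ncard_eq_gamma hW hm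
  rw [hc, hDmc] at h1
  have h2 := minimal_ncard_eq_gamma hwellV hminTv
  rw [hcardE] at h2
  rw [← h1, h2]
end
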